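/- arXiv:2206.07239 — 7 statements merged into one kernel-verified Lean document; each statement's English description precedes it below -/
import Mathlib

section
/- For every β ∈ (0,1), the probability that Y(t) ≤ n·β⁻¹·G(t) holds simultaneously for all t ∈ [0, τₙ] is at least 1 − β. -/
open MeasureTheory ProbabilityTheory Set
open scoped ENNReal

lemma aux_count {Ω ι : Type*} [MeasurableSpace Ω] [Fintype ι] (μ : Measure Ω)
    (A : ι → Set Ω) (hA : ∀ i, MeasurableSet (A i)) (D : Set Ω) (hD : MeasurableSet D)
    (k : ℕ)
    (hcount : ∀ ω ∈ D, ∑ i, (A i).indicator (fun _ => (1 : ℝ≥0∞)) ω = (k : ℝ≥0∞)) :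
    (k : ℝ≥0∞) * μ D = ∑ i, μ (D ∩ A i) := by
  classical
  have h1 : ∀ i : ι, μ (D ∩ A i)
      = ∫⁻ ω, (D ∩ A i).indicator (fun _ => (1 : ℝ≥0∞)) ω ∂μ := by
    intro i
    rw [lintegral_indicator_const (hD.inter (hA i))]
    simp
  rw [Finset.sum_congr rfl (fun i _ => h1 i),
    ← lintegral_finset_sum _ (fun i _ => (measurable_const.indicator (hD.inter (hA i))))]
  have h2 : ∀ ω, (∑ i, (D ∩ A i).indicator (fun _ => (1 : ℝ≥0∞)) ω)
      = D.indicator (fun _ => (k : ℝ≥0∞)) ω := by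
    intro ω
    by_cases hω : ω ∈ D
    · rw [Set.indicator_of_mem hω, ← hcount ω hω]
      refine Finset.sum_congr rfl (fun i _ => ?_)
      by_cases hA' : ω ∈ A i
      · rw [Set.indicator_of_mem (Set.mem_inter hω hA'), Set.indicator_of_mem hA']
      · rw [Set.indicator_of_notMem (fun h => hA' h.2), Set.indicator_of_notMem hA']
    · rw [Set.indicator_of_notMem hω]
      refine Finset.sum_eq_zero (fun i _ => Set.indicator_of_notMem (fun h => hω h.1) _)
  simp only [h2]
  rw [lintegral_indicator_const hD]

lemma aux_card_subtype {ι : Type*} (T : Finset ι) (p : ι → Prop) [DecidablePred p] :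
    (Finset.univ.filter (fun t : {x // x ∈ T} => p ↑t)).card = (T.filter p).card := by
  classical
  refine Finset.card_bij (fun t _ => (t : ι)) ?_ ?_ ?_
  · intro a ha
    simp only [Finset.mem_filter, Finset.mem_univ, true_and] at ha
    exact Finset.mem_filter.2 ⟨a.2, ha⟩
  · intro a _ b _ h
    exact Subtype.ext h
  · intro b hb
    simp only [Finset.mem_filter] at hb
    exact ⟨⟨b, hb.1⟩, by simp [hb.2], rfl⟩

/-- Gill's uniform upper bound for the number-at-risk process: with probability at
least `1 - β`, the at-risk process `Y(t) = #{i : Uᵢ ≥ t}` satisfies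
`Y(t) ≤ n β⁻¹ G(t)` simultaneously for all `t ∈ [0, τₙ]`, where `τₙ = maxᵢ Uᵢ`
and `G(t) = ℙ(U₁ ≥ t)`. -/
theorem atRisk_upper_bound {Ω : Type*} [MeasurableSpace Ω]
    (μ : Measure Ω) [IsProbabilityMeasure μ]
    {n : ℕ} (hn : 0 < n) (U : Fin n → Ω → ℝ)
    (hmeas : ∀ i, Measurable (U i))
    (hindep : iIndepFun U μ)
    (hident : ∀ i, IdentDistrib (U i) (U ⟨0, hn⟩) μ μ)
    (hnonneg : ∀ i ω, 0 ≤ U i ω)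
    (β : ℝ) (hβ : β ∈ Set.Ioo (0 : ℝ) 1) :
    ENNReal.ofReal (1 - β) ≤
      μ {ω | ∀ t ∈ Set.Icc (0 : ℝ) (⨆ i, U i ω),
        ((Finset.univ.filter (fun i => t ≤ U i ω)).card : ℝ) ≤
          (n : ℝ) * β⁻¹ * (μ {ω' | t ≤ U ⟨0, hn⟩ ω'}).toReal} := by
  classical
  obtain ⟨hβ0, hβ1⟩ := hβ
  haveI : Nonempty (Fin n) := ⟨⟨0, hn⟩⟩
  have hnpos : (0:ℝ) < n := by exact_mod_cast hn
  set U0 : Ω → ℝ := U ⟨0, hn⟩ with hU0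
  set E : Set Ω := {ω | ∀ t ∈ Set.Icc (0 : ℝ) (⨆ i, U i ω),
        ((Finset.univ.filter (fun i => t ≤ U i ω)).card : ℝ) ≤
          (n : ℝ) * β⁻¹ * (μ {ω' | t ≤ U0 ω'}).toReal} with hE
  set g : ℝ → ℝ := fun t => (μ {ω' | t ≤ U0 ω'}).toReal with hgdef
  have hg_anti : Antitone g := by
    intro s t hst
    apply ENNReal.toReal_mono (measure_ne_top μ _)
    exact measure_mono (fun ω hω => le_trans hst hω)
  have hg_meas : Measurable g := hg_anti.measurable
  have hg0 : g 0 = 1 := by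
    have h : {ω' | (0:ℝ) ≤ U0 ω'} = Set.univ := eq_univ_of_forall (fun ω => hnonneg _ ω)
    rw [hgdef]
    simp [h]
  -- Key fact: the pushforward bound  μ(g ∘ U₀ < x) ≤ x
  have hkeyfact : ∀ x : ℝ, 0 < x → x < 1 →
      μ (U0 ⁻¹' {t | g t < x}) ≤ ENNReal.ofReal x := by
    intro x hx0 hx1
    set Ax : Set ℝ := {t | g t < x} with hAx
    have hupper : ∀ s t : ℝ, s ∈ Ax → s ≤ t → t ∈ Ax :=
      fun s t hs hst => lt_of_le_of_lt (hg_anti hst) hs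
    by_cases hne : Ax.Nonempty
    · have hpos : ∀ t ∈ Ax, 0 < t := by
        intro t ht
        by_contra h
        push_neg at h
        have h1 : (1:ℝ) ≤ g t := hg0 ▸ hg_anti h
        have h2 : g t < x := ht
        linarith
      have hbdd : BddBelow Ax := ⟨0, fun t ht => (hpos t ht).le⟩
      set s := sInf Ax with hs
      have hIoi : Ioi s ⊆ Ax := by
        intro t ht
        obtain ⟨a, ha, hat⟩ := exists_lt_of_csInf_lt hne ht
        exact hupper a t ha hat.le
      have hb : ∀ t ∈ Ax, μ {ω | t ≤ U0 ω} ≤ ENNReal.ofReal x := by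
        intro t ht
        have h1 : (μ {ω | t ≤ U0 ω}).toReal < x := ht
        rw [← ENNReal.ofReal_toReal (measure_ne_top μ {ω | t ≤ U0 ω})]
        exact ENNReal.ofReal_le_ofReal h1.le
      by_cases hsA : s ∈ Ax
      · have hsub : U0 ⁻¹' Ax ⊆ {ω | s ≤ U0 ω} := fun ω hω => csInf_le hbdd hω
        exact le_trans (measure_mono hsub) (hb s hsA)
      · have hsub : U0 ⁻¹' Ax ⊆ ⋃ m : ℕ, {ω | s + 1/(m+1) ≤ U0 ω} := by
          intro ω hω
          have hlt : s < U0 ω := by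
            refine lt_of_le_of_ne (csInf_le hbdd hω) (fun h => hsA ?_)
            rw [hs] at h ⊢
            rw [h]
            exact hω
          obtain ⟨m, hm⟩ := exists_nat_one_div_lt (sub_pos.2 hlt)
          refine Set.mem_iUnion.2 ⟨m, ?_⟩
          simp only [mem_setOf_eq]
          push_cast at hm ⊢
          linarith
        refine le_trans (measure_mono hsub) ?_
        have hmono : Monotone (fun m : ℕ => {ω | s + 1/(m+1) ≤ U0 ω}) := by
          intro a b hab ω hω
          simp only [mem_setOf_eq] at hω ⊢
          have hab' : (a:ℝ) ≤ b := Nat.cast_le.2 hab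
          have h1 : (1:ℝ)/(b+1) ≤ 1/(a+1) := by
            apply one_div_le_one_div_of_le
            · positivity
            · linarith
          linarith
        rw [hmono.directed_le.measure_iUnion]
        refine iSup_le (fun m => hb _ (hIoi ?_))
        simp only [mem_Ioi]
        have : (0:ℝ) < 1/((m:ℝ)+1) := by positivity
        linarith
    · have : Ax = ∅ := not_nonempty_iff_eq_empty.1 hne
      rw [this]
      simp
  -- basic objects
  set W : Fin n → Ω → ℝ := fun i ω => g (U i ω) with hW
  have hW_meas : ∀ i, Measurable (W i) := fun i => hg_meas.comp (hmeas i)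
  set c : ℕ → ℝ := fun k => β * k / n with hc
  have hc_mono : Monotone c := by
    intro a b hab
    rw [hc]
    have : (a:ℝ) ≤ b := by exact_mod_cast hab
    have h1 : β * a ≤ β * b := by nlinarith
    exact div_le_div_of_nonneg_right h1 hnpos.le
  have hc_pos : ∀ k : ℕ, 1 ≤ k → 0 < c k := by
    intro k hk
    rw [hc]
    have h : (0:ℝ) < k := by exact_mod_cast hk
    positivity
  have hc_lt_one : ∀ k, k ≤ n → c k < 1 := by
    intro k hkn
    rw [hc]
    have h1 : (k:ℝ) ≤ n := by exact_mod_cast hkn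
    rw [div_lt_one hnpos]
    nlinarith
  set S : ℕ → Ω → ℕ := fun k ω => (Finset.univ.filter (fun i => W i ω < c k)).card with hS
  have hWset : ∀ (i : Fin n) (r : ℝ), MeasurableSet {ω | W i ω < r} := by
    intro i r
    exact (hW_meas i) measurableSet_Iio
  have hcard_meas : ∀ (T : Finset (Fin n)) (r : ℝ),
      Measurable (fun ω => (T.filter (fun i => W i ω < r)).card) := by
    intro T r
    have h : (fun ω => (T.filter (fun i => W i ω < r)).card)
        = fun ω => ∑ i ∈ T, if W i ω < r then 1 else 0 := by
      funext ω; rw [Finset.card_filter]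
    rw [h]
    exact Finset.measurable_sum _
      (fun i _ => Measurable.ite (hWset i r) measurable_const measurable_const)
  have hS_meas : ∀ k, Measurable (S k) := fun k => hcard_meas _ _
  have hS_mono : ∀ (ω : Ω) ⦃a b : ℕ⦄, a ≤ b → S a ω ≤ S b ω := by
    intro ω a b hab
    apply Finset.card_le_card
    exact Finset.monotone_filter_right _ (fun i _ hi => lt_of_lt_of_le hi (hc_mono hab))
  have hS_le : ∀ k ω, S k ω ≤ n := by
    intro k ω
    calc S k ω ≤ (Finset.univ : Finset (Fin n)).card := Finset.card_filter_le _ _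
    _ = n := by simp
  set A : Fin n → ℕ → Set Ω := fun i k => {ω | W i ω < c k} with hA
  have hA_meas : ∀ i k, MeasurableSet (A i k) := fun i k => hWset i (c k)
  set S' : Fin n → ℕ → Ω → ℕ :=
    fun i j ω => ((({i} : Finset (Fin n))ᶜ).filter (fun i' => W i' ω < c j)).card with hS'
  have hS'_meas : ∀ i j, Measurable (S' i j) := fun i j => hcard_meas _ _
  set R : Fin n → ℕ → Set Ω :=
    fun i k => {ω | S' i k ω + 1 = k ∧ ∀ j ∈ Finset.Ioc k n, S' i j ω + 1 < j} with hR
  set D : ℕ → Set Ω :=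
    fun k => {ω | S k ω = k ∧ ∀ j ∈ Finset.Ioc k n, S j ω < j} with hD
  have hD_meas : ∀ k, MeasurableSet (D k) := by
    intro k
    have h : D k = (S k) ⁻¹' {k}
        ∩ ⋂ j ∈ (Finset.Ioc k n : Finset ℕ), (S j) ⁻¹' (Set.Iio j) := by
      ext ω
      simp [hD, Set.mem_iInter, Set.mem_preimage]
    rw [h]
    refine ((hS_meas k) (measurableSet_singleton k)).inter ?_
    exact MeasurableSet.biInter (Finset.Ioc k n).countable_toSet
      (fun j _ => (hS_meas j) measurableSet_Iio)
  have hR_meas : ∀ i k, MeasurableSet (R i k) := by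
    intro i k
    have h : R i k = (fun ω => S' i k ω + 1) ⁻¹' {k}
        ∩ ⋂ j ∈ (Finset.Ioc k n : Finset ℕ), (fun ω => S' i j ω + 1) ⁻¹' (Set.Iio j) := by
      ext ω
      simp [hR, Set.mem_iInter, Set.mem_preimage]
    rw [h]
    refine (((hS'_meas i k).add measurable_const) (measurableSet_singleton k)).inter ?_
    exact MeasurableSet.biInter (Finset.Ioc k n).countable_toSet
      (fun j _ => ((hS'_meas i j).add measurable_const) measurableSet_Iio)
  have hsplit : ∀ (i : Fin n) (k j : ℕ) (ω : Ω), ω ∈ A i k → k ≤ j → S j ω = S' i j ω + 1 := by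
    intro i k j ω hω hkj
    have hWij : W i ω < c j := lt_of_lt_of_le hω (hc_mono hkj)
    have hmem : i ∈ Finset.univ.filter (fun i' => W i' ω < c j) := by
      simp [hWij]
    rw [hS, hS']
    simp only [Finset.compl_singleton, Finset.filter_erase, Finset.card_erase_of_mem hmem]
    have hpos : 0 < (Finset.univ.filter (fun i' => W i' ω < c j)).card :=
      Finset.card_pos.2 ⟨i, hmem⟩
    omega
  -- Step A : the complement of the good event is covered by the last-crossing events
  have hEc : Eᶜ ⊆ ⋃ k ∈ (Finset.Icc 1 n : Finset ℕ), D k := by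
    intro ω hω
    rw [hE] at hω
    simp only [mem_compl_iff, mem_setOf_eq, not_forall] at hω
    obtain ⟨t, ht, hviol⟩ := hω
    set k₁ := (Finset.univ.filter (fun i => t ≤ U i ω)).card with hk₁
    have hk₁n : k₁ ≤ n := by
      calc k₁ ≤ (Finset.univ : Finset (Fin n)).card := Finset.card_filter_le _ _
      _ = n := by simp
    have hk₁pos : 1 ≤ k₁ := by
      obtain ⟨i₀, hi₀⟩ := Finite.exists_max (fun i => U i ω)
      have hti₀ : t ≤ U i₀ ω := le_trans ht.2 (ciSup_le hi₀)
      refine Finset.card_pos.2 ⟨i₀, ?_⟩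
      simp [hti₀]
    have hgt : g t < c k₁ := by
      have h1 : (n:ℝ) * β⁻¹ * g t < k₁ := not_le.1 hviol
      rw [hc]
      rw [lt_div_iff₀ hnpos]
      have h2 : (n:ℝ) * g t = ((n:ℝ) * β⁻¹ * g t) * β := by field_simp
      nlinarith
    have hcross : k₁ ≤ S k₁ ω := by
      rw [hS, hk₁]
      apply Finset.card_le_card
      apply Finset.monotone_filter_right
      intro i _ hi
      exact lt_of_le_of_lt (hg_anti hi) hgt
    set C := (Finset.Icc 1 n).filter (fun k => k ≤ S k ω) with hC
    have hCne : C.Nonempty := by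
      refine ⟨k₁, ?_⟩
      simp only [hC, Finset.mem_filter, Finset.mem_Icc]
      exact ⟨⟨hk₁pos, hk₁n⟩, hcross⟩
    set k₀ := C.max' hCne with hk₀
    have hk₀mem : k₀ ∈ C := C.max'_mem hCne
    simp only [hC, Finset.mem_filter, Finset.mem_Icc] at hk₀mem
    obtain ⟨⟨hk₀1, hk₀n⟩, hk₀S⟩ := hk₀mem
    have hafter : ∀ j ∈ Finset.Ioc k₀ n, S j ω < j := by
      intro j hj
      rw [Finset.mem_Ioc] at hj
      by_contra h
      push_neg at h
      have hjC : j ∈ C := by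
        simp only [hC, Finset.mem_filter, Finset.mem_Icc]
        refine ⟨⟨?_, hj.2⟩, h⟩
        omega
      have hle : j ≤ k₀ := Finset.le_max' C j hjC
      exact absurd hle (not_le.2 hj.1)
    have hSk₀ : S k₀ ω = k₀ := by
      rcases eq_or_lt_of_le hk₀n with h | h
      · refine le_antisymm ?_ hk₀S
        rw [h]
        exact hS_le n ω
      · have h1 : S (k₀+1) ω < k₀ + 1 := hafter (k₀+1) (by rw [Finset.mem_Ioc]; omega)
        have h2 : S k₀ ω ≤ S (k₀+1) ω := hS_mono ω (by omega)
        omega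
    refine Set.mem_biUnion ?_ (⟨hSk₀, hafter⟩ : ω ∈ D k₀)
    exact Finset.mem_coe.2 (Finset.mem_Icc.2 ⟨hk₀1, hk₀n⟩)
  -- disjointness of the last-crossing events
  have hD_disj : (↑(Finset.Icc 1 n) : Set ℕ).PairwiseDisjoint D := by
    have key : ∀ a b : ℕ, a < b → b ≤ n → Disjoint (D a) (D b) := by
      intro a b h hbn
      refine Set.disjoint_left.2 (fun {ω} hωa hωb => ?_)
      have h1 : S b ω < b := hωa.2 b (Finset.mem_Ioc.2 ⟨h, hbn⟩)
      have h2 : S b ω = b := hωb.1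
      omega
    intro a ha b hb hab
    simp only [Finset.mem_coe, Finset.mem_Icc] at ha hb
    rcases lt_or_gt_of_ne hab with h | h
    · exact key a b h hb.2
    · exact (key b a h ha.2).symm
  have hEcmeas : μ Eᶜ ≤ ∑ k ∈ Finset.Icc 1 n, μ (D k) := by
    refine le_trans (measure_mono hEc) ?_
    rw [measure_biUnion_finset hD_disj (fun k _ => hD_meas k)]
  -- Step B : the per-level bound
  have hDk_bound : ∀ k ∈ Finset.Icc 1 n,
      μ (D k) ≤ ENNReal.ofReal (β / n) * ∑ i, μ (R i k) := by
    intro k hk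
    rw [Finset.mem_Icc] at hk
    have hck0 : 0 < c k := hc_pos k hk.1
    have hck1 : c k < 1 := hc_lt_one k hk.2
    have hcount : ∀ ω ∈ D k, ∑ i, (A i k).indicator (fun _ => (1:ℝ≥0∞)) ω = (k : ℝ≥0∞) := by
      intro ω hω
      have h1 : ∑ i, (A i k).indicator (fun _ => (1:ℝ≥0∞)) ω
          = ∑ i, if W i ω < c k then (1:ℝ≥0∞) else 0 := by
        refine Finset.sum_congr rfl (fun i _ => ?_)
        by_cases h : ω ∈ A i k
        · rw [Set.indicator_of_mem h, if_pos (show W i ω < c k from h)]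
        · rw [Set.indicator_of_notMem h, if_neg (show ¬ W i ω < c k from fun hh => h hh)]
      rw [h1, Finset.sum_boole]
      norm_cast
      exact hω.1
    have hkmul : (k : ℝ≥0∞) * μ (D k) = ∑ i, μ (D k ∩ A i k) :=
      aux_count μ (fun i => A i k) (fun i => hA_meas i k) (D k) (hD_meas k) k hcount
    have hDA : ∀ i, D k ∩ A i k = R i k ∩ A i k := by
      intro i
      ext ω
      simp only [Set.mem_inter_iff, hD, hR, mem_setOf_eq, hA]
      constructor
      · rintro ⟨⟨h1, h2⟩, h3⟩
        refine ⟨⟨?_, ?_⟩, h3⟩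
        · rw [← hsplit i k k ω h3 le_rfl]; exact h1
        · intro j hj
          rw [← hsplit i k j ω h3 (Finset.mem_Ioc.1 hj).1.le]
          exact h2 j hj
      · rintro ⟨⟨h1, h2⟩, h3⟩
        refine ⟨⟨?_, ?_⟩, h3⟩
        · rw [hsplit i k k ω h3 le_rfl]; exact h1
        · intro j hj
          rw [hsplit i k j ω h3 (Finset.mem_Ioc.1 hj).1.le]
          exact h2 j hj
    have hRA : ∀ i, μ (R i k ∩ A i k) = μ (R i k) * μ (A i k) := by
      intro i
      have hdisj : Disjoint (({i} : Finset (Fin n))ᶜ) ({i} : Finset (Fin n)) :=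
        disjoint_compl_left
      have hind := hindep.indepFun_finset (({i} : Finset (Fin n))ᶜ) {i} hdisj hmeas
      have hind2 : IndepFun (fun a => (fun j : (({i} : Finset (Fin n))ᶜ : Finset (Fin n)) => U j a)) (U i) μ :=
        hind.comp measurable_id
          (measurable_pi_apply (⟨i, Finset.mem_singleton_self i⟩ : ({i} : Finset (Fin n))))
      set T := (({i} : Finset (Fin n))ᶜ) with hT
      set B : Set (T → ℝ) := {x | (Finset.univ.filter (fun t : T => g (x t) < c k)).card + 1 = k
          ∧ ∀ j ∈ Finset.Ioc k n, (Finset.univ.filter (fun t : T => g (x t) < c j)).card + 1 < j} with hB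
      have hN_meas : ∀ j : ℕ, Measurable
          (fun x : T → ℝ => (Finset.univ.filter (fun t : T => g (x t) < c j)).card) := by
        intro j
        have h : (fun x : T → ℝ => (Finset.univ.filter (fun t : T => g (x t) < c j)).card)
            = fun x => ∑ t : T, if g (x t) < c j then 1 else 0 := by
          funext x; rw [Finset.card_filter]
        rw [h]
        refine Finset.measurable_sum _
          (fun t _ => Measurable.ite ?_ measurable_const measurable_const)
        exact (hg_meas.comp (measurable_pi_apply t)) measurableSet_Iio
      have hB_meas : MeasurableSet B := by
        have h : B = (fun x : T → ℝ =>
              (Finset.univ.filter (fun t : T => g (x t) < c k)).card + 1) ⁻¹' {k}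
            ∩ ⋂ j ∈ (Finset.Ioc k n : Finset ℕ), (fun x : T → ℝ =>
              (Finset.univ.filter (fun t : T => g (x t) < c j)).card + 1) ⁻¹' (Set.Iio j) := by
          ext x
          simp [hB, Set.mem_iInter]
        rw [h]
        refine (((hN_meas k).add measurable_const) (measurableSet_singleton k)).inter ?_
        exact MeasurableSet.biInter (Finset.Ioc k n).countable_toSet
          (fun j _ => ((hN_meas j).add measurable_const) measurableSet_Iio)
      have hcardeq : ∀ (j : ℕ) (ω : Ω),
          (Finset.univ.filter (fun t : T => g (U (↑t) ω) < c j)).card = S' i j ω := by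
        intro j ω
        rw [hS']
        exact aux_card_subtype T (fun i' => W i' ω < c j)
      have hRpre : R i k = (fun a => (fun j : T => U (↑j) a)) ⁻¹' B := by
        ext ω
        simp only [hR, mem_setOf_eq, Set.mem_preimage, hB, hcardeq]
      have hApre : A i k = (U i) ⁻¹' {t | g t < c k} := rfl
      rw [hRpre, hApre]
      exact hind2.measure_inter_preimage_eq_mul B {t | g t < c k} hB_meas
        (hg_meas measurableSet_Iio)
    have hAbound : ∀ i : Fin n, μ (A i k) ≤ (k : ℝ≥0∞) * ENNReal.ofReal (β / n) := by
      intro i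
      have h1 : μ (A i k) = μ (U0 ⁻¹' {t | g t < c k}) :=
        (hident i).measure_mem_eq (s := {t | g t < c k}) (hg_meas measurableSet_Iio)
      rw [h1]
      refine le_trans (hkeyfact (c k) hck0 hck1) ?_
      simp only [hc]
      have h2 : β * (k:ℝ) / n = (k:ℝ) * (β / n) := by ring
      rw [h2, ENNReal.ofReal_mul (by positivity), ENNReal.ofReal_natCast]
    have hmain : (k:ℝ≥0∞) * μ (D k)
        ≤ (k:ℝ≥0∞) * (ENNReal.ofReal (β / n) * ∑ i, μ (R i k)) := by
      rw [hkmul]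
      calc ∑ i, μ (D k ∩ A i k) = ∑ i, μ (R i k) * μ (A i k) := by
            refine Finset.sum_congr rfl (fun i _ => ?_)
            rw [hDA i, hRA i]
      _ ≤ ∑ i, μ (R i k) * ((k : ℝ≥0∞) * ENNReal.ofReal (β / n)) :=
            Finset.sum_le_sum (fun i _ => mul_le_mul_right (hAbound i) _)
      _ = (k:ℝ≥0∞) * (ENNReal.ofReal (β / n) * ∑ i, μ (R i k)) := by
            rw [← Finset.sum_mul]
            ring
    have hk0 : (k : ℝ≥0∞) ≠ 0 := by
      simp only [ne_eq, Nat.cast_eq_zero]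
      omega
    exact (ENNReal.mul_le_mul_iff_right hk0 (ENNReal.natCast_ne_top k)).1 hmain
  -- sum over the levels
  have hRsum : ∀ i, ∑ k ∈ Finset.Icc 1 n, μ (R i k) ≤ 1 := by
    intro i
    have hdisj : (↑(Finset.Icc 1 n) : Set ℕ).PairwiseDisjoint (R i) := by
      have key : ∀ a b : ℕ, a < b → b ≤ n → Disjoint (R i a) (R i b) := by
        intro a b h hbn
        refine Set.disjoint_left.2 (fun {ω} hωa hωb => ?_)
        have h1 : S' i b ω + 1 < b := hωa.2 b (Finset.mem_Ioc.2 ⟨h, hbn⟩)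
        have h2 : S' i b ω + 1 = b := hωb.1
        omega
      intro a ha b hb hab
      simp only [Finset.mem_coe, Finset.mem_Icc] at ha hb
      rcases lt_or_gt_of_ne hab with h | h
      · exact key a b h hb.2
      · exact (key b a h ha.2).symm
    rw [← measure_biUnion_finset hdisj (fun k _ => hR_meas i k)]
    exact prob_le_one
  have hEcβ : μ Eᶜ ≤ ENNReal.ofReal β := by
    refine le_trans hEcmeas ?_
    calc ∑ k ∈ Finset.Icc 1 n, μ (D k)
        ≤ ∑ k ∈ Finset.Icc 1 n, ENNReal.ofReal (β / n) * ∑ i, μ (R i k) :=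
          Finset.sum_le_sum hDk_bound
      _ = ENNReal.ofReal (β / n) * ∑ i, ∑ k ∈ Finset.Icc 1 n, μ (R i k) := by
          rw [← Finset.mul_sum, Finset.sum_comm]
      _ ≤ ENNReal.ofReal (β / n) * ∑ _i : Fin n, (1:ℝ≥0∞) :=
          mul_le_mul_right (Finset.sum_le_sum (fun i _ => hRsum i)) _
      _ = ENNReal.ofReal (β / n) * n := by simp
      _ = ENNReal.ofReal β := by
          rw [← ENNReal.ofReal_natCast n, ← ENNReal.ofReal_mul (by positivity)]
          congr 1
          field_simp
  have hone : (1:ℝ≥0∞) ≤ μ E + ENNReal.ofReal β := by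
    calc (1:ℝ≥0∞) = μ (E ∪ Eᶜ) := by rw [Set.union_compl_self]; simp
    _ ≤ μ E + μ Eᶜ := measure_union_le E Eᶜ
    _ ≤ μ E + ENNReal.ofReal β := add_le_add_right hEcβ _
  have hsum : ENNReal.ofReal (1-β) + ENNReal.ofReal β = 1 := by
    rw [← ENNReal.ofReal_add (by linarith) (by linarith)]
    norm_num
  have hfinal : ENNReal.ofReal (1-β) + ENNReal.ofReal β ≤ μ E + ENNReal.ofReal β := by
    rw [hsum]
    exact hone
  exact (ENNReal.add_le_add_iff_right ENNReal.ofReal_ne_top).1 hfinal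
end

section
/- The advanced and backward operators are adjoint on L²(F): for all f, g : ℝ → ℝ with f, g ∈ L²(F), one has ∫ (Af)(z)·g(z) dF(z) = ∫ f(z)·(Bg)(z) dF(z). -/
open MeasureTheory Set
open scoped ENNReal NNReal

private lemma upcross (F : Measure ℝ) [IsProbabilityMeasure F] [NullSingletonClass F] (u : ℝ≥0∞) :
    F {z : ℝ | F (Ioi z) ≤ u} ≤ u := by
  set T := {z : ℝ | F (Ioi z) ≤ u} with hTdef
  have hup : ∀ ⦃w z : ℝ⦄, w ∈ T → w ≤ z → z ∈ T := fun w z hw hwz =>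
    le_trans (measure_mono (Ioi_subset_Ioi hwz)) hw
  rcases T.eq_empty_or_nonempty with h | hne
  · simp [h]
  have key : ∀ t : ℝ, (∀ z, t < z → z ∈ T) → F (Ioi t) ≤ u := by
    intro t ht
    have hU : Ioi t = ⋃ n : ℕ, Ioi (t + 1 / (n + 1)) := by
      ext x
      simp only [mem_iUnion, mem_Ioi]
      constructor
      · intro hx
        obtain ⟨n, hn⟩ := exists_nat_one_div_lt (sub_pos.mpr hx)
        exact ⟨n, by linarith⟩
      · rintro ⟨n, hn⟩
        have : (0:ℝ) < 1 / ((n:ℝ) + 1) := by positivity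
        linarith
    have hmono : Monotone fun n : ℕ => Ioi (t + 1 / ((n:ℝ) + 1)) := by
      intro m n hmn
      apply Ioi_subset_Ioi
      have : (1:ℝ) / ((n:ℝ)+1) ≤ 1 / ((m:ℝ)+1) := by
        apply one_div_le_one_div_of_le (by positivity)
        have := (Nat.cast_le (α := ℝ)).mpr hmn
        linarith
      linarith
    rw [hU, hmono.measure_iUnion]
    exact iSup_le fun n => ht _ (lt_add_of_pos_right t (by positivity))
  by_cases hbdd : BddBelow T
  · set t := sInf T with htdef
    have hsub : ∀ z, t < z → z ∈ T := by
      intro z hz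
      obtain ⟨w, hw, hwz⟩ := exists_lt_of_csInf_lt hne hz
      exact hup hw hwz.le
    have h1 : F T ≤ F (Ici t) := measure_mono fun z hz => csInf_le hbdd hz
    have h2 : F (Ici t) ≤ F (Ioi t) := by
      have hsub2 : Ici t ⊆ {t} ∪ Ioi t := fun z hz => by
        rcases eq_or_lt_of_le (mem_Ici.mp hz) with h | h
        · exact Or.inl (by simp [← h])
        · exact Or.inr h
      calc F (Ici t) ≤ F ({t} ∪ Ioi t) := measure_mono hsub2
      _ ≤ F {t} + F (Ioi t) := measure_union_le _ _
      _ = F (Ioi t) := by simp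
    exact h1.trans (h2.trans (key t hsub))
  · have hall : ∀ z : ℝ, z ∈ T := by
      intro z
      by_contra hz
      apply hbdd
      refine ⟨z, fun w hw => ?_⟩
      by_contra hwz
      push_neg at hwz
      exact hz (hup hw hwz.le)
    have hU : (univ : Set ℝ) = ⋃ n : ℕ, Ioi (-(n:ℝ)) := by
      ext x
      simp only [mem_univ, mem_iUnion, mem_Ioi, true_iff]
      obtain ⟨n, hn⟩ := exists_nat_gt (-x)
      exact ⟨n, by linarith⟩
    have hmono : Monotone fun n : ℕ => Ioi (-(n:ℝ)) := by
      intro m n hmn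
      apply Ioi_subset_Ioi
      simp only [neg_le_neg_iff]
      exact_mod_cast hmn
    calc F T ≤ F univ := measure_mono (subset_univ T)
    _ ≤ u := by
        rw [hU, hmono.measure_iUnion]
        exact iSup_le fun n => hall _


private lemma pow_rpow_comm (x : ℝ≥0∞) (m : ℕ) (c : ℝ) : (x ^ m) ^ c = (x ^ c) ^ m := by
  rw [← ENNReal.rpow_natCast x m, ← ENNReal.rpow_mul, ← ENNReal.rpow_natCast (x ^ c) m,
    ← ENNReal.rpow_mul, mul_comm]

private lemma rpow_shift {x : ℝ≥0∞} (hx0 : x ≠ 0) (hxt : x ≠ ∞) (c : ℝ) :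
    x ^ (c - 1) * (2 * x) = 2 * x ^ c := by
  have h : x ^ (c - 1) * x = x ^ c := by
    nth_rewrite 2 [← ENNReal.rpow_one x]
    rw [← ENNReal.rpow_add _ _ hx0 hxt]
    norm_num
  calc x ^ (c - 1) * (2 * x) = 2 * (x ^ (c - 1) * x) := by ring
  _ = 2 * x ^ c := by rw [h]

private lemma amgm (a b c : ℝ≥0∞) (hc0 : c ≠ 0) (hct : c ≠ ∞) : a * b ≤ c * a ^ 2 + c⁻¹ * b ^ 2 := by
  rcases le_total (c * a) b with h | h
  · have ha : a ≤ c⁻¹ * b := by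
      rw [← one_mul a, ← ENNReal.inv_mul_cancel hc0 hct, mul_assoc]
      exact mul_le_mul_right h _
    calc a * b ≤ (c⁻¹ * b) * b := mul_le_mul_left ha _
    _ = c⁻¹ * b ^ 2 := by ring
    _ ≤ _ := le_add_self
  · calc a * b ≤ a * (c * a) := mul_le_mul_right h _
    _ = c * a ^ 2 := by ring
    _ ≤ _ := le_self_add

private lemma nnnorm_toReal_inv_le (A : ℝ≥0∞) : (‖(A.toReal)⁻¹‖₊ : ℝ≥0∞) ≤ A⁻¹ := by
  rcases eq_or_ne A 0 with h | h
  · simp [h]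
  · rw [← enorm_eq_nnnorm, Real.enorm_eq_ofReal (inv_nonneg.mpr ENNReal.toReal_nonneg), ← ENNReal.toReal_inv,
      ENNReal.ofReal_toReal (by simp [h])]

noncomputable def rr : ℝ≥0∞ := (2:ℝ≥0∞)⁻¹ ^ ((2:ℝ)⁻¹)

lemma rr_lt_one : rr < 1 :=
  ENNReal.rpow_lt_one (by simp [ENNReal.inv_lt_one]) (by norm_num)

lemma measN (F : Measure ℝ) : Measurable fun t : ℝ => F (Ioi t) :=
  Antitone.measurable fun _ _ h => measure_mono (Ioi_subset_Ioi h)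

/-- B1 : ∫_{s>z} N(s)^{-1/2} dF(s) ≤ C √N(z) -/
theorem B1 (F : Measure ℝ) [IsProbabilityMeasure F] [NullSingletonClass F] (z : ℝ) :
    ∫⁻ s in Ioi z, (F (Ioi s)) ^ ((2:ℝ)⁻¹ - 1) ∂F
      ≤ (2 * (1 - rr)⁻¹) * (F (Ioi z)) ^ ((2:ℝ)⁻¹) := by
  set N : ℝ → ℝ≥0∞ := fun t => F (Ioi t) with hN
  set a := N z with ha
  rcases eq_or_ne a 0 with ha0 | ha0
  · have : F.restrict (Ioi z) = 0 := Measure.restrict_eq_zero.mpr ha0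
    simp [this]
  have hat : a ≠ ∞ := measure_ne_top F _
  -- shells
  set D : ℕ → Set ℝ := fun k => {s | N s ≤ a * 2⁻¹ ^ k ∧ a * 2⁻¹ ^ (k + 1) < N s} with hD
  have hcover : Ioi z ⊆ {s | N s = 0} ∪ ⋃ k, D k := by
    intro s hs
    rcases eq_or_ne (N s) 0 with h0 | h0
    · exact Or.inl h0
    right
    have hsa : N s ≤ a := measure_mono (Ioi_subset_Ioi (le_of_lt hs))
    have hP : ∃ k, a * 2⁻¹ ^ (k + 1) < N s := by
      have hdivt : a / N s ≠ ∞ := by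
        simp [ENNReal.div_eq_top, h0, hat]
      obtain ⟨n, hn⟩ := ENNReal.exists_nat_gt hdivt
      have h2n : (n : ℝ≥0∞) ≤ 2 ^ n := by
        have := (Nat.lt_two_pow_self (n := n)).le
        exact_mod_cast this
      rw [ENNReal.div_lt_iff (Or.inl h0) (Or.inr hat)] at hn
      have hlt2 : a < N s * 2 ^ n := by
        calc a < n * N s := hn
        _ ≤ 2 ^ n * N s := mul_le_mul_left h2n _
        _ = N s * 2 ^ n := mul_comm _ _
      have hdiv : a / 2 ^ n < N s := by
        rw [ENNReal.div_lt_iff (Or.inl (pow_ne_zero n (two_ne_zero)))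
          (Or.inl (ENNReal.pow_ne_top ENNReal.ofNat_ne_top))]
        exact hlt2
      refine ⟨n, ?_⟩
      calc a * 2⁻¹ ^ (n + 1) ≤ a * 2⁻¹ ^ n :=
            mul_le_mul_right (pow_le_pow_right_of_le_one'
              (ENNReal.inv_le_one.mpr one_le_two) (Nat.le_succ n)) _
      _ = a / 2 ^ n := by rw [div_eq_mul_inv, ENNReal.inv_pow]
      _ < N s := hdiv
    classical
    set k := Nat.find hP with hk
    refine mem_iUnion.mpr ⟨k, ?_, Nat.find_spec hP⟩
    rcases Nat.eq_zero_or_pos k with h | h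
    · simpa [h] using hsa
    · obtain ⟨j, hj⟩ := Nat.exists_eq_succ_of_ne_zero h.ne'
      have := Nat.find_min hP (m := j) (by omega)
      push_neg at this
      simpa [hj] using this
  have hnull : F {s | N s = 0} = 0 := by
    have := upcross F 0
    refine le_antisymm (le_trans (measure_mono ?_) this) zero_le
    intro x hx; simp only [mem_setOf_eq] at hx ⊢; exact hx.le
  calc ∫⁻ s in Ioi z, N s ^ ((2:ℝ)⁻¹ - 1) ∂F
      ≤ ∫⁻ s in {s | N s = 0} ∪ ⋃ k, D k, N s ^ ((2:ℝ)⁻¹ - 1) ∂F :=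
        lintegral_mono' (Measure.restrict_mono hcover le_rfl) le_rfl
    _ ≤ (∫⁻ s in {s | N s = 0}, N s ^ ((2:ℝ)⁻¹ - 1) ∂F)
        + ∫⁻ s in ⋃ k, D k, N s ^ ((2:ℝ)⁻¹ - 1) ∂F := lintegral_union_le _ _ _
    _ ≤ 0 + ∑' k, ∫⁻ s in D k, N s ^ ((2:ℝ)⁻¹ - 1) ∂F := by
        gcongr
        · rw [Measure.restrict_eq_zero.mpr hnull]; simp
        · exact lintegral_iUnion_le _ _
    _ = ∑' k, ∫⁻ s in D k, N s ^ ((2:ℝ)⁻¹ - 1) ∂F := by rw [zero_add]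
    _ ≤ ∑' k, (2 * (a ^ ((2:ℝ)⁻¹) * rr ^ k)) := by
        gcongr with k
        have hterm : ∀ s ∈ D k, N s ^ ((2:ℝ)⁻¹ - 1) ≤ (a * 2⁻¹ ^ (k+1)) ^ ((2:ℝ)⁻¹ - 1) := by
          intro s hs
          rw [show (2:ℝ)⁻¹ - 1 = -(1 - (2:ℝ)⁻¹) by ring, ENNReal.rpow_neg, ENNReal.rpow_neg]
          exact ENNReal.inv_le_inv.mpr (ENNReal.rpow_le_rpow hs.2.le (by norm_num))
        have hx0 : a * 2⁻¹ ^ (k+1) ≠ 0 := by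
          apply mul_ne_zero ha0
          exact pow_ne_zero _ (ENNReal.inv_ne_zero.mpr (by simp))
        have hxt : a * 2⁻¹ ^ (k+1) ≠ ∞ := by
          apply ENNReal.mul_ne_top hat
          exact ENNReal.pow_ne_top (by simp)
        calc ∫⁻ s in D k, N s ^ ((2:ℝ)⁻¹ - 1) ∂F
            ≤ ∫⁻ _ in D k, (a * 2⁻¹ ^ (k+1)) ^ ((2:ℝ)⁻¹ - 1) ∂F :=
              setLIntegral_mono measurable_const hterm
          _ = (a * 2⁻¹ ^ (k+1)) ^ ((2:ℝ)⁻¹ - 1) * F (D k) := setLIntegral_const _ _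
          _ ≤ (a * 2⁻¹ ^ (k+1)) ^ ((2:ℝ)⁻¹ - 1) * (a * 2⁻¹ ^ k) := by
              gcongr
              exact le_trans (measure_mono fun s hs => hs.1) (upcross F _)
          _ = (a * 2⁻¹ ^ (k+1)) ^ ((2:ℝ)⁻¹ - 1) * (2 * (a * 2⁻¹ ^ (k+1))) := by
              have hstep : a * 2⁻¹ ^ k = 2 * (a * 2⁻¹ ^ (k+1)) := by
                rw [pow_succ]
                calc a * 2⁻¹ ^ k
                    = (2 * 2⁻¹) * (a * 2⁻¹ ^ k) := by
                      rw [ENNReal.mul_inv_cancel two_ne_zero ENNReal.ofNat_ne_top, one_mul]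
                _ = 2 * (a * (2⁻¹ ^ k * 2⁻¹)) := by ring
              rw [hstep]
          _ = 2 * (a * 2⁻¹ ^ (k+1)) ^ ((2:ℝ)⁻¹) := rpow_shift hx0 hxt _
          _ ≤ 2 * (a ^ ((2:ℝ)⁻¹) * rr ^ k) := by
              apply mul_le_mul_right
              rw [ENNReal.mul_rpow_of_ne_top hat (ENNReal.pow_ne_top (by simp)),
                pow_rpow_comm]
              exact mul_le_mul_right (pow_le_pow_right_of_le_one'
                rr_lt_one.le (Nat.le_succ k)) _
    _ = (2 * (1 - rr)⁻¹) * a ^ ((2:ℝ)⁻¹) := by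
        rw [ENNReal.tsum_mul_left, ENNReal.tsum_mul_left, ENNReal.tsum_geometric]
        ring

private lemma rr_eq : (2:ℝ≥0∞) ^ (-(2:ℝ)⁻¹) = rr := by
  rw [ENNReal.rpow_neg, rr, ENNReal.inv_rpow]

theorem B2 (F : Measure ℝ) [IsProbabilityMeasure F] [NullSingletonClass F] (s : ℝ)
    (hb0 : F (Ioi s) ≠ 0) :
    ∫⁻ z in Iio s, (F (Ioi z)) ^ (-(2:ℝ)⁻¹ - 1) ∂F
      ≤ (2 * (1 - rr)⁻¹) * (F (Ioi s)) ^ (-(2:ℝ)⁻¹) := by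
  set N : ℝ → ℝ≥0∞ := fun t => F (Ioi t) with hN
  set b := N s with hb
  have hbt : b ≠ ∞ := measure_ne_top F _
  set E : ℕ → Set ℝ := fun k => {z | b * 2 ^ k ≤ N z ∧ N z < b * 2 ^ (k + 1)} with hE
  have hcover : Iio s ⊆ ⋃ k, E k := by
    intro z hz
    have hbz : b ≤ N z := measure_mono (Ioi_subset_Ioi (le_of_lt hz))
    have hzt : N z ≠ ∞ := measure_ne_top F _
    have hP : ∃ k, N z < b * 2 ^ (k + 1) := by
      obtain ⟨n, hn⟩ := ENNReal.exists_nat_gt (show N z / b ≠ ∞ by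
        simp [ENNReal.div_eq_top, hb0, hzt]; exact fun _ => hb0)
      have h2n : (n : ℝ≥0∞) ≤ 2 ^ n := by
        have := (Nat.lt_two_pow_self (n := n)).le
        exact_mod_cast this
      rw [ENNReal.div_lt_iff (Or.inl hb0) (Or.inr hzt)] at hn
      refine ⟨n, ?_⟩
      calc N z < n * b := hn
      _ ≤ 2 ^ n * b := mul_le_mul_left h2n _
      _ = b * 2 ^ n := mul_comm _ _
      _ ≤ b * 2 ^ (n + 1) := mul_le_mul_right (pow_le_pow_right₀ one_le_two (Nat.le_succ n)) _
    classical
    set k := Nat.find hP with hk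
    refine mem_iUnion.mpr ⟨k, ?_, Nat.find_spec hP⟩
    rcases Nat.eq_zero_or_pos k with h | h
    · simpa [h] using hbz
    · obtain ⟨j, hj⟩ := Nat.exists_eq_succ_of_ne_zero h.ne'
      have := Nat.find_min hP (m := j) (by omega)
      push_neg at this
      simpa [hj] using this
  calc ∫⁻ z in Iio s, N z ^ (-(2:ℝ)⁻¹ - 1) ∂F
      ≤ ∫⁻ z in ⋃ k, E k, N z ^ (-(2:ℝ)⁻¹ - 1) ∂F :=
        lintegral_mono' (Measure.restrict_mono hcover le_rfl) le_rfl
    _ ≤ ∑' k, ∫⁻ z in E k, N z ^ (-(2:ℝ)⁻¹ - 1) ∂F := lintegral_iUnion_le _ _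
    _ ≤ ∑' k, (2 * (b ^ (-(2:ℝ)⁻¹) * rr ^ k)) := by
        gcongr with k
        have hx0 : b * 2 ^ k ≠ 0 := mul_ne_zero hb0 (pow_ne_zero _ two_ne_zero)
        have hxt : b * 2 ^ k ≠ ∞ := ENNReal.mul_ne_top hbt (ENNReal.pow_ne_top ENNReal.ofNat_ne_top)
        have hterm : ∀ z ∈ E k, N z ^ (-(2:ℝ)⁻¹ - 1) ≤ (b * 2 ^ k) ^ (-(2:ℝ)⁻¹ - 1) := by
          intro z hz
          rw [show -(2:ℝ)⁻¹ - 1 = -((2:ℝ)⁻¹ + 1) by ring, ENNReal.rpow_neg, ENNReal.rpow_neg]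
          exact ENNReal.inv_le_inv.mpr (ENNReal.rpow_le_rpow hz.1 (by norm_num))
        calc ∫⁻ z in E k, N z ^ (-(2:ℝ)⁻¹ - 1) ∂F
            ≤ ∫⁻ _ in E k, (b * 2 ^ k) ^ (-(2:ℝ)⁻¹ - 1) ∂F :=
              setLIntegral_mono measurable_const hterm
          _ = (b * 2 ^ k) ^ (-(2:ℝ)⁻¹ - 1) * F (E k) := setLIntegral_const _ _
          _ ≤ (b * 2 ^ k) ^ (-(2:ℝ)⁻¹ - 1) * (b * 2 ^ (k + 1)) := by
              gcongr
              exact le_trans (measure_mono fun z hz => hz.2.le) (upcross F _)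
          _ = (b * 2 ^ k) ^ (-(2:ℝ)⁻¹ - 1) * (2 * (b * 2 ^ k)) := by
              rw [pow_succ]; ring
          _ = 2 * (b * 2 ^ k) ^ (-(2:ℝ)⁻¹) := rpow_shift hx0 hxt _
          _ = 2 * (b ^ (-(2:ℝ)⁻¹) * rr ^ k) := by
              rw [ENNReal.mul_rpow_of_ne_zero hb0 (pow_ne_zero _ two_ne_zero),
                pow_rpow_comm, rr_eq]
    _ = (2 * (1 - rr)⁻¹) * b ^ (-(2:ℝ)⁻¹) := by
        rw [ENNReal.tsum_mul_left, ENNReal.tsum_mul_left, ENNReal.tsum_geometric]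
        ring

private lemma rpow_ne_top' {x : ℝ≥0∞} (h0 : x ≠ 0) (ht : x ≠ ∞) (c : ℝ) : x ^ c ≠ ∞ := by
  simp [ENNReal.rpow_eq_top_iff, h0, ht]

lemma rpow_ne_zero' {x : ℝ≥0∞} (h0 : x ≠ 0) (ht : x ≠ ∞) (c : ℝ) : x ^ c ≠ 0 := by
  simp [ENNReal.rpow_eq_zero_iff, h0, ht]

lemma pointwise_bound (A B : ℝ≥0∞) (hAt : A ≠ ∞) (hBt : B ≠ ∞) (x y : ℝ) :
    (‖A.toReal⁻¹ * x * y‖₊ : ℝ≥0∞)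
      ≤ A ^ (-(2:ℝ)⁻¹ - 1) * (B ^ ((2:ℝ)⁻¹) * (‖x‖₊ : ℝ≥0∞) ^ 2)
        + B ^ ((2:ℝ)⁻¹ - 1) * (A ^ (-(2:ℝ)⁻¹) * (‖y‖₊ : ℝ≥0∞) ^ 2) := by
  rcases eq_or_ne A 0 with hA0 | hA0
  · simp [hA0]
  set a : ℝ≥0∞ := (‖x‖₊ : ℝ≥0∞) with haa
  set b : ℝ≥0∞ := (‖y‖₊ : ℝ≥0∞) with hbb
  have h1 : (‖A.toReal⁻¹ * x * y‖₊ : ℝ≥0∞) ≤ A⁻¹ * a * b := by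
    rw [nnnorm_mul, nnnorm_mul, ENNReal.coe_mul, ENNReal.coe_mul]
    exact mul_le_mul_left (mul_le_mul_left (nnnorm_toReal_inv_le A) _) _
  rcases eq_or_ne B 0 with hB0 | hB0
  · rcases eq_or_ne (‖y‖₊) 0 with hy0 | hy0
    · rw [nnnorm_eq_zero] at hy0
      simp [hy0]
    · have h2 : B ^ ((2:ℝ)⁻¹ - 1) = ∞ := by
        rw [hB0]; exact ENNReal.zero_rpow_of_neg (by norm_num)
      have h3 : A ^ (-(2:ℝ)⁻¹) * b ^ 2 ≠ 0 := by
        apply mul_ne_zero (rpow_ne_zero' hA0 hAt _)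
        rw [hbb]
        simp only [ne_eq, pow_eq_zero_iff, ENNReal.coe_eq_zero, OfNat.ofNat_ne_zero,
          not_false_eq_true, and_true]
        exact hy0
      calc (‖A.toReal⁻¹ * x * y‖₊ : ℝ≥0∞) ≤ ∞ := le_top
      _ ≤ _ := by rw [h2, ENNReal.top_mul h3]; exact le_add_self
  · set c : ℝ≥0∞ := B ^ ((2:ℝ)⁻¹) * A ^ (-(2:ℝ)⁻¹) with hc
    have hc0 : c ≠ 0 := mul_ne_zero (rpow_ne_zero' hB0 hBt _) (rpow_ne_zero' hA0 hAt _)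
    have hct : c ≠ ∞ := ENNReal.mul_ne_top (rpow_ne_top' hB0 hBt _) (rpow_ne_top' hA0 hAt _)
    have e1 : A⁻¹ * c = A ^ (-(2:ℝ)⁻¹ - 1) * B ^ ((2:ℝ)⁻¹) := by
      have h4 : A⁻¹ * c = A ^ (-1:ℝ) * A ^ (-(2:ℝ)⁻¹) * B ^ ((2:ℝ)⁻¹) := by
        rw [ENNReal.rpow_neg_one]; ring
      rw [h4, ← ENNReal.rpow_add _ _ hA0 hAt, show (-1 + -(2:ℝ)⁻¹) = -(2:ℝ)⁻¹ - 1 by ring]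
    have e2 : A⁻¹ * c⁻¹ = B ^ ((2:ℝ)⁻¹ - 1) * A ^ (-(2:ℝ)⁻¹) := by
      have h5 : c⁻¹ = B ^ (-(2:ℝ)⁻¹) * A ^ ((2:ℝ)⁻¹) := by
        rw [hc, ENNReal.mul_inv (Or.inl (rpow_ne_zero' hB0 hBt _))
          (Or.inl (rpow_ne_top' hB0 hBt _)), ← ENNReal.rpow_neg, ← ENNReal.rpow_neg, neg_neg]
      have h6 : A⁻¹ * (B ^ (-(2:ℝ)⁻¹) * A ^ ((2:ℝ)⁻¹))
          = B ^ (-(2:ℝ)⁻¹) * (A ^ (-1:ℝ) * A ^ ((2:ℝ)⁻¹)) := by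
        rw [ENNReal.rpow_neg_one]; ring
      rw [h5, h6, ← ENNReal.rpow_add _ _ hA0 hAt,
        show (-1 + (2:ℝ)⁻¹) = -(2:ℝ)⁻¹ by norm_num,
        show ((2:ℝ)⁻¹ - 1) = -(2:ℝ)⁻¹ by norm_num]
    calc (‖A.toReal⁻¹ * x * y‖₊ : ℝ≥0∞) ≤ A⁻¹ * a * b := h1
    _ = A⁻¹ * (a * b) := mul_assoc _ _ _
    _ ≤ A⁻¹ * (c * a ^ 2 + c⁻¹ * b ^ 2) := mul_le_mul_right (amgm a b c hc0 hct) _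
    _ = (A⁻¹ * c) * a ^ 2 + (A⁻¹ * c⁻¹) * b ^ 2 := by ring
    _ = _ := by rw [e1, e2]; ring

private lemma lint_sq (F : Measure ℝ) [IsProbabilityMeasure F] {f : ℝ → ℝ} (hf : MemLp f 2 F) :
    ∫⁻ x, (‖f x‖₊ : ℝ≥0∞) ^ 2 ∂F < ∞ := by
  have h := hf.2
  rw [eLpNorm_eq_lintegral_rpow_enorm_toReal (by norm_num) (by norm_num)] at h
  simp only [ENNReal.toReal_ofNat, enorm_eq_nnnorm] at h
  have h2 : ∫⁻ x, (‖f x‖₊ : ℝ≥0∞) ^ (2 : ℝ) ∂F < ∞ := by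
    by_contra hc
    push_neg at hc
    rw [top_le_iff.mp hc] at h
    simp [ENNReal.top_rpow_of_pos] at h
  have : ∀ x : ℝ≥0∞, x ^ (2:ℝ) = x ^ (2:ℕ) := fun x => by
    rw [← ENNReal.rpow_natCast]; norm_num
  simpa [this] using h2

private theorem key (F : Measure ℝ) [IsProbabilityMeasure F] [NullSingletonClass F] (f g : ℝ → ℝ)
    (hf : MemLp f 2 F) (hg : MemLp g 2 F) :
    Integrable (fun p : ℝ × ℝ =>
      {q : ℝ × ℝ | q.1 < q.2}.indicator
        (fun q => (F (Ioi q.1)).toReal⁻¹ * f q.2 * g q.1) p) (F.prod F) := by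
  have hregion : MeasurableSet {q : ℝ × ℝ | q.1 < q.2} :=
    measurableSet_lt measurable_fst measurable_snd
  have hNmeas : Measurable fun t : ℝ => F (Ioi t) := measN F
  have hSinv : Measurable fun t : ℝ => (F (Ioi t)).toReal⁻¹ := hNmeas.ennreal_toReal.inv
  have hasm : AEStronglyMeasurable
      (fun q : ℝ × ℝ => (F (Ioi q.1)).toReal⁻¹ * f q.2 * g q.1) (F.prod F) :=
    (((hSinv.comp measurable_fst).aestronglyMeasurable.mul hf.1.comp_snd).mul hg.1.comp_fst)
  refine ⟨hasm.indicator hregion, ?_⟩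
  rw [hasFiniteIntegral_def]
  set C : ℝ≥0∞ := 2 * (1 - rr)⁻¹ with hC
  have hCt : C ≠ ∞ := by
    apply ENNReal.mul_ne_top ENNReal.ofNat_ne_top
    rw [ENNReal.inv_ne_top]
    intro h
    exact absurd (tsub_eq_zero_iff_le.mp h) (not_le.mpr rr_lt_one)
  set Φ1 : ℝ × ℝ → ℝ≥0∞ := fun q =>
    {q : ℝ × ℝ | q.1 < q.2}.indicator (fun q =>
      (F (Ioi q.1)) ^ (-(2:ℝ)⁻¹ - 1) * ((F (Ioi q.2)) ^ ((2:ℝ)⁻¹) * (‖f q.2‖₊ : ℝ≥0∞) ^ 2)) q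
    with hΦ1
  set Φ2 : ℝ × ℝ → ℝ≥0∞ := fun q =>
    {q : ℝ × ℝ | q.1 < q.2}.indicator (fun q =>
      (F (Ioi q.2)) ^ ((2:ℝ)⁻¹ - 1) * ((F (Ioi q.1)) ^ (-(2:ℝ)⁻¹) * (‖g q.1‖₊ : ℝ≥0∞) ^ 2)) q
    with hΦ2
  have hmeas1 : AEMeasurable Φ1 (F.prod F) := by
    apply AEMeasurable.indicator _ hregion
    exact ((ENNReal.continuous_rpow_const.measurable.comp
        (hNmeas.comp measurable_fst)).aemeasurable.mul
      (((ENNReal.continuous_rpow_const.measurable.comp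
        (hNmeas.comp measurable_snd)).aemeasurable).mul
        (hf.1.comp_snd.enorm.pow_const 2)))
  have hmeas2 : AEMeasurable Φ2 (F.prod F) := by
    apply AEMeasurable.indicator _ hregion
    exact ((ENNReal.continuous_rpow_const.measurable.comp
        (hNmeas.comp measurable_snd)).aemeasurable.mul
      (((ENNReal.continuous_rpow_const.measurable.comp
        (hNmeas.comp measurable_fst)).aemeasurable).mul
        (hg.1.comp_fst.enorm.pow_const 2)))
  have hpt : ∀ p : ℝ × ℝ,
      (‖({q : ℝ × ℝ | q.1 < q.2}.indicator
        (fun q => (F (Ioi q.1)).toReal⁻¹ * f q.2 * g q.1) p)‖₊ : ℝ≥0∞)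
        ≤ Φ1 p + Φ2 p := by
    intro p
    by_cases hp : p ∈ {q : ℝ × ℝ | q.1 < q.2}
    · simp only [hΦ1, hΦ2, Set.indicator_of_mem hp]
      exact pointwise_bound _ _ (measure_ne_top F _) (measure_ne_top F _) _ _
    · simp only [hΦ1, hΦ2, Set.indicator_of_notMem hp]
      simp
  calc ∫⁻ p, (‖({q : ℝ × ℝ | q.1 < q.2}.indicator
        (fun q => (F (Ioi q.1)).toReal⁻¹ * f q.2 * g q.1) p)‖₊ : ℝ≥0∞) ∂F.prod F
      ≤ ∫⁻ p, (Φ1 p + Φ2 p) ∂F.prod F := lintegral_mono hpt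
    _ = ∫⁻ p, Φ1 p ∂F.prod F + ∫⁻ p, Φ2 p ∂F.prod F := lintegral_add_left' hmeas1 _
    _ < ∞ := by
      apply ENNReal.add_lt_top.mpr
      constructor
      · -- Φ1 : integrate z first
        rw [lintegral_prod_symm Φ1 hmeas1]
        have hinner : ∀ s : ℝ, ∫⁻ z, Φ1 (z, s) ∂F ≤ C * (‖f s‖₊ : ℝ≥0∞) ^ 2 := by
          intro s
          have hind : (fun z => Φ1 (z, s)) = (Iio s).indicator
              (fun z => (F (Ioi z)) ^ (-(2:ℝ)⁻¹ - 1)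
                * ((F (Ioi s)) ^ ((2:ℝ)⁻¹) * (‖f s‖₊ : ℝ≥0∞) ^ 2)) := by
            funext z
            simp [hΦ1, Set.indicator_apply, mem_Iio]
          have hm1 : Measurable fun t : ℝ => (F (Ioi t)) ^ (-(2:ℝ)⁻¹ - 1) :=
            ENNReal.continuous_rpow_const.measurable.comp hNmeas
          rw [hind, lintegral_indicator measurableSet_Iio, lintegral_mul_const _ hm1]
          rcases eq_or_ne (F (Ioi s)) 0 with h0 | h0
          · rw [h0, ENNReal.zero_rpow_of_pos (by norm_num), zero_mul, mul_zero]
            exact zero_le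
          · calc (∫⁻ z in Iio s, (F (Ioi z)) ^ (-(2:ℝ)⁻¹ - 1) ∂F)
                  * ((F (Ioi s)) ^ ((2:ℝ)⁻¹) * (‖f s‖₊ : ℝ≥0∞) ^ 2)
                ≤ (C * (F (Ioi s)) ^ (-(2:ℝ)⁻¹))
                  * ((F (Ioi s)) ^ ((2:ℝ)⁻¹) * (‖f s‖₊ : ℝ≥0∞) ^ 2) :=
                  mul_le_mul_left (B2 F s h0) _
              _ = C * ((F (Ioi s)) ^ (-(2:ℝ)⁻¹) * (F (Ioi s)) ^ ((2:ℝ)⁻¹))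
                  * (‖f s‖₊ : ℝ≥0∞) ^ 2 := by ring
              _ = C * (‖f s‖₊ : ℝ≥0∞) ^ 2 := by
                  rw [← ENNReal.rpow_add _ _ h0 (measure_ne_top F _)]
                  norm_num
        calc ∫⁻ s, ∫⁻ z, Φ1 (z, s) ∂F ∂F ≤ ∫⁻ s, C * (‖f s‖₊ : ℝ≥0∞) ^ 2 ∂F :=
              lintegral_mono hinner
        _ = C * ∫⁻ s, (‖f s‖₊ : ℝ≥0∞) ^ 2 ∂F := lintegral_const_mul' _ _ hCt
        _ < ∞ := ENNReal.mul_lt_top hCt.lt_top (lint_sq F hf)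
      · -- Φ2 : integrate s first
        rw [lintegral_prod Φ2 hmeas2]
        have hinner : ∀ z : ℝ, ∫⁻ s, Φ2 (z, s) ∂F ≤ C * (‖g z‖₊ : ℝ≥0∞) ^ 2 := by
          intro z
          have hind : (fun s => Φ2 (z, s)) = (Ioi z).indicator
              (fun s => (F (Ioi s)) ^ ((2:ℝ)⁻¹ - 1)
                * ((F (Ioi z)) ^ (-(2:ℝ)⁻¹) * (‖g z‖₊ : ℝ≥0∞) ^ 2)) := by
            funext s
            simp [hΦ2, Set.indicator_apply, mem_Ioi]
          have hm2 : Measurable fun t : ℝ => (F (Ioi t)) ^ ((2:ℝ)⁻¹ - 1) :=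
            ENNReal.continuous_rpow_const.measurable.comp hNmeas
          rw [hind, lintegral_indicator measurableSet_Ioi, lintegral_mul_const _ hm2]
          calc (∫⁻ s in Ioi z, (F (Ioi s)) ^ ((2:ℝ)⁻¹ - 1) ∂F)
                * ((F (Ioi z)) ^ (-(2:ℝ)⁻¹) * (‖g z‖₊ : ℝ≥0∞) ^ 2)
              ≤ (C * (F (Ioi z)) ^ ((2:ℝ)⁻¹))
                * ((F (Ioi z)) ^ (-(2:ℝ)⁻¹) * (‖g z‖₊ : ℝ≥0∞) ^ 2) :=
                mul_le_mul_left (B1 F z) _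
            _ = C * ((F (Ioi z)) ^ ((2:ℝ)⁻¹) * (F (Ioi z)) ^ (-(2:ℝ)⁻¹))
                * (‖g z‖₊ : ℝ≥0∞) ^ 2 := by ring
            _ ≤ C * (‖g z‖₊ : ℝ≥0∞) ^ 2 := by
                rcases eq_or_ne (F (Ioi z)) 0 with h0 | h0
                · rw [h0, ENNReal.zero_rpow_of_pos (by norm_num), zero_mul, mul_zero, zero_mul]
                  exact zero_le
                · rw [← ENNReal.rpow_add _ _ h0 (measure_ne_top F _)]
                  norm_num
        calc ∫⁻ z, ∫⁻ s, Φ2 (z, s) ∂F ∂F ≤ ∫⁻ z, C * (‖g z‖₊ : ℝ≥0∞) ^ 2 ∂F :=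
              lintegral_mono hinner
        _ = C * ∫⁻ z, (‖g z‖₊ : ℝ≥0∞) ^ 2 ∂F := lintegral_const_mul' _ _ hCt
        _ < ∞ := ENNReal.mul_lt_top hCt.lt_top (lint_sq F hg)

private lemma merged_marker : True := trivial
/-- The advanced operator `A` and the backward operator `B` are adjoint on `L²(F)`:
`∫ (Af) g dF = ∫ f (Bg) dF`, where `(Af)(z) = f(z) - S(z)⁻¹ ∫_{(z,∞)} f dF` and
`(Bg)(z) = g(z) - ∫_{(0,z]} g(s) S(s)⁻¹ dF(s)`, with `S(t) = F((t,∞))`. -/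
theorem advanced_backward_adjoint (F : Measure ℝ) [IsProbabilityMeasure F]
    [NullSingletonClass F] (hF : F (Set.Ioi (0 : ℝ)) = 1)
    (f g : ℝ → ℝ) (hf : MemLp f 2 F) (hg : MemLp g 2 F) :
    ∫ z, (f z - ((F (Set.Ioi z)).toReal)⁻¹ * ∫ s in Set.Ioi z, f s ∂F) * g z ∂F
      = ∫ z, f z * (g z - ∫ s in Set.Ioc 0 z, g s * ((F (Set.Ioi s)).toReal)⁻¹ ∂F) ∂F := by
  classical
  set K : ℝ × ℝ → ℝ := fun q =>
    {q : ℝ × ℝ | q.1 < q.2}.indicator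
      (fun q => (F (Ioi q.1)).toReal⁻¹ * f q.2 * g q.1) q with hKdef
  have hK : Integrable K (F.prod F) := key F f g hf hg
  -- f * g is integrable (L² × L² ⊆ L¹)
  have hone : (1:ℝ≥0∞) / 1 = 1 / 2 + 1 / 2 := by
    rw [ENNReal.div_add_div_same, one_add_one_eq_two, div_one,
      ENNReal.div_self two_ne_zero ENNReal.ofNat_ne_top]
  have hfg : Integrable (fun z => f z * g z) F := by
    have h1 : MemLp (f • g) 1 F := hg.smul hf
    have h2 : (f • g) = fun z => f z * g z := funext fun z => by
      simp [Pi.smul_apply, smul_eq_mul]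
    rw [h2] at h1
    exact memLp_one_iff_integrable.mp h1
  -- F gives no mass to (-∞, 0]
  have hFiic : F (Iic 0) = 0 := by
    have h := measure_compl (measurableSet_Ioi (a := (0:ℝ))) (measure_ne_top F _)
    rw [compl_Ioi] at h
    rw [h, measure_univ, hF, tsub_self]
  -- Ioc 0 s and Iio s agree F-a.e.
  have hIoc_eq : ∀ s : ℝ, (Ioc (0:ℝ) s : Set ℝ) =ᵐ[F] (Iio s : Set ℝ) := by
    intro s
    rw [MeasureTheory.ae_eq_set]
    constructor
    · refine measure_mono_null (fun z hz => ?_) (measure_singleton s)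
      rcases hz with ⟨⟨h0z, hzs⟩, hns⟩
      simp only [mem_Iio, not_lt] at hns
      exact mem_singleton_iff.mpr (le_antisymm hzs hns)
    · refine measure_mono_null (fun z hz => ?_) hFiic
      rcases hz with ⟨hzs, hno⟩
      simp only [mem_Ioc, not_and, not_le] at hno
      simp only [mem_Iio] at hzs
      by_contra hz0
      simp only [mem_Iic, not_le] at hz0
      exact absurd (hno hz0) (not_lt.mpr (le_of_lt hzs))
  -- the inner integrals of K
  have hstep1 : ∀ z : ℝ, ∫ s, K (z, s) ∂F
      = (F (Ioi z)).toReal⁻¹ * (∫ s in Ioi z, f s ∂F) * g z := by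
    intro z
    have h1 : (fun s => K (z, s))
        = (Ioi z).indicator (fun s => (F (Ioi z)).toReal⁻¹ * f s * g z) := by
      funext s
      simp [hKdef, Set.indicator_apply, mem_Ioi]
    rw [h1, integral_indicator measurableSet_Ioi]
    calc ∫ s in Ioi z, (F (Ioi z)).toReal⁻¹ * f s * g z ∂F
        = ∫ s in Ioi z, ((F (Ioi z)).toReal⁻¹ * g z) * f s ∂F := by
          apply integral_congr_ae
          filter_upwards with s
          ring
      _ = ((F (Ioi z)).toReal⁻¹ * g z) * ∫ s in Ioi z, f s ∂F := integral_const_mul _ _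
      _ = _ := by ring
  have hstep2 : ∀ s : ℝ, ∫ z, K (z, s) ∂F
      = f s * ∫ z in Ioc 0 s, g z * (F (Ioi z)).toReal⁻¹ ∂F := by
    intro s
    have h1 : (fun z => K (z, s))
        = (Iio s).indicator (fun z => (F (Ioi z)).toReal⁻¹ * f s * g z) := by
      funext z
      simp [hKdef, Set.indicator_apply, mem_Iio]
    rw [h1, integral_indicator measurableSet_Iio, ← setIntegral_congr_set (hIoc_eq s)]
    calc ∫ z in Ioc 0 s, (F (Ioi z)).toReal⁻¹ * f s * g z ∂F
        = ∫ z in Ioc 0 s, f s * (g z * (F (Ioi z)).toReal⁻¹) ∂F := by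
          apply integral_congr_ae
          filter_upwards with z
          ring
      _ = f s * ∫ z in Ioc 0 s, g z * (F (Ioi z)).toReal⁻¹ ∂F := integral_const_mul _ _
  -- marginal integrabilities
  have hint1 : Integrable (fun z => (F (Ioi z)).toReal⁻¹ * (∫ s in Ioi z, f s ∂F) * g z) F := by
    have h := hK.integral_prod_left
    exact h.congr (Filter.Eventually.of_forall hstep1)
  have hint2 : Integrable
      (fun s => f s * ∫ z in Ioc 0 s, g z * (F (Ioi z)).toReal⁻¹ ∂F) F := by
    have h := hK.integral_prod_right
    exact h.congr (Filter.Eventually.of_forall hstep2)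
  -- Fubini
  have hswap : ∫ z, ∫ s, K (z, s) ∂F ∂F = ∫ s, ∫ z, K (z, s) ∂F ∂F := by
    have huncurry : Function.uncurry (fun z s => K (z, s)) = K := funext fun p => by
      simp [Function.uncurry]
    exact integral_integral_swap (by rw [huncurry]; exact hK)
  -- final computation
  calc ∫ z, (f z - (F (Ioi z)).toReal⁻¹ * ∫ s in Ioi z, f s ∂F) * g z ∂F
      = ∫ z, (f z * g z
          - (F (Ioi z)).toReal⁻¹ * (∫ s in Ioi z, f s ∂F) * g z) ∂F := by
        apply integral_congr_ae
        filter_upwards with z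
        ring
    _ = (∫ z, f z * g z ∂F)
        - ∫ z, (F (Ioi z)).toReal⁻¹ * (∫ s in Ioi z, f s ∂F) * g z ∂F :=
        integral_sub hfg hint1
    _ = (∫ z, f z * g z ∂F) - ∫ z, ∫ s, K (z, s) ∂F ∂F := by
        congr 1
        exact (integral_congr_ae (Filter.Eventually.of_forall hstep1)).symm
    _ = (∫ z, f z * g z ∂F) - ∫ s, ∫ z, K (z, s) ∂F ∂F := by rw [hswap]
    _ = (∫ z, f z * g z ∂F)
        - ∫ s, f s * ∫ z in Ioc 0 s, g z * (F (Ioi z)).toReal⁻¹ ∂F ∂F := by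
        congr 1
        exact integral_congr_ae (Filter.Eventually.of_forall hstep2)
    _ = ∫ z, f z * (g z - ∫ s in Ioc 0 z, g s * (F (Ioi s)).toReal⁻¹ ∂F) ∂F := by
        rw [← integral_sub hfg hint2]
        apply integral_congr_ae
        filter_upwards with z
        ring
end

section
/- The advanced operator inverts the backward operator: for every f : ℝ → ℝ with f ∈ L²(F), one has (A(Bf))(z) = f(z) for F-almost every z. -/
open MeasureTheory Set

/-- Almost every point has positive survival probability. -/
private lemma ae_surv_pos (F : Measure ℝ) [IsProbabilityMeasure F]
    [NullSingletonClass F] (hF : F (Set.Ioi (0 : ℝ)) = 1) :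
    ∀ᵐ z ∂F, 0 < F (Set.Ioi z) := by
  rw [ae_iff]
  have hset : {z : ℝ | ¬ 0 < F (Set.Ioi z)} = {z : ℝ | F (Set.Ioi z) = 0} := by
    ext z; simp [pos_iff_ne_zero]
  rw [hset]
  set N := {z : ℝ | F (Set.Ioi z) = 0} with hN
  rcases eq_empty_or_nonempty N with h | h
  · simp [h]
  have hbdd : BddBelow N := by
    refine ⟨0, fun z hz => ?_⟩
    by_contra hz0
    push_neg at hz0
    have hle : F (Set.Ioi (0 : ℝ)) ≤ F (Set.Ioi z) := measure_mono (Ioi_subset_Ioi hz0.le)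
    rw [hz, hF] at hle
    simp at hle
  set t := sInf N with ht
  have hIoi : F (Set.Ioi t) = 0 := by
    have hsub : Set.Ioi t ⊆ ⋃ n : ℕ, Set.Ioi (t + ((n : ℝ) + 1)⁻¹) := by
      intro x hx
      have hxt : 0 < x - t := sub_pos.mpr hx
      obtain ⟨n, hn⟩ := exists_nat_one_div_lt hxt
      rw [one_div] at hn
      refine mem_iUnion.mpr ⟨n, ?_⟩
      simp only [mem_Ioi]
      linarith
    refine measure_mono_null hsub (measure_iUnion_null fun n => ?_)
    have hlt : t < t + ((n : ℝ) + 1)⁻¹ := lt_add_of_pos_right t (by positivity)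
    obtain ⟨w, hwN, hw⟩ := exists_lt_of_csInf_lt h hlt
    exact measure_mono_null (Ioi_subset_Ioi hw.le) hwN
  have hsubN : N ⊆ Set.Ici t := fun z hz => csInf_le hbdd hz
  refine measure_mono_null hsubN ?_
  rw [← measure_congr (Ioi_ae_eq_Ici (μ := F) (a := t))]
  exact hIoi

/-- Almost every point is positive. -/
private lemma ae_pos_pt (F : Measure ℝ) [IsProbabilityMeasure F]
    (hF : F (Set.Ioi (0 : ℝ)) = 1) :
    ∀ᵐ z ∂F, 0 < z := by
  have h0 : F (Set.Iic (0 : ℝ)) = 0 := by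
    have hc := measure_compl (measurableSet_Ioi (a := (0 : ℝ))) (measure_ne_top F _)
    rw [compl_Ioi, hF, measure_univ] at hc
    simpa using hc
  rw [ae_iff]
  have : {z : ℝ | ¬ 0 < z} = Set.Iic 0 := by ext z; simp [not_lt]
  rw [this]; exact h0

/-- The advanced operator inverts the backward operator: `A(Bf) = f` `F`-almost
everywhere, where `(Af)(z) = f(z) - S(z)⁻¹ ∫_{(z,∞)} f dF` and
`(Bf)(z) = f(z) - ∫_{(0,z]} f(s) S(s)⁻¹ dF(s)`, with `S(t) = F((t,∞))`. -/
theorem advanced_backward_inverse (F : Measure ℝ) [IsProbabilityMeasure F]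
    [NullSingletonClass F] (hF : F (Set.Ioi (0 : ℝ)) = 1)
    (f : ℝ → ℝ) (hf : MemLp f 2 F) :
    ∀ᵐ z ∂F,
      (f z - ∫ s in Set.Ioc 0 z, f s * ((F (Set.Ioi s)).toReal)⁻¹ ∂F)
        - ((F (Set.Ioi z)).toReal)⁻¹ *
            ∫ s in Set.Ioi z,
              (f s - ∫ u in Set.Ioc 0 s, f u * ((F (Set.Ioi u)).toReal)⁻¹ ∂F) ∂F
      = f z := by
  have hfi : Integrable f F := hf.integrable one_le_two
  have hSanti : Antitone fun u : ℝ => F (Set.Ioi u) :=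
    fun a b hab => measure_mono (Ioi_subset_Ioi hab)
  have hSmeas : Measurable fun u : ℝ => ((F (Set.Ioi u)).toReal)⁻¹ :=
    (hSanti.measurable.ennreal_toReal).inv
  have hh : AEStronglyMeasurable (fun u => f u * ((F (Set.Ioi u)).toReal)⁻¹) F :=
    hf.aestronglyMeasurable.mul hSmeas.aestronglyMeasurable
  filter_upwards [ae_surv_pos F hF, ae_pos_pt F hF] with z hSz hz
  -- abbreviations (as plain `have`s to keep goal syntactic)
  set G : ℝ → ℝ := fun t => ∫ u in Set.Ioc 0 t, f u * ((F (Set.Ioi u)).toReal)⁻¹ ∂F with hG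
  have hSzR : 0 < (F (Set.Ioi z)).toReal :=
    ENNReal.toReal_pos hSz.ne' (measure_ne_top F _)
  -- the double-integrand
  set φ : ℝ → ℝ → ℝ :=
    fun s u => (Set.Ioc 0 s).indicator (fun u => f u * ((F (Set.Ioi u)).toReal)⁻¹) u with hφ
  -- measurability on the product
  have hφmeas : AEStronglyMeasurable (Function.uncurry φ)
      ((F.restrict (Set.Ioi z)).prod F) := by
    have hE : MeasurableSet {p : ℝ × ℝ | 0 < p.2 ∧ p.2 ≤ p.1} :=
      (measurableSet_lt measurable_const measurable_snd).inter
        (measurableSet_le measurable_snd measurable_fst)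
    have heq : Function.uncurry φ =
        Set.indicator {p : ℝ × ℝ | 0 < p.2 ∧ p.2 ≤ p.1}
          (fun p => f p.2 * ((F (Set.Ioi p.2)).toReal)⁻¹) := by
      ext p
      by_cases hp : 0 < p.2 ∧ p.2 ≤ p.1 <;>
        simp [Function.uncurry, hφ, Set.indicator_apply, Set.mem_Ioc, hp]
    rw [heq]
    exact (hh.comp_snd).indicator hE
  -- sections are integrable
  have hsec : ∀ u : ℝ, Integrable (fun s => φ s u) (F.restrict (Set.Ioi z)) := by
    intro u
    by_cases hu : 0 < u
    · have heq : (fun s => φ s u) =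
          (Set.Ici u).indicator (fun _ => f u * ((F (Set.Ioi u)).toReal)⁻¹) := by
        ext s
        by_cases hus : u ≤ s <;>
          simp [hφ, Set.indicator_apply, Set.mem_Ioc, Set.mem_Ici, hu, hus]
      rw [heq]
      exact (integrable_const _).indicator measurableSet_Ici
    · have heq : (fun s => φ s u) = fun _ => (0 : ℝ) := by
        ext s; simp [hφ, Set.indicator_apply, Set.mem_Ioc, hu]
      rw [heq]; exact integrable_const 0
  -- the u-integral of norms
  have hnorm_eq : ∀ u : ℝ, (∫ s in Set.Ioi z, ‖φ s u‖ ∂F) =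
      (Set.Ioi (0 : ℝ)).indicator
        (fun u => ‖f u * ((F (Set.Ioi u)).toReal)⁻¹‖ *
          ((F.restrict (Set.Ioi z)) (Set.Ici u)).toReal) u := by
    intro u
    by_cases hu : 0 < u
    · have heq : ∀ s, ‖φ s u‖ =
          (Set.Ici u).indicator
            (fun _ => ‖f u * ((F (Set.Ioi u)).toReal)⁻¹‖) s := by
        intro s
        by_cases hus : u ≤ s <;>
          simp [hφ, Set.indicator_apply, Set.mem_Ioc, Set.mem_Ici, hu, hus]
      simp only [heq]
      rw [integral_indicator_const _ measurableSet_Ici, measureReal_def,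
        Set.indicator_of_mem (Set.mem_Ioi.mpr hu), smul_eq_mul, mul_comm]
    · have heq : ∀ s, ‖φ s u‖ = 0 := by
        intro s; simp [hφ, Set.indicator_apply, Set.mem_Ioc, hu]
      simp only [heq]
      rw [integral_zero, Set.indicator_of_notMem (by simpa using hu)]
  have hwle : ∀ u : ℝ, ((F.restrict (Set.Ioi z)) (Set.Ici u)).toReal ≤
      (F (Set.Ioi u)).toReal := by
    intro u
    apply ENNReal.toReal_mono (measure_ne_top F _)
    rw [Measure.restrict_apply measurableSet_Ici]
    calc F (Set.Ici u ∩ Set.Ioi z) ≤ F (Set.Ici u) := measure_mono inter_subset_left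
      _ = F (Set.Ioi u) := (measure_congr (Ioi_ae_eq_Ici (μ := F) (a := u))).symm
  have hnormint : Integrable
      (fun u => ∫ s in Set.Ioi z, ‖φ s u‖ ∂F) F := by
    have hwm : Measurable fun u : ℝ => ((F.restrict (Set.Ioi z)) (Set.Ici u)).toReal := by
      have : Antitone fun u : ℝ => (F.restrict (Set.Ioi z)) (Set.Ici u) :=
        fun a b hab => measure_mono (Ici_subset_Ici.mpr hab)
      exact this.measurable.ennreal_toReal
    refine Integrable.mono' hfi.norm ?_ (ae_of_all _ fun u => ?_)
    · exact ((hh.norm.mul hwm.aestronglyMeasurable).indicator measurableSet_Ioi).congr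
        (ae_of_all _ fun u => (hnorm_eq u).symm)
    · rw [hnorm_eq u]
      by_cases hu : 0 < u
      · rw [Set.indicator_of_mem (Set.mem_Ioi.mpr hu)]
        have h1 : (0:ℝ) ≤ ‖f u * ((F (Set.Ioi u)).toReal)⁻¹‖ *
            ((F.restrict (Set.Ioi z)) (Set.Ici u)).toReal := by positivity
        rw [Real.norm_of_nonneg h1]
        have h2 : ‖f u * ((F (Set.Ioi u)).toReal)⁻¹‖ =
            ‖f u‖ * ((F (Set.Ioi u)).toReal)⁻¹ := by
          rw [norm_mul, Real.norm_of_nonneg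
            (show (0:ℝ) ≤ ((F (Set.Ioi u)).toReal)⁻¹ by positivity)]
        rw [h2]
        set t := (F (Set.Ioi u)).toReal with hts
        set w := ((F.restrict (Set.Ioi z)) (Set.Ici u)).toReal with hws
        have hw0 : 0 ≤ w := ENNReal.toReal_nonneg
        have ht0 : 0 ≤ t := ENNReal.toReal_nonneg
        have hwt : w ≤ t := hwle u
        rcases eq_or_lt_of_le ht0 with h | h
        · have : w = 0 := le_antisymm (by rw [← h] at hwt; exact hwt) hw0
          simp [this]
        · calc ‖f u‖ * t⁻¹ * w ≤ ‖f u‖ * t⁻¹ * t := by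
                have : (0:ℝ) ≤ ‖f u‖ * t⁻¹ := by positivity
                exact mul_le_mul_of_nonneg_left hwt this
            _ = ‖f u‖ := by field_simp
      · rw [Set.indicator_of_notMem (by simpa using hu)]
        simp
  -- Fubini integrability
  have hφint : Integrable (Function.uncurry φ)
      ((F.restrict (Set.Ioi z)).prod F) := by
    refine (integrable_prod_iff' hφmeas).mpr ⟨ae_of_all _ hsec, ?_⟩
    exact hnormint
  -- G is integrable on (z, ∞)
  have hGz : IntegrableOn G (Set.Ioi z) F := by
    have h1 := hφint.integral_prod_left
    refine h1.congr (ae_of_all _ fun s => ?_)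
    exact integral_indicator measurableSet_Ioc
  -- value of the inner (s-)integral
  have inner : ∀ u : ℝ, (∫ s in Set.Ioi z, φ s u ∂F) =
      (Set.Ioi (0 : ℝ)).indicator
        (fun u => (F (Set.Ici u ∩ Set.Ioi z)).toReal *
          (f u * ((F (Set.Ioi u)).toReal)⁻¹)) u := by
    intro u
    by_cases hu : 0 < u
    · have heq : ∀ s, φ s u =
          (Set.Ici u).indicator (fun _ => f u * ((F (Set.Ioi u)).toReal)⁻¹) s := by
        intro s
        by_cases hus : u ≤ s <;>
          simp [hφ, Set.indicator_apply, Set.mem_Ioc, Set.mem_Ici, hu, hus]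
      simp only [heq]
      rw [integral_indicator_const _ measurableSet_Ici, measureReal_def,
        Measure.restrict_apply measurableSet_Ici,
        Set.indicator_of_mem (Set.mem_Ioi.mpr hu), smul_eq_mul]
    · have heq : ∀ s, φ s u = 0 := by
        intro s; simp [hφ, Set.indicator_apply, Set.mem_Ioc, hu]
      simp only [heq]
      rw [integral_zero, Set.indicator_of_notMem (by simpa using hu)]
  -- the swapped integrand ψ is integrable on (0, ∞)
  have hψ : IntegrableOn
      (fun u => (F (Set.Ici u ∩ Set.Ioi z)).toReal *
        (f u * ((F (Set.Ioi u)).toReal)⁻¹)) (Set.Ioi 0) F := by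
    have h1 := hφint.integral_prod_right
    have h2 : Integrable ((Set.Ioi (0:ℝ)).indicator
        (fun u => (F (Set.Ici u ∩ Set.Ioi z)).toReal *
          (f u * ((F (Set.Ioi u)).toReal)⁻¹))) F :=
      h1.congr (ae_of_all _ fun u => inner u)
    exact (integrable_indicator_iff measurableSet_Ioi).mp h2
  -- Claim A : ∫_{(z,∞)} G dF = S(z) * G(z) + ∫_{(z,∞)} f dF
  have claimA : (∫ s in Set.Ioi z, G s ∂F) =
      (F (Set.Ioi z)).toReal * G z + ∫ s in Set.Ioi z, f s ∂F := by
    have hswap : (∫ s in Set.Ioi z, G s ∂F) =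
        ∫ u, (∫ s in Set.Ioi z, φ s u ∂F) ∂F := by
      rw [← integral_integral_swap hφint]
      refine integral_congr_ae (ae_of_all _ fun s => ?_)
      exact (integral_indicator measurableSet_Ioc).symm
    rw [hswap]
    simp only [inner]
    rw [integral_indicator measurableSet_Ioi,
      ← Ioc_union_Ioi_eq_Ioi hz.le,
      setIntegral_union (Ioc_disjoint_Ioi le_rfl) measurableSet_Ioi
        (hψ.mono_set Ioc_subset_Ioi_self) (hψ.mono_set (Ioi_subset_Ioi hz.le))]
    congr 1
    · -- piece on (0, z]
      have e1 : Set.EqOn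
          (fun u => (F (Set.Ici u ∩ Set.Ioi z)).toReal *
            (f u * ((F (Set.Ioi u)).toReal)⁻¹))
          (fun u => (F (Set.Ioi z)).toReal *
            (f u * ((F (Set.Ioi u)).toReal)⁻¹)) (Set.Ioc 0 z) := by
        intro u hu
        have : Set.Ici u ∩ Set.Ioi z = Set.Ioi z :=
          inter_eq_right.mpr (fun s hs => le_trans hu.2 (le_of_lt hs))
        simp only [this]
      rw [setIntegral_congr_fun measurableSet_Ioc e1, integral_const_mul]
    · -- piece on (z, ∞)
      refine setIntegral_congr_ae measurableSet_Ioi ?_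
      filter_upwards [ae_surv_pos F hF] with u hSu hu
      have hIci : Set.Ici u ∩ Set.Ioi z = Set.Ici u :=
        inter_eq_left.mpr (fun s hs => mem_Ioi.mpr (lt_of_lt_of_le (mem_Ioi.mp hu) (mem_Ici.mp hs)))
      have hm : F (Set.Ici u) = F (Set.Ioi u) :=
        (measure_congr (Ioi_ae_eq_Ici (μ := F) (a := u))).symm
      have ht : ((F (Set.Ioi u)).toReal) ≠ 0 :=
        (ENNReal.toReal_pos hSu.ne' (measure_ne_top F _)).ne'
      rw [hIci, hm, mul_comm (f u), ← mul_assoc, mul_inv_cancel₀ ht, one_mul]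
  -- main identity
  have key : (∫ s in Set.Ioi z,
      (f s - ∫ u in Set.Ioc 0 s, f u * ((F (Set.Ioi u)).toReal)⁻¹ ∂F) ∂F) =
      -((F (Set.Ioi z)).toReal * G z) := by
    have : (∫ s in Set.Ioi z,
        (f s - ∫ u in Set.Ioc 0 s, f u * ((F (Set.Ioi u)).toReal)⁻¹ ∂F) ∂F) =
        (∫ s in Set.Ioi z, f s ∂F) - ∫ s in Set.Ioi z, G s ∂F :=
      integral_sub hfi.integrableOn hGz
    rw [this, claimA]; ring
  rw [key]
  have hne : ((F (Set.Ioi z)).toReal) ≠ 0 := hSzR.ne'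
  have hcanc : ((F (Set.Ioi z)).toReal)⁻¹ * -((F (Set.Ioi z)).toReal * G z) = -G z := by
    field_simp
  rw [hcanc]
  ring
end

section
/- For every f : ℝ → ℝ with f ∈ L²(F), one has (B(Af))(z) = f(z) − ∫ f dF for F-almost every z; in particular, if ∫ f dF = 0 then (B(Af))(z) = f(z) for F-almost every z. -/
open MeasureTheory Set Filter Topology
open scoped ENNReal
set_option linter.unusedSectionVars false
set_option linter.unusedVariables false
set_option linter.unusedTactic false
set_option linter.deprecated false

namespace BackAdv
variable {F : Measure ℝ} [IsProbabilityMeasure F] [NullSingletonClass F]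

noncomputable def Sr (F : Measure ℝ) (t : ℝ) : ℝ := (F (Set.Ioi t)).toReal

lemma sr_anti : Antitone (Sr F) := fun a b hab =>
  ENNReal.toReal_le_toReal (measure_ne_top _ _) (measure_ne_top _ _) |>.2
    (measure_mono (Ioi_subset_Ioi hab))

lemma sr_meas : Measurable (Sr F) := sr_anti.measurable

lemma sr_nonneg (t : ℝ) : 0 ≤ Sr F t := ENNReal.toReal_nonneg

lemma sr_le_one (t : ℝ) : Sr F t ≤ 1 := by
  have h : F (Ioi t) ≤ 1 := prob_le_one
  simpa [Sr] using ENNReal.toReal_le_of_le_ofReal one_pos.le (by simpa using h)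

lemma iic_null (hF : F (Set.Ioi (0:ℝ)) = 1) : F (Iic 0) = 0 := by
  have := measure_compl (measurableSet_Ioi (a := (0:ℝ))) (measure_ne_top F _)
  rw [compl_Ioi] at this
  simp [this, hF]

lemma ae_pos (hF : F (Set.Ioi (0:ℝ)) = 1) : ∀ᵐ z ∂F, 0 < z := by
  have h : {z : ℝ | ¬ 0 < z} = Iic 0 := by ext z; simp
  rw [ae_iff, h]; exact iic_null hF

lemma sr_eq_one (hF : F (Set.Ioi (0:ℝ)) = 1) {t : ℝ} (ht : t ≤ 0) : Sr F t = 1 := by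
  have h1 : F (Ioi t) ≤ 1 := prob_le_one
  have h2 : (1:ℝ≥0∞) ≤ F (Ioi t) := hF ▸ measure_mono (Ioi_subset_Ioi ht)
  simp [Sr, le_antisymm h1 h2]

lemma ofReal_sr (t : ℝ) : ENNReal.ofReal (Sr F t) = F (Ioi t) :=
  ENNReal.ofReal_toReal (measure_ne_top _ _)

lemma sr_exists_le {x : ℝ} (hx : 0 < x) : ∃ t : ℝ, Sr F t ≤ x := by
  have h0 : Tendsto (fun n : ℕ => F (Ioi (n:ℝ))) atTop (𝓝 (F (⋂ n : ℕ, Ioi (n:ℝ)))) :=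
    tendsto_measure_iInter_atTop (fun n => (measurableSet_Ioi).nullMeasurableSet)
      (fun n m hnm => Ioi_subset_Ioi (by exact_mod_cast hnm)) ⟨0, measure_ne_top _ _⟩
  have hempty : (⋂ n : ℕ, Ioi ((n:ℝ))) = ∅ := by
    ext s; simp only [mem_iInter, mem_Ioi, mem_empty_iff_false, iff_false, not_forall, not_lt]
    obtain ⟨n, hn⟩ := exists_nat_gt s
    exact ⟨n, hn.le⟩
  rw [hempty, measure_empty] at h0
  have := (h0.eventually_lt_const (ENNReal.ofReal_pos.mpr hx)).exists
  obtain ⟨n, hn⟩ := this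
  exact ⟨n, ENNReal.toReal_le_of_le_ofReal hx.le hn.le⟩

lemma meas_sr_le (hF : F (Set.Ioi (0:ℝ)) = 1) {x : ℝ} (hx0 : 0 ≤ x) (hx1 : x < 1) :
    F {s | Sr F s ≤ x} = ENNReal.ofReal x := by
  set A := {s | Sr F s ≤ x} with hA_def
  by_cases hA : A.Nonempty
  swap
  · rcases eq_or_lt_of_le hx0 with h | h
    · rw [not_nonempty_iff_eq_empty.mp hA, measure_empty, ← h, ENNReal.ofReal_zero]
    · obtain ⟨t, ht⟩ := sr_exists_le (F := F) h
      exact absurd ⟨t, ht⟩ hA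
  have hAsub : A ⊆ Ioi 0 := by
    intro s hs
    by_contra h
    have h1 : Sr F s = 1 := sr_eq_one hF (not_lt.mp (by simpa using h))
    have : Sr F s ≤ x := hs
    linarith
  have hbdd : BddBelow A := ⟨0, fun s hs => (hAsub hs).le⟩
  set a := sInf A with ha_def
  have hup : ∀ s ∈ A, ∀ u, s ≤ u → u ∈ A := fun s hs u hsu => le_trans (sr_anti hsu) hs
  have hIoi : Ioi a ⊆ A := by
    intro s hs
    obtain ⟨s', hs'A, hs's⟩ := exists_lt_of_csInf_lt hA hs
    exact hup s' hs'A s hs's.le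
  have hIci : A ⊆ Ici a := fun s hs => csInf_le hbdd hs
  have heq : F (Ici a) = F (Ioi a) := (measure_congr (Ioi_ae_eq_Ici (a := a))).symm
  have hle : F (Ioi a) ≤ ENNReal.ofReal x := by
    have hU : Ioi a = ⋃ n : ℕ, Ioi (a + 1/(n+1)) := by
      ext s
      simp only [mem_Ioi, mem_iUnion]
      constructor
      · intro hs
        obtain ⟨n, hn⟩ := exists_nat_one_div_lt (sub_pos.mpr hs)
        exact ⟨n, by push_cast at hn ⊢; linarith⟩
      · rintro ⟨n, hn⟩
        have : (0:ℝ) < 1/(n+1) := by positivity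
        linarith
    have hmono : Monotone fun n : ℕ => Ioi (a + 1/(n+1):ℝ) := by
      intro n m hnm
      apply Ioi_subset_Ioi
      have : (1:ℝ)/(m+1) ≤ 1/(n+1) := by
        apply one_div_le_one_div_of_le (by positivity)
        exact_mod_cast by exact_mod_cast Nat.succ_le_succ hnm
      linarith
    rw [hU, hmono.measure_iUnion]
    refine iSup_le fun n => ?_
    have hpos : (0:ℝ) < 1/(n+1) := by positivity
    have hmem : a + 1/(n+1) ∈ A := hIoi (by simp only [mem_Ioi]; linarith)
    calc F (Ioi (a + 1/(n+1))) = ENNReal.ofReal (Sr F (a + 1/(n+1))) := (ofReal_sr _).symm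
      _ ≤ ENNReal.ofReal x := ENNReal.ofReal_le_ofReal hmem
  have hge : ENNReal.ofReal x ≤ F (Ici a) := by
    have hI : Ici a = ⋂ n : ℕ, Ioi (a - 1/(n+1)) := by
      ext s
      simp only [mem_Ici, mem_iInter, mem_Ioi]
      constructor
      · intro hs n
        have : (0:ℝ) < 1/(n+1) := by positivity
        linarith
      · intro h
        by_contra hc
        push_neg at hc
        obtain ⟨n, hn⟩ := exists_nat_one_div_lt (sub_pos.mpr hc)
        have := h n
        push_cast at hn this ⊢
        linarith
    have hanti : Antitone fun n : ℕ => Ioi (a - 1/(n+1):ℝ) := by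
      intro n m hnm
      apply Ioi_subset_Ioi
      have : (1:ℝ)/(m+1) ≤ 1/(n+1) := by
        apply one_div_le_one_div_of_le (by positivity)
        exact_mod_cast by exact_mod_cast Nat.succ_le_succ hnm
      linarith
    rw [hI, hanti.measure_iInter (fun n => measurableSet_Ioi.nullMeasurableSet) ⟨0, measure_ne_top _ _⟩]
    refine le_iInf fun n => ?_
    have hnotmem : a - 1/(n+1) ∉ A := by
      intro hmem
      have h1 := hIci hmem
      simp only [mem_Ici] at h1
      have : (0:ℝ) < 1/(n+1) := by positivity
      linarith
    have hgt : x < Sr F (a - 1/(n+1)) := lt_of_not_ge hnotmem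
    calc ENNReal.ofReal x ≤ ENNReal.ofReal (Sr F (a - 1/(n+1))) := ENNReal.ofReal_le_ofReal hgt.le
      _ = F (Ioi (a - 1/(n+1))) := ofReal_sr _
  have h1 : F A ≤ ENNReal.ofReal x := le_trans (measure_mono hIci) (heq ▸ hle)
  have h2 : ENNReal.ofReal x ≤ F A :=
    hge.trans (by rw [heq]; exact measure_mono hIoi)
  exact le_antisymm h1 h2

lemma map_sr (hF : F (Set.Ioi (0:ℝ)) = 1) :
    F.map (Sr F) = volume.restrict (Ioc (0:ℝ) 1) := by
  have hm : Measurable (Sr F) := sr_meas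
  have : IsProbabilityMeasure (F.map (Sr F)) := Measure.isProbabilityMeasure_map hm.aemeasurable
  refine Measure.ext_of_Iic _ _ (fun x => ?_)
  rw [Measure.map_apply hm measurableSet_Iic, Measure.restrict_apply measurableSet_Iic]
  rcases lt_or_ge x 0 with hx | hx
  · have h1 : Sr F ⁻¹' (Iic x) = ∅ := by
      ext s; simp only [mem_preimage, mem_Iic, mem_empty_iff_false, iff_false, not_le]
      exact hx.trans_le (sr_nonneg s)
    have h2 : Iic x ∩ Ioc (0:ℝ) 1 = ∅ := by
      ext s; simp only [mem_inter_iff, mem_Iic, mem_Ioc, mem_empty_iff_false, iff_false]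
      rintro ⟨h1', h2', _⟩; linarith
    simp [h1, h2]
  rcases lt_or_ge x 1 with hx1 | hx1
  · have h1 : Sr F ⁻¹' (Iic x) = {s | Sr F s ≤ x} := rfl
    rw [h1, meas_sr_le hF hx hx1]
    have h2 : Iic x ∩ Ioc (0:ℝ) 1 = Ioc 0 x := by
      ext s; simp only [mem_inter_iff, mem_Iic, mem_Ioc]
      exact ⟨fun ⟨a, b, c⟩ => ⟨b, a⟩, fun ⟨a, b⟩ => ⟨b, a, by linarith⟩⟩
    rw [h2, Real.volume_Ioc]; norm_num
  · have h1 : Sr F ⁻¹' (Iic x) = univ := eq_univ_of_forall fun s => le_trans (sr_le_one s) hx1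
    have h2 : Iic x ∩ Ioc (0:ℝ) 1 = Ioc 0 1 :=
      inter_eq_self_of_subset_right (fun s hs => le_trans hs.2 hx1)
    rw [h1, h2, Real.volume_Ioc]
    simp

lemma ae_sr_pos (hF : F (Set.Ioi (0:ℝ)) = 1) : ∀ᵐ z ∂F, 0 < Sr F z := by
  have h : {z : ℝ | ¬ 0 < Sr F z} = Sr F ⁻¹' (Iic 0) := by
    ext z; simp [not_lt, le_antisymm_iff, sr_nonneg z]
  rw [ae_iff, h, ← Measure.map_apply sr_meas measurableSet_Iic, map_sr hF,
    Measure.restrict_apply measurableSet_Iic]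
  have : Iic (0:ℝ) ∩ Ioc 0 1 = ∅ := by
    ext s; simp only [mem_inter_iff, mem_Iic, mem_Ioc, mem_empty_iff_false, iff_false]
    rintro ⟨a, b, c⟩; linarith
  simp [this]

lemma ici_inter (hc : 0 < c) : Ici c ∩ Ioc (0:ℝ) 1 = Icc c 1 := by
  ext s; simp only [mem_inter_iff, mem_Ici, mem_Ioc, mem_Icc]
  exact ⟨fun ⟨a, b, d⟩ => ⟨a, d⟩, fun ⟨a, b⟩ => ⟨a, lt_of_lt_of_le hc a, b⟩⟩

lemma meas_preimage_ici (hF : F (Set.Ioi (0:ℝ)) = 1) {c : ℝ} (hc : 0 < c) (hc1 : c ≤ 1) :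
    F (Sr F ⁻¹' (Ici c)) = ENNReal.ofReal (1 - c) := by
  rw [← Measure.map_apply sr_meas measurableSet_Ici, map_sr hF,
    Measure.restrict_apply measurableSet_Ici, ici_inter hc, Real.volume_Icc]

lemma meas_ioc (hF : F (Set.Ioi (0:ℝ)) = 1) {t : ℝ} (ht : 0 < t) :
    F (Ioc 0 t) = ENNReal.ofReal (1 - Sr F t) := by
  have hadd : F (Ioc 0 t) + F (Ioi t) = 1 := by
    rw [← measure_union Ioc_disjoint_Ioi_same measurableSet_Ioi,
      Ioc_union_Ioi_eq_Ioi ht.le, hF]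
  have h2 : ENNReal.ofReal (1 - Sr F t) + F (Ioi t) = 1 := by
    rw [← ofReal_sr t, ← ENNReal.ofReal_add (by linarith [sr_le_one (F := F) t]) (sr_nonneg t)]
    simp
  have h3 := hadd.trans h2.symm
  rwa [ENNReal.add_left_inj (measure_ne_top _ _)] at h3

lemma ioc_ae_preimage (hF : F (Set.Ioi (0:ℝ)) = 1) {t : ℝ} (ht : 0 < t) (hc : 0 < Sr F t) :
    (Ioc 0 t : Set ℝ) =ᵐ[F] Sr F ⁻¹' (Ici (Sr F t)) := by
  set c := Sr F t with hc_def
  have hsub : Ioc 0 t ⊆ Sr F ⁻¹' (Ici c) := fun s hs => sr_anti hs.2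
  have h1 : F (Sr F ⁻¹' (Ici c)) = ENNReal.ofReal (1 - c) := meas_preimage_ici hF hc (sr_le_one t)
  have h2 : F (Ioc 0 t) = ENNReal.ofReal (1 - c) := meas_ioc hF ht
  have hdiff : F (Sr F ⁻¹' (Ici c) \ Ioc 0 t) = 0 := by
    rw [measure_diff hsub measurableSet_Ioc.nullMeasurableSet (measure_ne_top _ _), h1, h2,
      tsub_self]
  rw [Filter.eventuallyEq_set, ae_iff]
  refine measure_mono_null (fun s hs => ?_) hdiff
  simp only [mem_setOf_eq] at hs
  by_cases h : s ∈ Ioc 0 t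
  · exact absurd (iff_of_true h (hsub h)) hs
  · have hp : s ∈ Sr F ⁻¹' (Ici c) := by
      by_contra hp
      exact hs (iff_of_false h hp)
    exact ⟨hp, h⟩

lemma cont_on_inv_sq {c : ℝ} (hc : 0 < c) : ContinuousOn (fun y : ℝ => (y⁻¹) ^ 2) (Icc c 1) :=
  (continuousOn_inv₀.mono (fun y hy => ne_of_gt (lt_of_lt_of_le hc hy.1))).pow 2

lemma key_integrable (hF : F (Set.Ioi (0:ℝ)) = 1) {t : ℝ} (ht : 0 < t) (hc : 0 < Sr F t) :
    IntegrableOn (fun s => (Sr F s)⁻¹ ^ 2) (Ioc 0 t) F := by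
  set c := Sr F t with hcdef
  set g : ℝ → ℝ := (Ici c).indicator (fun y => (y⁻¹) ^ 2) with hg_def
  have hgm : Measurable g := (measurable_inv.pow_const 2).indicator measurableSet_Ici
  have hgi : Integrable g (F.map (Sr F)) := by
    rw [map_sr hF, hg_def, integrable_indicator_iff measurableSet_Ici, IntegrableOn,
      Measure.restrict_restrict measurableSet_Ici, ici_inter hc]
    exact (cont_on_inv_sq hc).integrableOn_compact isCompact_Icc
  have hcomp : Integrable (g ∘ Sr F) F :=
    (integrable_map_measure hgm.aestronglyMeasurable sr_meas.aemeasurable).mp hgi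
  refine (hcomp.restrict (s := Ioc 0 t)).congr ?_
  refine Filter.eventually_of_mem (self_mem_ae_restrict measurableSet_Ioc) (fun s hs => ?_)
  have hm : Sr F s ∈ Ici c := sr_anti hs.2
  simp [hg_def, Function.comp, indicator_of_mem hm]

lemma key_integral (hF : F (Set.Ioi (0:ℝ)) = 1) {t : ℝ} (ht : 0 < t) (hc : 0 < Sr F t) :
    ∫ s in Ioc 0 t, (Sr F s)⁻¹ ^ 2 ∂F = (Sr F t)⁻¹ - 1 := by
  set c := Sr F t with hcdef
  have hc1 : c ≤ 1 := sr_le_one t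
  have h1 : ∫ s in Ioc 0 t, (Sr F s)⁻¹ ^ 2 ∂F
      = ∫ s in Sr F ⁻¹' (Ici c), (Sr F s)⁻¹ ^ 2 ∂F :=
    setIntegral_congr_set (ioc_ae_preimage hF ht hc)
  have h2 : ∫ y in Ici c, (y⁻¹) ^ 2 ∂(F.map (Sr F))
      = ∫ s in Sr F ⁻¹' (Ici c), (Sr F s)⁻¹ ^ 2 ∂F :=
    setIntegral_map measurableSet_Ici (measurable_inv.pow_const 2).aestronglyMeasurable
      sr_meas.aemeasurable
  rw [h1, ← h2, map_sr hF]
  rw [show ((volume.restrict (Ioc (0:ℝ) 1)).restrict (Ici c))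
        = volume.restrict (Icc c 1) by
      rw [Measure.restrict_restrict measurableSet_Ici, ici_inter hc]]
  rw [setIntegral_congr_set (Ioc_ae_eq_Icc (μ := volume) (a := c) (b := 1)).symm,
    ← intervalIntegral.integral_of_le hc1]
  have hfun : ∀ y : ℝ, (y⁻¹:ℝ) ^ 2 = y ^ (-2 : ℤ) := by
    intro y; rw [zpow_neg, inv_pow]; norm_cast
  simp_rw [hfun]
  rw [integral_zpow (Or.inr ⟨by norm_num, by
    rw [Set.uIcc_of_le hc1]; intro h; exact absurd h.1 (not_le.mpr hc)⟩)]
  have hc0 : c ≠ 0 := ne_of_gt hc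
  norm_num
  ring

lemma abs_mul_le_half_sq (a b : ℝ) : |a * b| ≤ (a ^ 2 + b ^ 2) / 2 := by
  rw [abs_mul]
  nlinarith [sq_nonneg (|a| - |b|), sq_abs a, sq_abs b, abs_nonneg a, abs_nonneg b]

lemma G_sm {f' : ℝ → ℝ} (hm : StronglyMeasurable f') :
    StronglyMeasurable (fun s => ∫ u in Ioi s, f' u ∂F) := by
  have hmeas : Measurable fun p : ℝ × ℝ => (Ioi p.1).indicator f' p.2 := by
    have heq : (fun p : ℝ × ℝ => (Ioi p.1).indicator f' p.2)
        = fun p : ℝ × ℝ => {q : ℝ × ℝ | q.1 < q.2}.indicator (fun q => f' q.2) p := by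
      ext p; by_cases h : p.1 < p.2 <;> simp [Set.indicator_apply, h]
    rw [heq]
    exact ((hm.measurable.comp measurable_snd).indicator
      (measurableSet_lt measurable_fst measurable_snd))
  have hk : StronglyMeasurable (fun p : ℝ × ℝ => (Ioi p.1).indicator f' p.2) :=
    hmeas.stronglyMeasurable
  have heq2 : (fun s => ∫ u in Ioi s, f' u ∂F)
      = fun s => ∫ u, (Ioi s).indicator f' u ∂F := by
    ext s; rw [integral_indicator measurableSet_Ioi]
  rw [heq2]
  exact hk.integral_prod_right' (ν := F)

lemma G_bdd {f' : ℝ → ℝ} (hfi : Integrable f' F) :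
    ∀ s, |∫ u in Ioi s, f' u ∂F| ≤ ∫ u, |f' u| ∂F := by
  intro s
  calc |∫ u in Ioi s, f' u ∂F| ≤ ∫ u in Ioi s, |f' u| ∂F := by
        simpa using norm_integral_le_integral_norm (μ := F.restrict (Ioi s)) f'
    _ ≤ ∫ u, |f' u| ∂F := by
        refine integral_mono_measure Measure.restrict_le_self
          (Eventually.of_forall fun u => abs_nonneg _) ?_
        simpa using hfi.norm

set_option maxHeartbeats 2000000 in
lemma main_pointwise (hF : F (Set.Ioi (0:ℝ)) = 1) {f' : ℝ → ℝ} (hm : StronglyMeasurable f')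
    (hfi : Integrable f' F) (hfsq : Integrable (fun s => f' s ^ 2) F)
    {z : ℝ} (hz : 0 < z) (hcz : 0 < Sr F z) :
    ∫ s in Ioc 0 z, (f' s - (Sr F s)⁻¹ * ∫ u in Ioi s, f' u ∂F) * (Sr F s)⁻¹ ∂F
      = (∫ w, f' w ∂F) - (Sr F z)⁻¹ * ∫ u in Ioi z, f' u ∂F := by
  set S := Sr F with hS
  set G : ℝ → ℝ := fun s => ∫ u in Ioi s, f' u ∂F with hG
  set C : ℝ := ∫ u, |f' u| ∂F with hC
  have hGb : ∀ s, |G s| ≤ C := G_bdd hfi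
  have hGm : StronglyMeasurable G := G_sm hm
  have hSm : Measurable S := sr_meas
  have I0 : IntegrableOn (fun s => (S s)⁻¹ ^ 2) (Ioc 0 z) F := key_integrable hF hz hcz
  have I1 : IntegrableOn (fun s => f' s * (S s)⁻¹) (Ioc 0 z) F := by
    have hb : Integrable (fun s => (f' s ^ 2 + ((S s)⁻¹) ^ 2) / 2) (F.restrict (Ioc 0 z)) :=
      ((hfsq.restrict (s := Ioc 0 z)).add I0).div_const 2
    refine hb.mono' ((hm.measurable.mul hSm.inv).aestronglyMeasurable.restrict) ?_
    refine Eventually.of_forall fun s => ?_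
    rw [Real.norm_eq_abs]
    exact abs_mul_le_half_sq (f' s) (S s)⁻¹
  have I2 : IntegrableOn (fun s => G s * (S s)⁻¹ ^ 2) (Ioc 0 z) F := by
    have hb : Integrable (fun s => C * ((S s)⁻¹) ^ 2) (F.restrict (Ioc 0 z)) := I0.const_mul C
    refine hb.mono'
      ((hGm.measurable.mul (hSm.inv.pow_const 2)).aestronglyMeasurable.restrict) ?_
    refine Eventually.of_forall fun s => ?_
    have h1 : (0:ℝ) ≤ ((S s)⁻¹) ^ 2 := sq_nonneg _
    calc ‖G s * (S s)⁻¹ ^ 2‖ = |G s| * (S s)⁻¹ ^ 2 := by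
          rw [Real.norm_eq_abs, abs_mul, abs_of_nonneg h1]
      _ ≤ C * (S s)⁻¹ ^ 2 := mul_le_mul_of_nonneg_right (hGb s) h1
  have split1 : ∫ s in Ioc 0 z, (f' s - (S s)⁻¹ * G s) * (S s)⁻¹ ∂F
      = (∫ s in Ioc 0 z, f' s * (S s)⁻¹ ∂F) - ∫ s in Ioc 0 z, G s * (S s)⁻¹ ^ 2 ∂F := by
    rw [← integral_sub I1 I2]
    exact setIntegral_congr_fun measurableSet_Ioc (fun s _ => by ring)
  have fub : ∫ s in Ioc 0 z, G s * (S s)⁻¹ ^ 2 ∂F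
      = ∫ u, f' u * (∫ s in Ioc 0 z ∩ Iio u, (S s)⁻¹ ^ 2 ∂F) ∂F := by
    set ψ : ℝ → ℝ := (Ioc 0 z).indicator (fun s => (S s)⁻¹ ^ 2) with hψ
    have hψm : Measurable ψ := (hSm.inv.pow_const 2).indicator measurableSet_Ioc
    have hψ_nonneg : ∀ s, 0 ≤ ψ s := fun s => indicator_nonneg (fun s _ => sq_nonneg _) s
    have hψ_int : Integrable ψ F := (integrable_indicator_iff measurableSet_Ioc).mpr I0
    set H : ℝ × ℝ → ℝ := fun p => ψ p.1 * (Ioi p.1).indicator f' p.2 with hH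
    have hind_m : Measurable fun p : ℝ × ℝ => (Ioi p.1).indicator f' p.2 := by
      have heq : (fun p : ℝ × ℝ => (Ioi p.1).indicator f' p.2)
          = fun p : ℝ × ℝ => {q : ℝ × ℝ | q.1 < q.2}.indicator (fun q => f' q.2) p := by
        ext p; by_cases h : p.1 < p.2 <;> simp [Set.indicator_apply, h]
      rw [heq]
      exact (hm.measurable.comp measurable_snd).indicator
        (measurableSet_lt measurable_fst measurable_snd)
    have hHm : Measurable H := (hψm.comp measurable_fst).mul hind_m
    have hnorm_int : ∀ s : ℝ, ∫ u, ‖(Ioi s).indicator f' u‖ ∂F ≤ C := by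
      intro s
      have h1 : ∫ u, ‖(Ioi s).indicator f' u‖ ∂F = ∫ u in Ioi s, |f' u| ∂F := by
        rw [← integral_indicator measurableSet_Ioi]
        congr 1; funext u
        rw [norm_indicator_eq_indicator_norm]
        simp [Real.norm_eq_abs]
      rw [h1, hC]
      refine integral_mono_measure Measure.restrict_le_self
        (Eventually.of_forall fun u => abs_nonneg _) ?_
      simpa using hfi.norm
    have hH_int : Integrable H (F.prod F) := by
      refine (integrable_prod_iff hHm.aestronglyMeasurable).mpr ⟨?_, ?_⟩
      · exact Eventually.of_forall fun s =>
          (hfi.indicator measurableSet_Ioi).const_mul (ψ s)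
      · have hpt : ∀ s, (∫ u, ‖H (s, u)‖ ∂F) = ψ s * ∫ u, ‖(Ioi s).indicator f' u‖ ∂F := by
          intro s
          rw [← integral_const_mul]
          congr 1; funext u
          simp only [hH, Real.norm_eq_abs, abs_mul, abs_of_nonneg (hψ_nonneg s)]
        have hb : Integrable (fun s => ψ s * C) F := hψ_int.mul_const C
        refine hb.mono'
          ((hHm.norm.stronglyMeasurable.integral_prod_right' (ν := F)).aestronglyMeasurable) ?_
        refine Eventually.of_forall fun s => ?_
        have h0 : 0 ≤ ∫ u, ‖(Ioi s).indicator f' u‖ ∂F := integral_nonneg fun u => norm_nonneg _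
        rw [Real.norm_eq_abs, hpt s, abs_of_nonneg (mul_nonneg (hψ_nonneg s) h0)]
        exact mul_le_mul_of_nonneg_left (hnorm_int s) (hψ_nonneg s)
    have swap : ∫ s, (∫ u, H (s, u) ∂F) ∂F = ∫ u, (∫ s, H (s, u) ∂F) ∂F :=
      integral_integral_swap hH_int
    have lhs_eq : ∫ s, (∫ u, H (s, u) ∂F) ∂F = ∫ s in Ioc 0 z, G s * (S s)⁻¹ ^ 2 ∂F := by
      have h1 : ∀ s : ℝ, (∫ u, H (s, u) ∂F) = ψ s * G s := by
        intro s
        rw [hH]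
        simp only
        rw [integral_const_mul, integral_indicator measurableSet_Ioi]
      simp_rw [h1]
      have h2 : ∀ s : ℝ, ψ s * G s = (Ioc 0 z).indicator (fun s => G s * (S s)⁻¹ ^ 2) s := by
        intro s
        by_cases hs : s ∈ Ioc 0 z
        · rw [hψ, indicator_of_mem hs, indicator_of_mem hs, mul_comm]
        · rw [hψ, indicator_of_notMem hs, indicator_of_notMem hs, zero_mul]
      simp_rw [h2]
      exact integral_indicator measurableSet_Ioc
    have rhs_eq : ∫ u, (∫ s, H (s, u) ∂F) ∂F
        = ∫ u, f' u * (∫ s in Ioc 0 z ∩ Iio u, (S s)⁻¹ ^ 2 ∂F) ∂F := by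
      congr 1; funext u
      have h1 : ∀ s : ℝ, H (s, u) = f' u * ((Ioc 0 z ∩ Iio u).indicator (fun s => (S s)⁻¹ ^ 2) s) := by
        intro s
        rw [hH, hψ]
        simp only [Set.indicator_apply, mem_Ioc, mem_Ioi, mem_inter_iff, mem_Iio]
        by_cases h2 : 0 < s ∧ s ≤ z <;> by_cases h3 : s < u <;>
          simp [h2, h3, mul_comm]
      simp_rw [h1]
      rw [integral_const_mul, integral_indicator (measurableSet_Ioc.inter measurableSet_Iio)]
    rw [← lhs_eq, swap, rhs_eq]
  have huniv : (Ioi (0:ℝ) : Set ℝ) =ᵐ[F] univ := by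
    rw [ae_eq_univ, compl_Ioi]; exact iic_null hF
  have Wval : ∀ᵐ u ∂F, f' u * (∫ s in Ioc 0 z ∩ Iio u, (S s)⁻¹ ^ 2 ∂F)
      = f' u * ((S (min u z))⁻¹ - 1) := by
    filter_upwards [ae_pos hF, ae_sr_pos hF] with u hu hSu
    congr 1
    rcases le_or_gt u z with huz | huz
    · rw [min_eq_left huz]
      have hset : Ioc 0 z ∩ Iio u = Ioo 0 u := by
        ext s; simp only [mem_inter_iff, mem_Ioc, mem_Iio, mem_Ioo]
        exact ⟨fun ⟨⟨a, _⟩, c⟩ => ⟨a, c⟩, fun ⟨a, c⟩ => ⟨⟨a, le_trans c.le huz⟩, c⟩⟩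
      rw [hset, setIntegral_congr_set (Ioo_ae_eq_Ioc (μ := F) (a := (0:ℝ)) (b := u))]
      exact key_integral hF hu hSu
    · rw [min_eq_right huz.le]
      have hset : Ioc 0 z ∩ Iio u = Ioc 0 z :=
        inter_eq_self_of_subset_left (fun s hs => lt_of_le_of_lt hs.2 huz)
      rw [hset]
      exact key_integral hF hz hcz
  have hminpos : ∀ u : ℝ, 0 < S (min u z) := fun u => lt_of_lt_of_le hcz (sr_anti (min_le_right u z))
  have hw_nonneg : ∀ u : ℝ, 0 ≤ (S (min u z))⁻¹ - 1 := fun u => by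
    have h1 : S (min u z) ≤ 1 := sr_le_one _
    have := one_le_inv_iff₀.mpr ⟨hminpos u, h1⟩
    linarith [this]
  have hw_le : ∀ u : ℝ, (S (min u z))⁻¹ - 1 ≤ (S z)⁻¹ - 1 := fun u => by
    have h1 : S z ≤ S (min u z) := sr_anti (min_le_right u z)
    have := inv_anti₀ hcz h1
    linarith [this]
  have hφm : AEStronglyMeasurable (fun u => f' u * ((S (min u z))⁻¹ - 1)) F := by
    have hmin : Measurable fun u : ℝ => S (min u z) :=
      hSm.comp (measurable_id.min measurable_const)
    exact (hm.measurable.mul (hmin.inv.sub measurable_const)).aestronglyMeasurable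
  have Iφ : Integrable (fun u => f' u * ((S (min u z))⁻¹ - 1)) F := by
    have hb : Integrable (fun u => |f' u| * ((S z)⁻¹ - 1)) F := hfi.abs.mul_const _
    refine hb.mono' hφm ?_
    refine Eventually.of_forall fun u => ?_
    rw [Real.norm_eq_abs, abs_mul, abs_of_nonneg (hw_nonneg u)]
    exact mul_le_mul_of_nonneg_left (hw_le u) (abs_nonneg _)
  have step5 : ∫ u, f' u * ((S (min u z))⁻¹ - 1) ∂F
      = (∫ u in Ioc 0 z, f' u * ((S u)⁻¹ - 1) ∂F) + ((S z)⁻¹ - 1) * G z := by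
    have h1 : ∫ u, f' u * ((S (min u z))⁻¹ - 1) ∂F
        = ∫ u in Ioi 0, f' u * ((S (min u z))⁻¹ - 1) ∂F := by
      rw [setIntegral_congr_set huniv, setIntegral_univ]
    rw [h1, ← Ioc_union_Ioi_eq_Ioi hz.le,
      setIntegral_union Ioc_disjoint_Ioi_same measurableSet_Ioi
        Iφ.integrableOn Iφ.integrableOn]
    congr 1
    · refine setIntegral_congr_fun measurableSet_Ioc fun u hu => ?_
      rw [min_eq_left hu.2]
    · have h2 : ∫ u in Ioi z, f' u * ((S (min u z))⁻¹ - 1) ∂F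
          = ∫ u in Ioi z, f' u * ((S z)⁻¹ - 1) ∂F := by
        refine setIntegral_congr_fun measurableSet_Ioi fun u hu => ?_
        rw [min_eq_right (le_of_lt hu)]
      rw [h2, integral_mul_const, mul_comm]
  have step6 : ∫ u in Ioc 0 z, f' u * ((S u)⁻¹ - 1) ∂F
      = (∫ s in Ioc 0 z, f' s * (S s)⁻¹ ∂F) - ∫ u in Ioc 0 z, f' u ∂F := by
    rw [← integral_sub I1 hfi.integrableOn]
    exact setIntegral_congr_fun measurableSet_Ioc fun s _ => by ring
  have step7 : (∫ u in Ioc 0 z, f' u ∂F) + G z = ∫ w, f' w ∂F := by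
    have h1 : ∫ w, f' w ∂F = ∫ u in Ioi 0, f' u ∂F := by
      rw [setIntegral_congr_set huniv, setIntegral_univ]
    rw [h1, ← Ioc_union_Ioi_eq_Ioi hz.le,
      setIntegral_union Ioc_disjoint_Ioi_same measurableSet_Ioi
        hfi.integrableOn hfi.integrableOn]
  rw [split1, fub, integral_congr_ae Wval, step5, step6]
  have hGz : G z = ∫ u in Ioi z, f' u ∂F := rfl
  rw [← hGz]
  linarith [step7]

end BackAdv

open BackAdv in
/-- Applying the backward operator after the advanced operator recenters:
`B(Af)(z) = f(z) - ∫ f dF` for `F`-almost every `z`; in particular, if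
`∫ f dF = 0` then `B(Af) = f` `F`-almost everywhere. Here
`(Af)(z) = f(z) - S(z)⁻¹ ∫_{(z,∞)} f dF` and
`(Bf)(z) = f(z) - ∫_{(0,z]} f(s) S(s)⁻¹ dF(s)`, with `S(t) = F((t,∞))`. -/
theorem backward_advanced_recenters (F : Measure ℝ) [IsProbabilityMeasure F]
    [NullSingletonClass F] (hF : F (Set.Ioi (0 : ℝ)) = 1)
    (f : ℝ → ℝ) (hf : MemLp f 2 F) :
    (∀ᵐ z ∂F,
      (f z - ((F (Set.Ioi z)).toReal)⁻¹ * ∫ u in Set.Ioi z, f u ∂F)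
        - ∫ s in Set.Ioc 0 z,
            (f s - ((F (Set.Ioi s)).toReal)⁻¹ * ∫ u in Set.Ioi s, f u ∂F)
              * ((F (Set.Ioi s)).toReal)⁻¹ ∂F
      = f z - ∫ w, f w ∂F) ∧
    ((∫ w, f w ∂F) = 0 →
      ∀ᵐ z ∂F,
        (f z - ((F (Set.Ioi z)).toReal)⁻¹ * ∫ u in Set.Ioi z, f u ∂F)
          - ∫ s in Set.Ioc 0 z,
              (f s - ((F (Set.Ioi s)).toReal)⁻¹ * ∫ u in Set.Ioi s, f u ∂F)
                * ((F (Set.Ioi s)).toReal)⁻¹ ∂F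
        = f z) := by
  have hSr : ∀ t : ℝ, Sr F t = (F (Set.Ioi t)).toReal := fun _ => rfl
  have key : ∀ᵐ z ∂F,
      (f z - ((F (Set.Ioi z)).toReal)⁻¹ * ∫ u in Set.Ioi z, f u ∂F)
        - ∫ s in Set.Ioc 0 z,
            (f s - ((F (Set.Ioi s)).toReal)⁻¹ * ∫ u in Set.Ioi s, f u ∂F)
              * ((F (Set.Ioi s)).toReal)⁻¹ ∂F
      = f z - ∫ w, f w ∂F := by
    classical
    set f' := hf.1.mk f with hf'def
    have hmm : StronglyMeasurable f' := hf.1.stronglyMeasurable_mk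
    have hff' : f =ᵐ[F] f' := hf.1.ae_eq_mk
    have hf2 : MemLp f' 2 F := hf.ae_eq hff'
    have hfi' : Integrable f' F := hf2.integrable one_le_two
    have hfsq : Integrable (fun s => f' s ^ 2) F := hf2.integrable_sq
    have hGeq : ∀ s : ℝ, ∫ u in Set.Ioi s, f u ∂F = ∫ u in Set.Ioi s, f' u ∂F := fun s =>
      integral_congr_ae (ae_restrict_of_ae hff')
    have hTot : ∫ w, f w ∂F = ∫ w, f' w ∂F := integral_congr_ae hff'
    have hBeq : ∀ z : ℝ,
        ∫ s in Set.Ioc 0 z,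
            (f s - ((F (Set.Ioi s)).toReal)⁻¹ * ∫ u in Set.Ioi s, f u ∂F)
              * ((F (Set.Ioi s)).toReal)⁻¹ ∂F
        = ∫ s in Set.Ioc 0 z,
            (f' s - (Sr F s)⁻¹ * ∫ u in Set.Ioi s, f' u ∂F) * (Sr F s)⁻¹ ∂F := by
      intro z
      refine integral_congr_ae ?_
      filter_upwards [ae_restrict_of_ae hff'] with s hs
      rw [hs, hGeq s, hSr]
    filter_upwards [ae_pos hF, ae_sr_pos hF, hff'] with z hz hcz hfz
    rw [hBeq z, hGeq z, hTot, main_pointwise hF hmm hfi' hfsq hz hcz, hfz, ← hSr z]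
    ring
  refine ⟨key, fun h0 => ?_⟩
  filter_upwards [key] with z hz
  rw [hz, h0, sub_zero]
end

section
/- Let F be an atomless Borel probability measure on ℝ and S(t) := F((t,∞)) its survival function. For every t ∈ ℝ with S(t) > 0, one has ∫_{(−∞,t]} S(s)⁻² dF(s) = S(t)⁻¹ − 1. -/
open MeasureTheory Set Filter Topology
open scoped ENNReal

section Aux

variable (F : Measure ℝ) [IsProbabilityMeasure F] [NullSingletonClass F]

private noncomputable def Sv (s : ℝ) : ℝ := (F (Ioi s)).toReal

variable {F}

private lemma Sv_anti : Antitone (Sv F) := fun _ _ hab =>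
  ENNReal.toReal_mono (measure_ne_top F _) (measure_mono (Ioi_subset_Ioi hab))

private lemma Sv_meas : Measurable (Sv F) := (Sv_anti).measurable

private lemma Sv_nonneg (s : ℝ) : 0 ≤ Sv F s := ENNReal.toReal_nonneg

private lemma Sv_le_one (s : ℝ) : Sv F s ≤ 1 := by
  have := ENNReal.toReal_mono (by simp) (prob_le_one (μ := F) (s := Ioi s))
  simpa [Sv] using this

private lemma ofReal_Sv (s : ℝ) : ENNReal.ofReal (Sv F s) = F (Ioi s) :=
  ENNReal.ofReal_toReal (measure_ne_top F _)

private lemma one_div_succ_anti : ∀ m n : ℕ, m ≤ n → (1 : ℝ) / (n + 1) ≤ 1 / (m + 1) := by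
  intro m n hmn
  apply one_div_le_one_div_of_le (by positivity)
  have : (m : ℝ) ≤ n := Nat.cast_le.mpr hmn
  linarith

/-- right continuity bound -/
private lemma Sv_right_le {c : ℝ} {v : ℝ≥0∞} (h : ∀ s, c < s → F (Ioi s) ≤ v) :
    F (Ioi c) ≤ v := by
  have hmono : Monotone (fun n : ℕ => Ioi (c + 1 / (n + 1) : ℝ)) := fun m n hmn =>
    Ioi_subset_Ioi (by linarith [one_div_succ_anti m n hmn])
  have hU : (⋃ n : ℕ, Ioi (c + 1 / (n + 1) : ℝ)) = Ioi c := by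
    apply Subset.antisymm
    · exact iUnion_subset fun n => Ioi_subset_Ioi (le_add_of_nonneg_right (by positivity))
    · intro x hx
      obtain ⟨n, hn⟩ := exists_nat_one_div_lt (show (0:ℝ) < x - c from sub_pos.mpr hx)
      refine mem_iUnion.mpr ⟨n, ?_⟩
      simp only [mem_Ioi]
      have : (1:ℝ) / (n + 1) < x - c := hn
      linarith
  have := tendsto_measure_iUnion_atTop (μ := F) hmono
  rw [hU] at this
  exact le_of_tendsto this (Eventually.of_forall fun n => h _ (lt_add_of_pos_right _ (by positivity)))

/-- left continuity bound -/
private lemma Sv_left_ge {c : ℝ} {v : ℝ≥0∞} (h : ∀ s, s < c → v ≤ F (Ioi s)) :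
    v ≤ F (Ici c) := by
  have hanti : Antitone (fun n : ℕ => Ioi (c - 1 / (n + 1) : ℝ)) := fun m n hmn =>
    Ioi_subset_Ioi (by linarith [one_div_succ_anti m n hmn])
  have hI : (⋂ n : ℕ, Ioi (c - 1 / (n + 1) : ℝ)) = Ici c := by
    apply Subset.antisymm
    · intro x hx
      by_contra hxc
      simp only [mem_Ici, not_le] at hxc
      obtain ⟨n, hn⟩ := exists_nat_one_div_lt (sub_pos.mpr hxc)
      have h1 : (1:ℝ) / (n + 1) < c - x := hn
      have h2 := mem_iInter.mp hx n
      simp only [mem_Ioi] at h2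
      linarith
    · intro x hx
      refine mem_iInter.mpr fun n => ?_
      have h1 : (0:ℝ) < 1 / (n + 1) := by positivity
      have : c - 1 / (n + 1) < c := by linarith
      exact lt_of_lt_of_le this hx
  have := tendsto_measure_iInter_atTop (μ := F)
    (fun n => measurableSet_Ioi.nullMeasurableSet) hanti ⟨0, measure_ne_top F _⟩
  rw [hI] at this
  exact ge_of_tendsto this (Eventually.of_forall fun n => h _ (by linarith [@one_div_succ_anti n n le_rfl, show (0:ℝ) < 1/(n+1) by positivity]))

/-- `F(Ioi s) → 0` at `atTop`. -/
private lemma Sv_tendsto_zero : Tendsto (fun s : ℝ => F (Ioi s)) atTop (𝓝 0) := by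
  have h := tendsto_measure_iInter_atTop (μ := F) (s := fun s : ℝ => Ioi s)
    (fun n => measurableSet_Ioi.nullMeasurableSet)
    (fun a b hab => Ioi_subset_Ioi hab) ⟨0, measure_ne_top F _⟩
  have hI : (⋂ s : ℝ, Ioi s) = (∅ : Set ℝ) := by
    ext x; simp only [mem_iInter, mem_Ioi, mem_empty_iff_false, iff_false, not_forall, not_lt]
    exact ⟨x, le_rfl⟩
  rw [hI, measure_empty] at h
  exact h

/-- `F(Ioi s) → 1` at `atBot`. -/
private lemma Sv_tendsto_one : Tendsto (fun s : ℝ => F (Ioi s)) atBot (𝓝 1) := by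
  have h := tendsto_measure_iUnion_atTop (μ := F) (s := fun s : ℝ => Ioi (-s))
    (fun a b hab => Ioi_subset_Ioi (neg_le_neg hab))
  have hI : (⋃ s : ℝ, Ioi (-s)) = (univ : Set ℝ) := by
    ext x; simp only [mem_iUnion, mem_Ioi, mem_univ, iff_true]
    exact ⟨-(x - 1), by norm_num⟩
  rw [hI, measure_univ] at h
  have h2 := h.comp (tendsto_neg_atBot_atTop : Tendsto (fun x : ℝ => -x) atBot atTop)
  simpa [Function.comp_def] using h2

end Aux

section Main

variable {F : Measure ℝ} [IsProbabilityMeasure F] [NullSingletonClass F]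

private lemma map_Sv : F.map (Sv F) = volume.restrict (Ioc (0:ℝ) 1) := by
  apply Measure.ext_of_Iic
  intro u
  rw [Measure.map_apply Sv_meas measurableSet_Iic,
      Measure.restrict_apply measurableSet_Iic]
  rcases lt_or_ge u 0 with hu | hu
  · have h1 : Sv F ⁻¹' Iic u = ∅ :=
      eq_empty_of_forall_notMem fun s hs => absurd (le_trans (Sv_nonneg s) hs) (not_le.mpr hu)
    have h2 : Iic u ∩ Ioc (0:ℝ) 1 = ∅ :=
      eq_empty_of_forall_notMem fun x ⟨hx1, hx2, _⟩ => absurd (lt_of_lt_of_le hx2 hx1)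
        (not_lt.mpr hu.le)
    rw [h1, h2, measure_empty, measure_empty]
  rcases le_or_gt 1 u with hu1 | hu1
  · have h1 : Sv F ⁻¹' Iic u = univ :=
      eq_univ_of_forall fun s => le_trans (Sv_le_one s) hu1
    have h2 : Iic u ∩ Ioc (0:ℝ) 1 = Ioc 0 1 :=
      inter_eq_self_of_subset_right fun x hx => le_trans hx.2 hu1
    rw [h1, h2, measure_univ, Real.volume_Ioc]
    norm_num
  -- now 0 ≤ u < 1
  have hRHS : Iic u ∩ Ioc (0:ℝ) 1 = Ioc 0 u := by
    ext x
    simp only [mem_inter_iff, mem_Iic, mem_Ioc]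
    exact ⟨fun ⟨h1, h2, _⟩ => ⟨h2, h1⟩, fun ⟨h1, h2⟩ => ⟨h2, h1, h2.trans hu1.le⟩⟩
  rw [hRHS, Real.volume_Ioc, sub_zero]
  rcases eq_or_lt_of_le hu with hu0 | hu0
  · -- u = 0
    rw [← hu0, ENNReal.ofReal_zero]
    -- show F {s | Sv F s ≤ 0} = 0
    have hBset : Sv F ⁻¹' Iic (0:ℝ) = {s | Sv F s = 0} := by
      ext s; simp only [mem_preimage, mem_Iic, mem_setOf_eq]
      exact ⟨fun h => le_antisymm h (Sv_nonneg s), fun h => h.le⟩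
    rw [hBset]
    set B := {s | Sv F s = 0} with hB
    rcases eq_empty_or_nonempty B with hBe | hBne
    · rw [hBe]; exact measure_empty
    -- B nonempty
    have hs0 : ∃ s₀ : ℝ, (0:ℝ≥0∞) < F (Ioi s₀) := by
      have h := (Sv_tendsto_one (F := F)).eventually
        (eventually_gt_nhds (by norm_num : (0:ℝ≥0∞) < 1))
      obtain ⟨s₀, hs₀⟩ := h.exists
      exact ⟨s₀, hs₀⟩
    obtain ⟨s₀, hs₀⟩ := hs0
    have hSvs₀ : 0 < Sv F s₀ := ENNReal.toReal_pos hs₀.ne' (measure_ne_top F _)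
    have hbdd : BddBelow B := by
      refine ⟨s₀, fun s hs => ?_⟩
      by_contra hss
      push_neg at hss
      have : Sv F s₀ ≤ Sv F s := Sv_anti hss.le
      rw [hs] at this
      exact absurd this (not_le.mpr hSvs₀)
    set b := sInf B with hb
    have hIoib : F (Ioi b) ≤ 0 := by
      refine Sv_right_le fun s hs => ?_
      obtain ⟨s', hs'B, hs's⟩ := exists_lt_of_csInf_lt hBne hs
      have h1 : Sv F s ≤ Sv F s' := Sv_anti hs's.le
      rw [hs'B] at h1
      have h2 : Sv F s = 0 := le_antisymm h1 (Sv_nonneg s)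
      rw [← ofReal_Sv s, h2, ENNReal.ofReal_zero]
    have hBsub : B ⊆ Ici b := fun s hs => csInf_le hbdd hs
    have hIci : F (Ici b) = F (Ioi b) :=
      (measure_congr (Ioi_ae_eq_Ici' (measure_singleton b))).symm
    exact le_antisymm (calc F B ≤ F (Ici b) := measure_mono hBsub
      _ = F (Ioi b) := hIci
      _ ≤ 0 := hIoib) (zero_le)
  · -- 0 < u < 1
    set A := Sv F ⁻¹' Ioi u with hA
    have hApre : Sv F ⁻¹' Iic u = Aᶜ := by
      rw [hA, ← preimage_compl, compl_Ioi]
    have hAne : A.Nonempty := by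
      have h := (Sv_tendsto_one (F := F)).eventually
        (eventually_gt_nhds (by
          rw [← ENNReal.ofReal_one]
          exact ENNReal.ofReal_lt_ofReal_iff_of_nonneg hu |>.mpr hu1))
      obtain ⟨s, hs⟩ := h.exists
      refine ⟨s, ?_⟩
      have := ENNReal.toReal_strict_mono (measure_ne_top F _) hs
      rwa [ENNReal.toReal_ofReal hu] at this
    have hAbdd : BddAbove A := by
      have h := (Sv_tendsto_zero (F := F)).eventually
        (eventually_lt_nhds (ENNReal.ofReal_pos.mpr hu0))
      obtain ⟨s₁, hs₁⟩ := (h.and (eventually_ge_atTop (0:ℝ))).exists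
      refine ⟨s₁, fun s hs => ?_⟩
      by_contra hss
      push_neg at hss
      have h1 : Sv F s ≤ Sv F s₁ := Sv_anti hss.le
      have h2 : Sv F s₁ < u := by
        have := ENNReal.toReal_strict_mono ENNReal.ofReal_ne_top hs₁.1
        rwa [ENNReal.toReal_ofReal hu] at this
      exact absurd (mem_preimage.mp hs) (not_lt.mpr (h1.trans h2.le))
    set c := sSup A with hc
    have hlow : Iio c ⊆ A := by
      intro s hs
      obtain ⟨a', ha'A, hsa'⟩ := exists_lt_of_lt_csSup hAne hs
      have : Sv F a' ≤ Sv F s := Sv_anti hsa'.le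
      exact lt_of_lt_of_le (mem_preimage.mp ha'A) this
    have key1 : F (Ioi c) ≤ ENNReal.ofReal u := by
      refine Sv_right_le fun s hs => ?_
      have hsA : s ∉ A := fun h => absurd (le_csSup hAbdd h) (not_le.mpr hs)
      have : Sv F s ≤ u := not_lt.mp fun h => hsA h
      rw [← ofReal_Sv s]
      exact ENNReal.ofReal_le_ofReal this
    have key2 : ENNReal.ofReal u ≤ F (Ici c) := by
      refine Sv_left_ge fun s hs => ?_
      have := hlow hs
      rw [← ofReal_Sv s]
      exact ENNReal.ofReal_le_ofReal (mem_preimage.mp this).le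
    have hIci : F (Ici c) = F (Ioi c) :=
      (measure_congr (Ioi_ae_eq_Ici' (measure_singleton c))).symm
    have hIoic : F (Ioi c) = ENNReal.ofReal u := le_antisymm key1 (hIci ▸ key2)
    have hIio : F (Iio c) = 1 - ENNReal.ofReal u := by
      have := measure_compl (measurableSet_Ici (a := c)) (measure_ne_top F _)
      rw [compl_Ici] at this
      rw [this, measure_univ, hIci, hIoic]
    have hFA : F A = 1 - ENNReal.ofReal u := by
      refine le_antisymm ?_ ?_
      · calc F A ≤ F (Iic c) := measure_mono fun s hs => le_csSup hAbdd hs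
          _ = F (Iio c) := (measure_congr (Iio_ae_eq_Iic' (measure_singleton c))).symm
          _ = 1 - ENNReal.ofReal u := hIio
      · rw [← hIio]; exact measure_mono hlow
    have hcompl : F Aᶜ = 1 - F A := by
      have := measure_compl (Sv_meas measurableSet_Ioi : MeasurableSet A) (measure_ne_top F _)
      rw [this, measure_univ]
    rw [hApre, hcompl, hFA, ENNReal.sub_sub_cancel ENNReal.one_ne_top]
    exact ENNReal.ofReal_le_one.mpr hu1.le

end Main

/-- For an atomless Borel probability measure `F` on `ℝ` with survival function
`S(t) = F((t,∞))`, whenever `S(t) > 0` one has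
`∫_{(-∞,t]} S(s)⁻² dF(s) = S(t)⁻¹ - 1`. -/
theorem integral_inv_sq_survival (F : Measure ℝ) [IsProbabilityMeasure F]
    [NullSingletonClass F] (t : ℝ) (ht : 0 < (F (Set.Ioi t)).toReal) :
    ∫ s in Set.Iic t, (((F (Set.Ioi s)).toReal) ^ 2)⁻¹ ∂F
      = ((F (Set.Ioi t)).toReal)⁻¹ - 1 := by
  set a : ℝ := Sv F t with ha
  have ha0 : 0 < a := ht
  have ha1 : a ≤ 1 := Sv_le_one t
  -- step 1: the sets `Iic t` and `Sv F ⁻¹' Ici a` agree a.e.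
  have hnull : F (Sv F ⁻¹' {a}) = 0 := by
    have h1 : F.map (Sv F) {a} = F (Sv F ⁻¹' {a}) :=
      Measure.map_apply Sv_meas (measurableSet_singleton a)
    rw [← h1, map_Sv, Measure.restrict_apply (measurableSet_singleton a)]
    exact measure_mono_null inter_subset_left (measure_singleton a)
  have hae : (Iic t : Set ℝ) =ᵐ[F] Sv F ⁻¹' (Ici a) := by
    rw [ae_eq_set]
    constructor
    · have : (Iic t : Set ℝ) \ (Sv F ⁻¹' Ici a) = ∅ := by
        rw [diff_eq_empty]
        exact fun s hs => Sv_anti hs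
      rw [this]; exact measure_empty
    · refine measure_mono_null ?_ hnull
      rintro s ⟨hs1, hs2⟩
      have h1 : Sv F s ≤ a := Sv_anti (not_le.mp (by simpa using hs2)).le
      exact le_antisymm h1 (mem_Ici.mp hs1)
  -- step 2-3: transfer to the pushforward measure
  have hmf : AEStronglyMeasurable (fun x : ℝ => ((x : ℝ) ^ 2)⁻¹) (F.map (Sv F)) :=
    ((measurable_id.pow_const 2).inv).aestronglyMeasurable
  calc ∫ s in Set.Iic t, (((F (Set.Ioi s)).toReal) ^ 2)⁻¹ ∂F
      = ∫ s in Sv F ⁻¹' (Ici a), ((Sv F s) ^ 2)⁻¹ ∂F := setIntegral_congr_set hae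
    _ = ∫ x in Ici a, (x ^ 2)⁻¹ ∂(F.map (Sv F)) :=
        (setIntegral_map measurableSet_Ici hmf Sv_meas.aemeasurable).symm
    _ = ∫ x in Ici a, (x ^ 2)⁻¹ ∂(volume.restrict (Ioc (0:ℝ) 1)) := by rw [map_Sv]
    _ = ∫ x in Ici a ∩ Ioc (0:ℝ) 1, (x ^ 2)⁻¹ := by
        rw [Measure.restrict_restrict measurableSet_Ici]
    _ = ∫ x in Icc a 1, (x ^ 2)⁻¹ := by
        have hset : Ici a ∩ Ioc (0:ℝ) 1 = Icc a 1 := by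
          ext x
          simp only [mem_inter_iff, mem_Ici, mem_Ioc, mem_Icc]
          exact ⟨fun ⟨h1, _, h3⟩ => ⟨h1, h3⟩, fun ⟨h1, h2⟩ => ⟨h1, lt_of_lt_of_le ha0 h1, h2⟩⟩
        rw [hset]
    _ = ∫ x in a..1, (x ^ 2)⁻¹ := by
        rw [intervalIntegral.integral_of_le ha1, integral_Icc_eq_integral_Ioc]
    _ = ∫ x in a..1, x ^ (-2 : ℤ) := by
        apply intervalIntegral.integral_congr
        intro x hx
        show (x ^ 2)⁻¹ = x ^ (-2 : ℤ)
        rw [zpow_neg, zpow_two, sq]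
    _ = a⁻¹ - 1 := by
        have h0 : (0:ℝ) ∉ Set.uIcc a 1 := by
          rw [uIcc_of_le ha1]
          exact fun h => absurd h.1 (not_le.mpr ha0)
        rw [integral_zpow (Or.inr ⟨by norm_num, h0⟩)]
        norm_num
        ring
end

section
/- For every f : ℝ → ℝ with f ∈ L²(F) and every z ∈ ℝ with S(z) > 0, one has ∫_{(z,∞)} (Bf)(s) dF(s) = −S(z) · ∫_{(0,z]} f(s)·S(s)⁻¹ dF(s). -/
open MeasureTheory Set

private theorem aux_backward_tail (F : Measure ℝ) [IsProbabilityMeasure F]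
    [NullSingletonClass F] (hF : F (Set.Ioi (0 : ℝ)) = 1)
    (f : ℝ → ℝ) (hmf : Measurable f) (hf1 : Integrable f F)
    (z : ℝ) (hz : 0 < (F (Set.Ioi z)).toReal) :
    ∫ s in Set.Ioi z,
        (f s - ∫ u in Set.Ioc 0 s, f u * ((F (Set.Ioi u)).toReal)⁻¹ ∂F) ∂F
      = -(F (Set.Ioi z)).toReal * ∫ s in Set.Ioc 0 z, f s * ((F (Set.Ioi s)).toReal)⁻¹ ∂F := by
  set S : ℝ → ℝ := fun t => (F (Set.Ioi t)).toReal with hSdef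
  set g : ℝ → ℝ := fun u => f u * (S u)⁻¹ with hgdef
  have hfin : ∀ s : Set ℝ, F s ≠ ⊤ := fun s => measure_ne_top F s
  have hS_anti : Antitone S := fun a b hab =>
    ENNReal.toReal_mono (hfin _) (measure_mono (Ioi_subset_Ioi hab))
  have hS_meas : Measurable S := hS_anti.measurable
  have hS_nonneg : ∀ t, 0 ≤ S t := fun t => ENNReal.toReal_nonneg
  have hg_meas : Measurable g := hmf.mul hS_meas.inv
  have hSz : 0 < S z := hz
  -- the Ici / Ioi measures coincide
  have hIci : ∀ u : ℝ, F (Set.Ici u) = F (Set.Ioi u) := fun u =>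
    (measure_congr (Ioi_ae_eq_Ici (μ := F) (a := u))).symm
  -- the set where S vanishes is null
  have hNnull : F {u : ℝ | F (Set.Ioi u) = 0} = 0 := by
    set N := {u : ℝ | F (Set.Ioi u) = 0} with hNdef
    by_cases hne : N.Nonempty
    · have hbdd : BddBelow N := by
        refine ⟨z, fun n hn => ?_⟩
        by_contra hzn
        push_neg at hzn
        have h0 : F (Set.Ioi z) = 0 :=
          le_antisymm (le_trans (measure_mono (Ioi_subset_Ioi hzn.le)) (le_of_eq hn)) (zero_le)
        rw [h0] at hz
        simp at hz
      set t0 := sInf N with ht0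
      have hsub : N ⊆ Set.Ici t0 := fun n hn => csInf_le hbdd hn
      have htail : ∀ ε : ℝ, 0 < ε → F (Set.Ioi (t0 + ε)) = 0 := by
        intro ε hε
        obtain ⟨x, hxN, hxlt⟩ := exists_lt_of_csInf_lt hne (by linarith : sInf N < t0 + ε)
        exact le_antisymm
          (le_trans (measure_mono (Ioi_subset_Ioi hxlt.le)) (le_of_eq hxN)) (zero_le)
      have hIoi0 : F (Set.Ioi t0) = 0 := by
        have hsub2 : Set.Ioi t0 ⊆ ⋃ n : ℕ, Set.Ioi (t0 + 1 / (n + 1)) := by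
          intro x hx
          obtain ⟨n, hn⟩ := exists_nat_one_div_lt (sub_pos.mpr (show t0 < x from hx))
          exact Set.mem_iUnion.mpr ⟨n, by simp only [Set.mem_Ioi]; linarith⟩
        exact measure_mono_null hsub2
          (measure_iUnion_null fun n => htail _ (by positivity))
      refine le_antisymm ?_ (zero_le)
      calc F N ≤ F (Set.Ici t0) := measure_mono hsub
        _ = F (Set.Ioi t0) := hIci t0
        _ = 0 := hIoi0
    · simp [Set.not_nonempty_iff_eq_empty.mp hne]
  have ae_pos : ∀ᵐ u ∂F, 0 < S u := by
    have := (MeasureTheory.measure_eq_zero_iff_ae_notMem (μ := F)).mp hNnull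
    filter_upwards [this] with u hu
    exact ENNReal.toReal_pos hu (hfin _)
  -- integrability of g on intervals where S is bounded below
  have hg_int : ∀ s : ℝ, 0 < S s → IntegrableOn g (Set.Ioc 0 s) F := by
    intro s hs
    refine Integrable.mono' ((hf1.norm.mul_const ((S s)⁻¹)).integrableOn)
      hg_meas.aestronglyMeasurable ?_
    rw [ae_restrict_iff' measurableSet_Ioc]
    refine Filter.Eventually.of_forall fun u hu => ?_
    have hSu : 0 < S u := lt_of_lt_of_le hs (hS_anti hu.2)
    have : ‖g u‖ = ‖f u‖ * (S u)⁻¹ := by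
      rw [hgdef]
      simp only [Real.norm_eq_abs, abs_mul, abs_inv, abs_of_nonneg (hS_nonneg u)]
    rw [this]
    refine mul_le_mul_of_nonneg_left ?_ (norm_nonneg _)
    refine inv_anti₀ hs (hS_anti hu.2)
  -- the double-variable function
  set μ := F.restrict (Set.Ioi z) with hμdef
  set Φ : ℝ × ℝ → ℝ := fun p => if 0 < p.2 ∧ p.2 ≤ p.1 then g p.2 else 0 with hΦdef
  have hΦ_meas : Measurable Φ := by
    refine Measurable.ite ?_ (hg_meas.comp measurable_snd) measurable_const
    exact (measurableSet_lt measurable_const measurable_snd).inter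
      (measurableSet_le measurable_snd measurable_fst)
  -- key computation of the inner integral over s
  set T : ℝ → ℝ := fun u => (F (Set.Ici u ∩ Set.Ioi z)).toReal with hTdef
  have hT_anti : Antitone T := fun a b hab =>
    ENNReal.toReal_mono (hfin _)
      (measure_mono (Set.inter_subset_inter_left _ (Set.Ici_subset_Ici.mpr hab)))
  have hT_meas : Measurable T := hT_anti.measurable
  have key : ∀ (u : ℝ) (c : ℝ),
      (∫ s in Set.Ioi z, (if 0 < u ∧ u ≤ s then c else 0) ∂F)
        = if 0 < u then T u * c else 0 := by
    intro u c
    by_cases hu : 0 < u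
    · simp only [hu, true_and, if_true]
      have heq : (fun s : ℝ => if u ≤ s then c else 0)
          = (Set.Ici u).indicator (fun _ => c) := by
        funext s
        by_cases h : u ≤ s <;> simp [Set.indicator_apply, Set.mem_Ici, h]
      rw [heq, integral_indicator measurableSet_Ici,
        Measure.restrict_restrict measurableSet_Ici, setIntegral_const, smul_eq_mul]
      rfl
    · simp [hu]
  -- integrability of Φ on the product
  have hΦ_int : Integrable Φ (μ.prod F) := by
    rw [integrable_prod_iff' (hΦ_meas.aestronglyMeasurable)]
    constructor
    · refine Filter.Eventually.of_forall fun u => ?_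
      by_cases hu : 0 < u
      · have heq : (fun s => Φ (s, u)) = (Set.Ici u).indicator (fun _ => g u) := by
          funext s
          by_cases h : u ≤ s <;> simp [hΦdef, Set.indicator_apply, Set.mem_Ici, h, hu]
        rw [heq]
        exact (integrable_const _).indicator measurableSet_Ici
      · have heq : (fun s => Φ (s, u)) = fun _ => (0 : ℝ) := by
          funext s; simp [hΦdef, hu]
        rw [heq]; exact integrable_const 0
    · have heq : (fun u => ∫ s, ‖Φ (s, u)‖ ∂μ)
          = fun u => if 0 < u then T u * ‖g u‖ else 0 := by
        funext u
        have : (fun s => ‖Φ (s, u)‖) = fun s => if 0 < u ∧ u ≤ s then ‖g u‖ else 0 := by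
          funext s
          by_cases h : 0 < u ∧ u ≤ s <;> simp [hΦdef, h]
        rw [hμdef, this, key u ‖g u‖]
      rw [heq]
      refine Integrable.mono' hf1.norm ?_ ?_
      · refine Measurable.aestronglyMeasurable (Measurable.ite measurableSet_Ioi ?_ measurable_const)
        exact hT_meas.mul hg_meas.norm
      · filter_upwards [ae_pos] with u hSu
        by_cases hu : 0 < u
        · simp only [hu, if_true]
          have hTle : T u ≤ S u := by
            refine ENNReal.toReal_mono (hfin _) ?_
            exact le_trans (measure_mono Set.inter_subset_left) (le_of_eq (hIci u))
          have hgn : ‖g u‖ = ‖f u‖ * (S u)⁻¹ := by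
            rw [hgdef]
            simp only [Real.norm_eq_abs, abs_mul, abs_inv, abs_of_nonneg (hS_nonneg u)]
          have h1 : T u * ‖g u‖ ≤ S u * ‖g u‖ :=
            mul_le_mul_of_nonneg_right hTle (norm_nonneg _)
          have h2 : S u * ‖g u‖ = ‖f u‖ := by
            rw [hgn, mul_comm (‖f u‖), ← mul_assoc, mul_inv_cancel₀ (ne_of_gt hSu), one_mul]
          calc ‖T u * ‖g u‖‖ = T u * ‖g u‖ := by
                rw [Real.norm_eq_abs, abs_of_nonneg]
                exact mul_nonneg ENNReal.toReal_nonneg (norm_nonneg _)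
            _ ≤ ‖f u‖ := h2 ▸ h1
        · simp [hu]
  -- identify the inner integral with h
  set h : ℝ → ℝ := fun s => ∫ u in Set.Ioc 0 s, g u ∂F with hhdef
  have hh_eq : ∀ s, (∫ u, Φ (s, u) ∂F) = h s := by
    intro s
    have : (fun u => Φ (s, u)) = (Set.Ioc 0 s).indicator g := by
      funext u
      by_cases hmem : u ∈ Set.Ioc 0 s
      · simp [hΦdef, Set.indicator_of_mem hmem, Set.mem_Ioc.mp hmem]
      · have : ¬(0 < u ∧ u ≤ s) := by rwa [Set.mem_Ioc] at hmem
        simp [hΦdef, this, Set.indicator_of_notMem hmem]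
    rw [this, integral_indicator measurableSet_Ioc]
  have hΦ_int' : Integrable (Function.uncurry fun s u => Φ (s, u)) (μ.prod F) := hΦ_int
  have hh_int : Integrable h μ := by
    have := hΦ_int.integral_prod_left
    exact this.congr (Filter.Eventually.of_forall fun s => hh_eq s)
  -- Fubini
  have hswap : ∫ s in Set.Ioi z, h s ∂F = ∫ u, (∫ s in Set.Ioi z, Φ (s, u) ∂F) ∂F := by
    calc ∫ s in Set.Ioi z, h s ∂F = ∫ s, ∫ u, Φ (s, u) ∂F ∂μ := by
          rw [hμdef]; exact (integral_congr_ae (Filter.Eventually.of_forall fun s => (hh_eq s).symm))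
      _ = ∫ u, ∫ s, Φ (s, u) ∂μ ∂F := integral_integral_swap hΦ_int'
  -- compute the swapped integral
  have hI : (fun u => ∫ s in Set.Ioi z, Φ (s, u) ∂F)
      = (Set.Ioi 0).indicator (fun u => T u * g u) := by
    funext u
    have : (fun s => Φ (s, u)) = fun s => if 0 < u ∧ u ≤ s then g u else 0 := rfl
    rw [this, key u (g u)]
    by_cases hu : 0 < u <;> simp [Set.indicator_apply, Set.mem_Ioi, hu]
  -- split the integration domain
  have hdom : (Set.Ioi (0 : ℝ) : Set ℝ) =ᵐ[F] ((Set.Ioc 0 z ∪ Set.Ioi z : Set ℝ)) := by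
    have hIic : F (Set.Iic (0 : ℝ)) = 0 := by
      have := prob_compl_eq_zero_iff (μ := F) (measurableSet_Ioi (a := (0:ℝ)))
      rw [Set.compl_Ioi] at this
      exact this.mpr hF
    rcases le_or_gt 0 z with hz0 | hz0
    · rw [Set.Ioc_union_Ioi_eq_Ioi hz0]
      exact Filter.EventuallyEq.rfl
    · have hempty : Set.Ioc (0 : ℝ) z = ∅ := Set.Ioc_eq_empty (by linarith)
      rw [hempty, Set.empty_union]
      refine (MeasureTheory.ae_eq_set).mpr ⟨?_, ?_⟩
      · refine measure_mono_null (fun x hx => ?_) hIic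
        simp only [Set.mem_diff, Set.mem_Ioi] at hx
        exact (hx.2 (lt_trans hz0 hx.1)).elim
      · refine measure_mono_null (fun x hx => ?_) hIic
        simp only [Set.mem_diff, Set.mem_Ioi] at hx
        exact Set.mem_Iic.mpr (not_lt.mp hx.2)
  -- integrability and values on the two pieces
  have hEqOn1 : Set.EqOn (fun u => T u * g u) (fun u => S z * g u) (Set.Ioc 0 z) := by
    intro u hu
    have : Set.Ici u ∩ Set.Ioi z = Set.Ioi z := by
      apply Set.inter_eq_self_of_subset_right
      intro x hx
      exact Set.mem_Ici.mpr (le_trans hu.2 (le_of_lt hx))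
    simp only [hTdef, this, hSdef]
  have hint1 : IntegrableOn (fun u => T u * g u) (Set.Ioc 0 z) F := by
    refine IntegrableOn.congr_fun ?_ hEqOn1.symm measurableSet_Ioc
    exact (hg_int z hSz).const_mul (S z)
  have hae2 : (fun u => T u * g u) =ᵐ[F.restrict (Set.Ioi z)] f := by
    refine (ae_restrict_iff' measurableSet_Ioi).mpr ?_
    filter_upwards [ae_pos] with u hSu hu
    have hset : Set.Ici u ∩ Set.Ioi z = Set.Ici u := by
      apply Set.inter_eq_self_of_subset_left
      intro x hx
      exact Set.mem_Ioi.mpr (lt_of_lt_of_le hu hx)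
    have hTu : T u = S u := by
      simp only [hTdef, hset, hSdef, hIci u]
    show T u * (f u * (S u)⁻¹) = f u
    rw [hTu, mul_comm (f u), ← mul_assoc, mul_inv_cancel₀ (ne_of_gt hSu), one_mul]
  have hint2 : IntegrableOn (fun u => T u * g u) (Set.Ioi z) F :=
    (hf1.integrableOn).congr hae2.symm
  have hval2 : ∫ u in Set.Ioi z, T u * g u ∂F = ∫ u in Set.Ioi z, f u ∂F :=
    integral_congr_ae hae2
  have hval1 : ∫ u in Set.Ioc 0 z, T u * g u ∂F = S z * ∫ u in Set.Ioc 0 z, g u ∂F := by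
    rw [setIntegral_congr_fun measurableSet_Ioc hEqOn1, integral_const_mul]
  -- put it together
  have hmain : ∫ s in Set.Ioi z, h s ∂F
      = S z * (∫ u in Set.Ioc 0 z, g u ∂F) + ∫ u in Set.Ioi z, f u ∂F := by
    rw [hswap]
    calc ∫ u, (∫ s in Set.Ioi z, Φ (s, u) ∂F) ∂F
        = ∫ u, (Set.Ioi 0).indicator (fun u => T u * g u) u ∂F := by rw [hI]
      _ = ∫ u in Set.Ioi 0, T u * g u ∂F := integral_indicator measurableSet_Ioi
      _ = ∫ u in Set.Ioc 0 z ∪ Set.Ioi z, T u * g u ∂F := setIntegral_congr_set hdom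
      _ = (∫ u in Set.Ioc 0 z, T u * g u ∂F) + ∫ u in Set.Ioi z, T u * g u ∂F :=
          setIntegral_union (Set.Ioc_disjoint_Ioi le_rfl) measurableSet_Ioi hint1 hint2
      _ = S z * (∫ u in Set.Ioc 0 z, g u ∂F) + ∫ u in Set.Ioi z, f u ∂F := by
          rw [hval1, hval2]
  have hsplit : ∫ s in Set.Ioi z, (f s - h s) ∂F
      = (∫ s in Set.Ioi z, f s ∂F) - ∫ s in Set.Ioi z, h s ∂F :=
    integral_sub hf1.integrableOn hh_int
  calc ∫ s in Set.Ioi z, (f s - ∫ u in Set.Ioc 0 s, f u * ((F (Set.Ioi u)).toReal)⁻¹ ∂F) ∂F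
      = ∫ s in Set.Ioi z, (f s - h s) ∂F := rfl
    _ = (∫ s in Set.Ioi z, f s ∂F) - ∫ s in Set.Ioi z, h s ∂F := hsplit
    _ = -(S z) * ∫ u in Set.Ioc 0 z, g u ∂F := by rw [hmain]; ring
    _ = -(F (Set.Ioi z)).toReal * ∫ s in Set.Ioc 0 z, f s * ((F (Set.Ioi s)).toReal)⁻¹ ∂F := rfl

/-- Tail integral of the backward operator: for `f ∈ L²(F)` and any `z` with
`S(z) > 0`, `∫_{(z,∞)} (Bf)(s) dF(s) = -S(z) ∫_{(0,z]} f(s) S(s)⁻¹ dF(s)`,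
where `(Bf)(s) = f(s) - ∫_{(0,s]} f(u) S(u)⁻¹ dF(u)` and `S(t) = F((t,∞))`. -/
theorem integral_backward_tail (F : Measure ℝ) [IsProbabilityMeasure F]
    [NullSingletonClass F] (hF : F (Set.Ioi (0 : ℝ)) = 1)
    (f : ℝ → ℝ) (hf : MemLp f 2 F)
    (z : ℝ) (hz : 0 < (F (Set.Ioi z)).toReal) :
    ∫ s in Set.Ioi z,
        (f s - ∫ u in Set.Ioc 0 s, f u * ((F (Set.Ioi u)).toReal)⁻¹ ∂F) ∂F
      = -(F (Set.Ioi z)).toReal * ∫ s in Set.Ioc 0 z, f s * ((F (Set.Ioi s)).toReal)⁻¹ ∂F := by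
  set f₀ : ℝ → ℝ := hf.1.mk f with hf₀def
  have hf₀meas : Measurable f₀ := hf.1.stronglyMeasurable_mk.measurable
  have hff₀ : f =ᵐ[F] f₀ := hf.1.ae_eq_mk
  have hf₀int : Integrable f₀ F := (hf.integrable one_le_two).congr hff₀
  have hgg : (fun u => f u * ((F (Set.Ioi u)).toReal)⁻¹)
      =ᵐ[F] (fun u => f₀ u * ((F (Set.Ioi u)).toReal)⁻¹) :=
    hff₀.mono fun u hu => by dsimp only; rw [hu]
  have hinner : ∀ s : ℝ, (∫ u in Set.Ioc 0 s, f u * ((F (Set.Ioi u)).toReal)⁻¹ ∂F)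
      = ∫ u in Set.Ioc 0 s, f₀ u * ((F (Set.Ioi u)).toReal)⁻¹ ∂F := fun s =>
    integral_congr_ae (ae_restrict_of_ae hgg)
  calc ∫ s in Set.Ioi z,
        (f s - ∫ u in Set.Ioc 0 s, f u * ((F (Set.Ioi u)).toReal)⁻¹ ∂F) ∂F
      = ∫ s in Set.Ioi z,
        (f₀ s - ∫ u in Set.Ioc 0 s, f₀ u * ((F (Set.Ioi u)).toReal)⁻¹ ∂F) ∂F := by
        refine integral_congr_ae ?_
        filter_upwards [ae_restrict_of_ae hff₀] with s hs
        rw [hs, hinner s]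
    _ = -(F (Set.Ioi z)).toReal * ∫ s in Set.Ioc 0 z, f₀ s * ((F (Set.Ioi s)).toReal)⁻¹ ∂F :=
        aux_backward_tail F hF f₀ hf₀meas hf₀int z hz
    _ = -(F (Set.Ioi z)).toReal * ∫ s in Set.Ioc 0 z, f s * ((F (Set.Ioi s)).toReal)⁻¹ ∂F := by
        rw [hinner z]
end

section
/- For every f : ℝ → ℝ with f ∈ L²(F) and every z ∈ ℝ with S(z) > 0, one has ∫_{(0,z]} (Af)(s)·S(s)⁻¹ dF(s) = ∫ f dF − S(z)⁻¹ · ∫_{(z,∞)} f dF. -/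
open MeasureTheory Set

namespace AdvHelper

noncomputable def S (F : Measure ℝ) (x : ℝ) : ℝ := (F (Ioi x)).toReal

variable {F : Measure ℝ} [IsProbabilityMeasure F] [NullSingletonClass F]

lemma S_antitone : Antitone (S F) := fun x y hxy =>
  ENNReal.toReal_mono (measure_ne_top F _) (measure_mono (Ioi_subset_Ioi hxy))

lemma S_nonneg (x : ℝ) : 0 ≤ S F x := ENNReal.toReal_nonneg

lemma cdf_add_S (x : ℝ) : ProbabilityTheory.cdf F x + S F x = 1 := by
  have h : F (Iic x) + F (Ioi x) = 1 := by
    rw [← measure_union (Iic_disjoint_Ioi le_rfl) measurableSet_Ioi, Iic_union_Ioi, measure_univ]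
  rw [ProbabilityTheory.cdf_eq_real, measureReal_def, S,
    ← ENNReal.toReal_add (measure_ne_top _ _) (measure_ne_top _ _), h, ENNReal.toReal_one]

lemma S_continuous : Continuous (S F) := by
  have hc : Continuous (ProbabilityTheory.cdf F) := by
    rw [continuous_iff_continuousAt]
    intro x
    rw [(ProbabilityTheory.cdf F).mono.continuousAt_iff_leftLim_eq_rightLim,
      (ProbabilityTheory.cdf F).rightLim_eq]
    have h0 : (ProbabilityTheory.cdf F).measure {x} = 0 := by
      rw [ProbabilityTheory.measure_cdf]; exact MeasureTheory.measure_singleton x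
    rw [StieltjesFunction.measure_singleton] at h0
    have hle := (ProbabilityTheory.cdf F).mono.leftLim_le (le_refl x)
    have h1 := ENNReal.ofReal_eq_zero.mp h0
    linarith
  have hS : S F = fun x => 1 - ProbabilityTheory.cdf F x := by
    funext x; have := cdf_add_S (F := F) x; linarith
  rw [hS]; exact continuous_const.sub hc

lemma S_measurable : Measurable (S F) := S_continuous.measurable

lemma S_Ioc {a b : ℝ} (hab : a ≤ b) : (F (Ioc a b)).toReal = S F a - S F b := by
  have h : F (Ioc a b) + F (Ioi b) = F (Ioi a) := by
    rw [← measure_union ((Iic_disjoint_Ioi le_rfl).mono Ioc_subset_Iic_self le_rfl)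
      measurableSet_Ioi, Ioc_union_Ioi_eq_Ioi hab]
  have := congrArg ENNReal.toReal h
  rw [ENNReal.toReal_add (measure_ne_top _ _) (measure_ne_top _ _)] at this
  simp only [S]; linarith

lemma W_int {a b : ℝ} (hb : 0 < S F b) :
    IntegrableOn (fun s => (S F s)⁻¹ * (S F s)⁻¹) (Ioc a b) F := by
  apply Integrable.mono' (integrable_const ((S F b)⁻¹ * (S F b)⁻¹))
  · exact (S_measurable.inv.mul S_measurable.inv).aestronglyMeasurable
  · rw [ae_restrict_iff' measurableSet_Ioc]
    filter_upwards with s hs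
    have h1 : S F b ≤ S F s := S_antitone hs.2
    have h2 : 0 < S F s := lt_of_lt_of_le hb h1
    rw [Real.norm_eq_abs, abs_of_nonneg (by positivity)]
    have h3 : (S F s)⁻¹ ≤ (S F b)⁻¹ := by
      apply inv_anti₀ hb h1
    exact mul_le_mul h3 h3 (by positivity) (by positivity)

lemma key {a b : ℝ} (hab : a ≤ b) (hb : 0 < S F b) :
    ∫ s in Ioc a b, (S F s)⁻¹ * (S F s)⁻¹ ∂F = (S F b)⁻¹ - (S F a)⁻¹ := by
  have ha : 0 < S F a := lt_of_lt_of_le hb (S_antitone hab)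
  set I := ∫ s in Ioc a b, (S F s)⁻¹ * (S F s)⁻¹ ∂F with hI
  set T := (S F b)⁻¹ - (S F a)⁻¹ with hT
  -- main bound for each n
  have bound : ∀ n : ℕ, 0 < n →
      |I - T| ≤ (S F a - S F b) * ((S F b)⁻¹ * (S F b)⁻¹) / n := by
    intro n hn
    rcases eq_or_lt_of_le (S_antitone hab : S F b ≤ S F a) with heq | hlt
    · -- S a = S b : everything is zero
      have hm : F (Ioc a b) = 0 := by
        have := S_Ioc (F := F) hab
        rw [← heq, sub_self] at this
        exact (ENNReal.toReal_eq_zero_iff _).mp this |>.resolve_right (measure_ne_top _ _)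
      have hI0 : I = 0 := by
        rw [hI]; rw [Measure.restrict_eq_zero.2 hm, integral_zero_measure]
      have hT0 : T = 0 := by rw [hT, ← heq, sub_self]
      rw [hI0, hT0, ← heq]
      simp
    set d : ℝ := (S F a - S F b) / n with hd_def
    have hd : 0 < d := by
      apply div_pos (by linarith) (by exact_mod_cast hn)
    have hnd : (n : ℝ) * d = S F a - S F b := by
      rw [hd_def]; field_simp
    have hex : ∀ i : ℕ, ∃ x, x ∈ Icc a b ∧ (i = 0 → x = a) ∧ (n ≤ i → x = b) ∧
        (i ≤ n → S F x = S F a - i * d) := by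
      intro i
      rcases Nat.eq_zero_or_pos i with h0 | hpos
      · exact ⟨a, ⟨le_rfl, hab⟩, fun _ => rfl, fun hni => absurd hni (by omega),
          fun _ => by simp [h0]⟩
      rcases le_or_gt n i with hni | hin
      · refine ⟨b, ⟨hab, le_rfl⟩, fun h => absurd h (by omega), fun _ => rfl, ?_⟩
        intro hin'
        have hi_eq : i = n := le_antisymm hin' hni
        rw [hi_eq]; linarith [hnd]
      · have hc : S F a - i * d ∈ Icc (S F b) (S F a) := by
          constructor
          · have : (i : ℝ) * d ≤ n * d := by
              apply mul_le_mul_of_nonneg_right _ hd.le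
              exact_mod_cast hin.le
            linarith [hnd]
          · have : 0 ≤ (i : ℝ) * d := by positivity
            linarith
        obtain ⟨x, hx, hSx⟩ := intermediate_value_Icc' hab S_continuous.continuousOn hc
        exact ⟨x, hx, fun h => absurd h (by omega), fun h => absurd h (by omega),
          fun _ => hSx⟩
    choose u humem hu0 hun hS using hex
    have hu0' : u 0 = a := hu0 0 rfl
    have hun' : u n = b := hun n le_rfl
    have hmono : ∀ i j : ℕ, i ≤ j → j ≤ n → u i ≤ u j := by
      intro i j hij hjn
      by_contra hcon
      push_neg at hcon
      have h1 : S F (u i) ≤ S F (u j) := S_antitone hcon.le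
      rw [hS i (hij.trans hjn), hS j hjn] at h1
      have h2 : (j : ℝ) * d ≤ i * d := by linarith
      have h3 : (j : ℝ) ≤ i := le_of_mul_le_mul_right h2 hd
      have h4 : i = j := le_antisymm hij (by exact_mod_cast h3)
      rw [h4] at hcon
      exact lt_irrefl _ hcon
    have hSpos : ∀ i : ℕ, i ≤ n → 0 < S F (u i) := fun i hi =>
      lt_of_lt_of_le hb (S_antitone (humem i).2)
    have main : ∀ k : ℕ, k ≤ n →
        |(∫ s in Ioc a (u k), (S F s)⁻¹ * (S F s)⁻¹ ∂F) -
            ((S F (u k))⁻¹ - (S F a)⁻¹)| ≤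
          d * ((S F (u k))⁻¹ * (S F (u k))⁻¹) - d * ((S F a)⁻¹ * (S F a)⁻¹) := by
      intro k
      induction k with
      | zero =>
        intro _
        rw [hu0']
        simp
      | succ k ih =>
        intro hk1
        have hk : k ≤ n := Nat.le_of_succ_le hk1
        have ihk := ih hk
        have hxpos : 0 < S F (u k) := hSpos k hk
        have hypos : 0 < S F (u (k + 1)) := hSpos (k + 1) hk1
        have hxy : S F (u (k + 1)) ≤ S F (u k) := S_antitone (hmono k (k + 1) (by omega) hk1)
        have hstep : u k ≤ u (k + 1) := hmono k (k + 1) (by omega) hk1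
        have hak : a ≤ u k := hu0' ▸ hmono 0 k (by omega) hk
        -- split the integral
        have hsplit : (∫ s in Ioc a (u (k + 1)), (S F s)⁻¹ * (S F s)⁻¹ ∂F) =
            (∫ s in Ioc a (u k), (S F s)⁻¹ * (S F s)⁻¹ ∂F) +
            ∫ s in Ioc (u k) (u (k + 1)), (S F s)⁻¹ * (S F s)⁻¹ ∂F := by
          rw [← setIntegral_union ((Iic_disjoint_Ioi le_rfl).mono Ioc_subset_Iic_self
            Ioc_subset_Ioi_self) measurableSet_Ioc (W_int hxpos) (W_int hypos),
            Ioc_union_Ioc_eq_Ioc hak hstep]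
        -- mass of the piece
        have hmass : (F (Ioc (u k) (u (k + 1)))).toReal = d := by
          rw [S_Ioc hstep, hS k hk, hS (k + 1) hk1]
          push_cast; ring
        -- bounds on the piece integral
        have hup : (∫ s in Ioc (u k) (u (k + 1)), (S F s)⁻¹ * (S F s)⁻¹ ∂F) ≤
            d * ((S F (u (k + 1)))⁻¹ * (S F (u (k + 1)))⁻¹) := by
          have hpt : ∀ s ∈ Ioc (u k) (u (k + 1)), (S F s)⁻¹ * (S F s)⁻¹ ≤
              (S F (u (k + 1)))⁻¹ * (S F (u (k + 1)))⁻¹ := by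
            intro s hs
            have h1 : S F (u (k + 1)) ≤ S F s := S_antitone hs.2
            have h2 : 0 < S F s := lt_of_lt_of_le hypos h1
            have h3 : (S F s)⁻¹ ≤ (S F (u (k + 1)))⁻¹ := inv_anti₀ hypos h1
            exact mul_le_mul h3 h3 (by positivity) (by positivity)
          have h := setIntegral_mono_on (μ := F) (s := Ioc (u k) (u (k + 1)))
            (g := fun _ => (S F (u (k + 1)))⁻¹ * (S F (u (k + 1)))⁻¹) (W_int hypos)
            (integrableOn_const (measure_ne_top _ _))
            measurableSet_Ioc hpt
          rw [setIntegral_const, smul_eq_mul, measureReal_def, hmass] at h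
          exact h
        have hlow : d * ((S F (u k))⁻¹ * (S F (u k))⁻¹) ≤
            ∫ s in Ioc (u k) (u (k + 1)), (S F s)⁻¹ * (S F s)⁻¹ ∂F := by
          have hpt : ∀ s ∈ Ioc (u k) (u (k + 1)), (S F (u k))⁻¹ * (S F (u k))⁻¹ ≤
              (S F s)⁻¹ * (S F s)⁻¹ := by
            intro s hs
            have h1 : S F s ≤ S F (u k) := S_antitone hs.1.le
            have h2 : 0 < S F s := lt_of_lt_of_le hypos (S_antitone hs.2)
            have h3 : (S F (u k))⁻¹ ≤ (S F s)⁻¹ := inv_anti₀ h2 h1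
            exact mul_le_mul h3 h3 (by positivity) (by positivity)
          have h := setIntegral_mono_on (μ := F) (s := Ioc (u k) (u (k + 1)))
            (f := fun _ => (S F (u k))⁻¹ * (S F (u k))⁻¹)
            (integrableOn_const (measure_ne_top _ _))
            (W_int hypos) measurableSet_Ioc hpt
          rw [setIntegral_const, smul_eq_mul, measureReal_def, hmass] at h
          exact h
        -- the target increment is in the same bracket
        have htag : (S F (u (k + 1)))⁻¹ - (S F (u k))⁻¹ =
            d * ((S F (u k))⁻¹ * (S F (u (k + 1)))⁻¹) := by
          have hd_eq : d = S F (u k) - S F (u (k + 1)) := by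
            rw [hS k hk, hS (k + 1) hk1]; push_cast; ring
          rw [hd_eq]
          field_simp
        have hinv : (S F (u k))⁻¹ ≤ (S F (u (k + 1)))⁻¹ := inv_anti₀ hypos hxy
        have htag_low : d * ((S F (u k))⁻¹ * (S F (u k))⁻¹) ≤
            (S F (u (k + 1)))⁻¹ - (S F (u k))⁻¹ := by
          rw [htag]
          exact mul_le_mul_of_nonneg_left
            (mul_le_mul_of_nonneg_left hinv (inv_pos.mpr hxpos).le) hd.le
        have htag_up : (S F (u (k + 1)))⁻¹ - (S F (u k))⁻¹ ≤
            d * ((S F (u (k + 1)))⁻¹ * (S F (u (k + 1)))⁻¹) := by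
          rw [htag]
          exact mul_le_mul_of_nonneg_left
            (mul_le_mul_of_nonneg_right hinv (inv_pos.mpr hypos).le) hd.le
        rw [hsplit]
        rw [abs_sub_le_iff] at ihk ⊢
        constructor
        · linarith [ihk.1, hup, htag_low]
        · linarith [ihk.2, hlow, htag_up]
    have hmn := main n le_rfl
    rw [hun'] at hmn
    have he : d * ((S F b)⁻¹ * (S F b)⁻¹) = (S F a - S F b) * ((S F b)⁻¹ * (S F b)⁻¹) / n := by
      rw [hd_def]; ring
    have h0' : 0 ≤ d * ((S F a)⁻¹ * (S F a)⁻¹) := by positivity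
    linarith
  -- conclude
  set C := (S F a - S F b) * ((S F b)⁻¹ * (S F b)⁻¹) with hC
  have hC0 : 0 ≤ C := by
    apply mul_nonneg _ (by positivity)
    have := S_antitone (F := F) hab
    linarith
  have habs : |I - T| ≤ 0 := by
    by_contra hcon
    push_neg at hcon
    obtain ⟨n, hnn⟩ := exists_nat_gt (C / |I - T|)
    have hn0 : 0 < n := by
      rcases Nat.eq_zero_or_pos n with h0 | h0
      · rw [h0] at hnn
        simp only [Nat.cast_zero] at hnn
        exact absurd hnn (not_lt.mpr (div_nonneg hC0 (le_of_lt hcon)))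
      · exact h0
    have hb1 := bound n hn0
    rw [div_lt_iff₀ hcon] at hnn
    have h2 : C / n < |I - T| := by
      rw [div_lt_iff₀ (by exact_mod_cast hn0)]
      linarith [mul_comm (|I - T|) (n : ℝ)]
    linarith
  have : I - T = 0 := abs_eq_zero.mp (le_antisymm habs (abs_nonneg _))
  linarith


lemma restrict_Ioi0_eq {F : Measure ℝ} [IsProbabilityMeasure F]
    (hF : F (Ioi (0:ℝ)) = 1) : F.restrict (Ioi (0:ℝ)) = F := by
  have h0 : F (Iic (0:ℝ)) = 0 := by
    have h := measure_compl (μ := F) (s := Ioi (0:ℝ)) measurableSet_Ioi (measure_ne_top F _)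
    rwa [compl_Ioi, hF, measure_univ, tsub_self] at h
  apply Measure.restrict_eq_self_of_ae_mem
  rw [Filter.eventually_iff, mem_ae_iff]
  have hc : {x : ℝ | x ∈ Ioi (0:ℝ)}ᶜ = Iic 0 := by ext x; simp
  rw [hc, h0]

lemma main_aux {F : Measure ℝ} [IsProbabilityMeasure F] [NullSingletonClass F]
    (hF : F (Ioi (0:ℝ)) = 1) {f : ℝ → ℝ} (hfm : StronglyMeasurable f)
    (hf1 : Integrable f F) {z : ℝ} (hz0 : 0 < z) (hz : 0 < S F z) :
    ∫ s in Ioc 0 z, (f s - (S F s)⁻¹ * ∫ u in Ioi s, f u ∂F) * (S F s)⁻¹ ∂F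
      = (∫ w, f w ∂F) - (S F z)⁻¹ * ∫ s in Ioi z, f s ∂F := by
  have hS0 : S F 0 = 1 := by rw [S, hF, ENNReal.toReal_one]
  have hSpos : ∀ s ∈ Ioc 0 z, 0 < S F s := fun s hs => lt_of_lt_of_le hz (S_antitone hs.2)
  have hSinv_le : ∀ s ∈ Ioc 0 z, (S F s)⁻¹ ≤ (S F z)⁻¹ := fun s hs =>
    inv_anti₀ hz (S_antitone hs.2)
  have hSnn : ∀ x : ℝ, (0:ℝ) ≤ (S F x)⁻¹ := fun x => inv_nonneg.mpr (S_nonneg x)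
  set M := ∫ u, |f u| ∂F with hM
  have hM0 : 0 ≤ M := integral_nonneg fun u => abs_nonneg _
  set g : ℝ → ℝ := fun s => ∫ u in Ioi s, f u ∂F with hgdef
  have hind : ∀ s u : ℝ, ({q : ℝ × ℝ | q.1 < q.2}.indicator (fun q => f q.2) (s, u))
      = (Ioi s).indicator f u := by
    intro s u
    by_cases h : s < u
    · simp [Set.indicator_apply, h, mem_Ioi]
    · simp [Set.indicator_apply, h, mem_Ioi]
  have hindsm : StronglyMeasurable
      ({q : ℝ × ℝ | q.1 < q.2}.indicator (fun q => f q.2)) :=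
    (hfm.comp_measurable measurable_snd).indicator
      (measurableSet_lt measurable_fst measurable_snd)
  have hWsm : StronglyMeasurable (fun p : ℝ × ℝ =>
      (S F p.1)⁻¹ * (S F p.1)⁻¹ * {q : ℝ × ℝ | q.1 < q.2}.indicator (fun q => f q.2) p) := by
    apply StronglyMeasurable.mul _ hindsm
    exact (((S_measurable.comp measurable_fst).inv.mul
        (S_measurable.comp measurable_fst).inv)).stronglyMeasurable
  have hg_meas : StronglyMeasurable g := by
    have h1 : g = fun s => ∫ u, {q : ℝ × ℝ | q.1 < q.2}.indicator (fun q => f q.2) (s, u) ∂F := by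
      funext s
      simp only [hind]
      rw [hgdef]
      exact (integral_indicator measurableSet_Ioi).symm
    rw [h1]
    exact hindsm.integral_prod_right'
  have hg_bdd : ∀ s, |g s| ≤ M := by
    intro s
    calc |g s| ≤ ∫ u in Ioi s, |f u| ∂F := by
          simpa [Real.norm_eq_abs] using
            norm_integral_le_integral_norm (μ := F.restrict (Ioi s)) f
      _ ≤ M := setIntegral_le_integral hf1.abs (Filter.Eventually.of_forall fun u => abs_nonneg _)
  -- integrability on Ioc 0 z
  have int_fS : IntegrableOn (fun s => f s * (S F s)⁻¹) (Ioc 0 z) F := by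
    apply Integrable.mono' ((hf1.norm.const_mul ((S F z)⁻¹)).integrableOn)
    · exact (hfm.mul S_measurable.inv.stronglyMeasurable).aestronglyMeasurable
    · rw [ae_restrict_iff' measurableSet_Ioc]
      filter_upwards with s hs
      have h1 : ‖(S F s)⁻¹‖ = (S F s)⁻¹ := Real.norm_of_nonneg (hSnn s)
      rw [norm_mul, h1, mul_comm ((S F z)⁻¹)]
      exact mul_le_mul_of_nonneg_left (hSinv_le s hs) (norm_nonneg _)
  have int_Wg : IntegrableOn (fun s => (S F s)⁻¹ * (S F s)⁻¹ * g s) (Ioc 0 z) F := by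
    apply Integrable.mono' (integrable_const ((S F z)⁻¹ * (S F z)⁻¹ * M))
    · exact ((S_measurable.inv.mul S_measurable.inv).stronglyMeasurable.mul
        hg_meas).aestronglyMeasurable
    · rw [ae_restrict_iff' measurableSet_Ioc]
      filter_upwards with s hs
      have h1 : 0 ≤ (S F s)⁻¹ := hSnn s
      have h2 : (S F s)⁻¹ * (S F s)⁻¹ ≤ (S F z)⁻¹ * (S F z)⁻¹ :=
        mul_le_mul (hSinv_le s hs) (hSinv_le s hs) h1 (hSnn z)
      rw [Real.norm_eq_abs, abs_mul, abs_of_nonneg (mul_nonneg h1 h1)]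
      calc (S F s)⁻¹ * (S F s)⁻¹ * |g s| ≤ ((S F z)⁻¹ * (S F z)⁻¹) * M := by
            apply mul_le_mul h2 (hg_bdd s) (abs_nonneg _) (mul_nonneg (hSnn z) (hSnn z))
        _ = (S F z)⁻¹ * (S F z)⁻¹ * M := by ring
  -- step 1 : expand the product
  have step1 : (∫ s in Ioc 0 z, (f s - (S F s)⁻¹ * g s) * (S F s)⁻¹ ∂F)
      = (∫ s in Ioc 0 z, f s * (S F s)⁻¹ ∂F)
        - ∫ s in Ioc 0 z, (S F s)⁻¹ * (S F s)⁻¹ * g s ∂F := by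
    rw [← integral_sub int_fS int_Wg]
    refine integral_congr_ae (Filter.Eventually.of_forall fun s => ?_)
    ring
  -- Fubini
  set Jf : ℝ → ℝ → ℝ := fun s u => (S F s)⁻¹ * (S F s)⁻¹ *
      {q : ℝ × ℝ | q.1 < q.2}.indicator (fun q => f q.2) (s, u) with hJfdef
  have huncur : Function.uncurry Jf = fun p : ℝ × ℝ => (S F p.1)⁻¹ * (S F p.1)⁻¹ *
      {q : ℝ × ℝ | q.1 < q.2}.indicator (fun q => f q.2) p := by
    funext p; cases p; rfl
  have hJint : Integrable (Function.uncurry Jf) ((F.restrict (Ioc 0 z)).prod F) := by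
    rw [integrable_prod_iff (by rw [huncur]; exact hWsm.aestronglyMeasurable)]
    constructor
    · refine Filter.Eventually.of_forall fun s => ?_
      have : (fun u => Function.uncurry Jf (s, u))
          = fun u => ((S F s)⁻¹ * (S F s)⁻¹) * (Ioi s).indicator f u := by
        funext u
        show Jf s u = _
        rw [hJfdef]
        simp only [hind]
      rw [this]
      exact (hf1.indicator measurableSet_Ioi).const_mul _
    · apply Integrable.mono' (integrable_const ((S F z)⁻¹ * (S F z)⁻¹ * M))
      · exact (hWsm.norm.integral_prod_right' (ν := F)).aestronglyMeasurable
      · rw [ae_restrict_iff' measurableSet_Ioc]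
        filter_upwards with s hs
        have h1 : 0 ≤ (S F s)⁻¹ := hSnn s
        have heval : (∫ u, ‖Function.uncurry Jf (s, u)‖ ∂F)
            = ((S F s)⁻¹ * (S F s)⁻¹) * ∫ u in Ioi s, |f u| ∂F := by
          have h2 : (fun u => ‖Function.uncurry Jf (s, u)‖)
              = fun u => ((S F s)⁻¹ * (S F s)⁻¹) * (Ioi s).indicator (fun u => |f u|) u := by
            funext u
            show ‖Jf s u‖ = _
            rw [hJfdef]
            simp only [hind]
            rw [Real.norm_eq_abs, abs_mul, abs_of_nonneg (mul_nonneg h1 h1)]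
            congr 1
            by_cases h : u ∈ Ioi s <;> simp [Set.indicator_apply, h, abs_of_nonneg]
          rw [h2, integral_const_mul]
          congr 1
          exact integral_indicator measurableSet_Ioi
        rw [heval]
        have h3 : (∫ u in Ioi s, |f u| ∂F) ≤ M :=
          setIntegral_le_integral hf1.abs (Filter.Eventually.of_forall fun u => abs_nonneg _)
        have h4 : 0 ≤ ∫ u in Ioi s, |f u| ∂F := integral_nonneg fun u => abs_nonneg _
        have h2 : (S F s)⁻¹ * (S F s)⁻¹ ≤ (S F z)⁻¹ * (S F z)⁻¹ :=
          mul_le_mul (hSinv_le s hs) (hSinv_le s hs) h1 (hSnn z)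
        rw [Real.norm_of_nonneg (mul_nonneg (mul_nonneg h1 h1) h4)]
        calc (S F s)⁻¹ * (S F s)⁻¹ * ∫ u in Ioi s, |f u| ∂F
            ≤ ((S F z)⁻¹ * (S F z)⁻¹) * M :=
              mul_le_mul h2 h3 h4 (mul_nonneg (hSnn z) (hSnn z))
          _ = (S F z)⁻¹ * (S F z)⁻¹ * M := by ring
  have swap := integral_integral_swap hJint
  have hinner : ∀ s, ∫ u, Jf s u ∂F = (S F s)⁻¹ * (S F s)⁻¹ * g s := by
    intro s
    have h1 : (fun u => Jf s u) = fun u => ((S F s)⁻¹ * (S F s)⁻¹) * (Ioi s).indicator f u := by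
      funext u
      rw [hJfdef]
      simp only [hind]
    rw [h1, integral_const_mul]
    congr 1
    rw [hgdef]
    exact integral_indicator measurableSet_Ioi
  have hinner2 : ∀ u, (∫ s in Ioc 0 z, Jf s u ∂F) =
      (∫ s in Iio u ∩ Ioc 0 z, (S F s)⁻¹ * (S F s)⁻¹ ∂F) * f u := by
    intro u
    have h1 : ∀ s, Jf s u = (Iio u).indicator (fun s => (S F s)⁻¹ * (S F s)⁻¹ * f u) s := by
      intro s
      rw [hJfdef]
      by_cases h : s < u
      · simp [hind, Set.indicator_apply, h, mem_Ioi, mem_Iio]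
      · simp [hind, Set.indicator_apply, h, mem_Ioi, mem_Iio]
    simp only [h1]
    rw [integral_indicator measurableSet_Iio, Measure.restrict_restrict measurableSet_Iio,
      integral_mul_const]
  have hphi1 : ∀ u ∈ Ioc (0:ℝ) z,
      (∫ s in Iio u ∩ Ioc 0 z, (S F s)⁻¹ * (S F s)⁻¹ ∂F) = (S F u)⁻¹ - 1 := by
    intro u hu
    have hset : Iio u ∩ Ioc 0 z = Ioo 0 u := by
      ext s
      simp only [mem_inter_iff, mem_Iio, mem_Ioc, mem_Ioo]
      constructor
      · rintro ⟨h1, h2, h3⟩; exact ⟨h2, h1⟩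
      · rintro ⟨h1, h2⟩; exact ⟨h2, h1, le_trans (le_of_lt h2) hu.2⟩
    rw [hset, ← integral_Ioc_eq_integral_Ioo, key hu.1.le (hSpos u hu), hS0, inv_one]
  have hphi2 : ∀ u ∈ Ioi z,
      (∫ s in Iio u ∩ Ioc 0 z, (S F s)⁻¹ * (S F s)⁻¹ ∂F) = (S F z)⁻¹ - 1 := by
    intro u hu
    have hset : Iio u ∩ Ioc 0 z = Ioc 0 z :=
      inter_eq_right.mpr fun s hs => lt_of_le_of_lt hs.2 hu
    rw [hset, key hz0.le hz, hS0, inv_one]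
  have hrestr := restrict_Ioi0_eq hF
  have e2 : ∀ h : ℝ → ℝ, ∫ u, h u ∂F = ∫ u in Ioi (0:ℝ), h u ∂F := fun h => by rw [hrestr]
  have hdisj : Disjoint (Ioc (0:ℝ) z) (Ioi z) :=
    (Iic_disjoint_Ioi le_rfl).mono Ioc_subset_Iic_self Set.Subset.rfl
  have hPsi_int : Integrable (fun u => ∫ s, Jf s u ∂(F.restrict (Ioc 0 z))) F := by
    have := hJint.integral_prod_right
    exact this
  have hJ : (∫ s in Ioc 0 z, (S F s)⁻¹ * (S F s)⁻¹ * g s ∂F)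
      = (∫ u in Ioc 0 z, ((S F u)⁻¹ - 1) * f u ∂F)
        + ((S F z)⁻¹ - 1) * ∫ u in Ioi z, f u ∂F := by
    have e1 : (∫ s in Ioc 0 z, (S F s)⁻¹ * (S F s)⁻¹ * g s ∂F)
        = ∫ u, (∫ s in Ioc 0 z, Jf s u ∂F) ∂F := by
      rw [← swap]
      exact integral_congr_ae (Filter.Eventually.of_forall fun s => (hinner s).symm)
    rw [e1, e2, ← Ioc_union_Ioi_eq_Ioi hz0.le,
      setIntegral_union hdisj measurableSet_Ioi hPsi_int.integrableOn hPsi_int.integrableOn]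
    congr 1
    · refine setIntegral_congr_fun measurableSet_Ioc fun u hu => ?_
      rw [hinner2 u, hphi1 u hu]
    · rw [← integral_const_mul]
      refine setIntegral_congr_fun measurableSet_Ioi fun u hu => ?_
      rw [hinner2 u, hphi2 u hu]
  have hsplitf : (∫ w, f w ∂F) = (∫ u in Ioc 0 z, f u ∂F) + ∫ u in Ioi z, f u ∂F := by
    rw [e2 f, ← Ioc_union_Ioi_eq_Ioi hz0.le,
      setIntegral_union hdisj measurableSet_Ioi hf1.integrableOn hf1.integrableOn]
  have int_c : IntegrableOn (fun u => ((S F u)⁻¹ - 1) * f u) (Ioc 0 z) F := by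
    apply (int_fS.sub hf1.integrableOn).congr
    refine Filter.Eventually.of_forall fun s => ?_
    simp only [Pi.sub_apply]
    ring
  have hcomb : (∫ s in Ioc 0 z, f s * (S F s)⁻¹ ∂F)
      - (∫ u in Ioc 0 z, ((S F u)⁻¹ - 1) * f u ∂F) = ∫ u in Ioc 0 z, f u ∂F := by
    rw [← integral_sub int_fS int_c]
    refine integral_congr_ae (Filter.Eventually.of_forall fun s => ?_)
    ring
  rw [step1, hJ, hsplitf]
  have hexp : ((S F z)⁻¹ - 1) * (∫ u in Ioi z, f u ∂F)
      = (S F z)⁻¹ * (∫ u in Ioi z, f u ∂F) - ∫ u in Ioi z, f u ∂F := by ring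
  linarith [hcomb, hexp]

end AdvHelper

open AdvHelper in
/-- Weighted integral of the advanced operator: for `f ∈ L²(F)` and any `z` with
`S(z) > 0`, `∫_{(0,z]} (Af)(s) S(s)⁻¹ dF(s) = ∫ f dF - S(z)⁻¹ ∫_{(z,∞)} f dF`,
where `(Af)(s) = f(s) - S(s)⁻¹ ∫_{(s,∞)} f dF` and `S(t) = F((t,∞))`. -/
theorem integral_advanced_weighted (F : Measure ℝ) [IsProbabilityMeasure F]
    [NullSingletonClass F] (hF : F (Set.Ioi (0 : ℝ)) = 1)
    (f : ℝ → ℝ) (hf : MemLp f 2 F)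
    (z : ℝ) (hz : 0 < (F (Set.Ioi z)).toReal) :
    ∫ s in Set.Ioc 0 z,
        (f s - ((F (Set.Ioi s)).toReal)⁻¹ * ∫ u in Set.Ioi s, f u ∂F)
          * ((F (Set.Ioi s)).toReal)⁻¹ ∂F
      = (∫ w, f w ∂F) - ((F (Set.Ioi z)).toReal)⁻¹ * ∫ s in Set.Ioi z, f s ∂F := by
  classical
  have hSdef : ∀ x : ℝ, (F (Set.Ioi x)).toReal = S F x := fun _ => rfl
  have hf1 : Integrable f F := hf.integrable one_le_two
  rcases le_or_gt z 0 with hz0 | hz0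
  · have hempty : Set.Ioc (0:ℝ) z = ∅ := Ioc_eq_empty (not_lt.mpr hz0)
    rw [hempty]
    simp only [Measure.restrict_empty, integral_zero_measure]
    have h1 : F (Ioi z) = 1 :=
      le_antisymm prob_le_one (hF ▸ measure_mono (Ioi_subset_Ioi hz0))
    have h2 : F.restrict (Ioi z) = F := by
      apply Measure.restrict_eq_self_of_ae_mem
      rw [Filter.eventually_iff, mem_ae_iff]
      have hc : {x : ℝ | x ∈ Ioi z}ᶜ = Iic z := by ext x; simp
      rw [hc]
      have h := measure_compl (μ := F) (s := Ioi z) measurableSet_Ioi (measure_ne_top F _)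
      rwa [compl_Ioi, h1, measure_univ, tsub_self] at h
    rw [h1, h2]
    simp
  · set g : ℝ → ℝ := hf.1.mk f with hgdef
    have hgsm : StronglyMeasurable g := hf.1.stronglyMeasurable_mk
    have hfg : f =ᵐ[F] g := hf.1.ae_eq_mk
    have hg1 : Integrable g F := hf1.congr hfg
    have hIoi : ∀ s : ℝ, (∫ u in Ioi s, f u ∂F) = ∫ u in Ioi s, g u ∂F := fun s =>
      integral_congr_ae (ae_restrict_of_ae hfg)
    have hall : (∫ w, f w ∂F) = ∫ w, g w ∂F := integral_congr_ae hfg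
    have hlhs : (∫ s in Set.Ioc 0 z,
          (f s - ((F (Set.Ioi s)).toReal)⁻¹ * ∫ u in Set.Ioi s, f u ∂F)
            * ((F (Set.Ioi s)).toReal)⁻¹ ∂F)
        = ∫ s in Set.Ioc 0 z,
            (g s - (S F s)⁻¹ * ∫ u in Set.Ioi s, g u ∂F) * (S F s)⁻¹ ∂F := by
      refine integral_congr_ae ?_
      filter_upwards [ae_restrict_of_ae hfg] with s hs
      rw [hSdef, hs, hIoi s]
    rw [hlhs, hall, hIoi z, hSdef z]
    exact main_aux hF hgsm hg1 hz0 hz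
end
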